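/- arXiv:1206.5704 — 6 statements merged into one kernel-verified Lean document; each statement's English description precedes it below -/
import Mathlib

section
/- Let λ ≥ 0 and Q₀ ≥ 0 be real constants, let F : ℝ → ℝ be Lipschitz continuous and bounded on ℝ, let g : ℝ → [0,∞) be a bounded Lipschitz continuous function, let Gᶜ : ℝ → ℝ be bounded and Lipschitz continuous, and let k : ℝ → [0,∞) be bounded and Lipschitz continuous. Then for every T > 0 there exists a unique continuous function X : [0,T] → ℝ satisfying, for all t ∈ [0,T], X_t = F(S(0,t)) + Q₀·Gᶜ(S(0,t)) + λ·∫₀ᵗ Gᶜ(S(s,t)) ds + ∫₀ᵗ (X_s − 1)⁺ · k(X_s) · g(S(s,t)) ds, where S(s,t) = ∫ₛᵗ k(X_u) du. -/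
set_option maxHeartbeats 1600000

open MeasureTheory Set

/-- The fluid-limit integral equation for the GI/G/n queue with state-dependent
service rate: `X_t = F(S(0,t)) + Q₀·Gᶜ(S(0,t)) + λ∫₀ᵗ Gᶜ(S(s,t)) ds
+ ∫₀ᵗ (X_s − 1)⁺ k(X_s) g(S(s,t)) ds`, where `S(s,t) = ∫ₛᵗ k(X_u) du`. -/
def FluidLimitEq (lam Q0 : ℝ) (F g Gc k : ℝ → ℝ) (T : ℝ) (X : ℝ → ℝ) : Prop :=
  ∀ t ∈ Set.Icc (0 : ℝ) T,
    X t = F (∫ u in (0 : ℝ)..t, k (X u))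
      + Q0 * Gc (∫ u in (0 : ℝ)..t, k (X u))
      + lam * ∫ s in (0 : ℝ)..t, Gc (∫ u in s..t, k (X u))
      + ∫ s in (0 : ℝ)..t, max (X s - 1) 0 * k (X s) * g (∫ u in s..t, k (X u))

namespace FluidAux

open intervalIntegral

noncomputable def psi (lam Q0 : ℝ) (F g Gc k N X : ℝ → ℝ) (t : ℝ) : ℝ :=
  F (∫ u in (0 : ℝ)..t, k (X u))
      + Q0 * Gc (∫ u in (0 : ℝ)..t, k (X u))
      + lam * ∫ s in (0 : ℝ)..t, Gc (∫ u in s..t, k (X u))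
      + ∫ s in (0 : ℝ)..t, N (X s) * g (∫ u in s..t, k (X u))

lemma S_eq {f : ℝ → ℝ} (hf : Continuous f) (s t : ℝ) :
    (∫ u in s..t, f u) = (∫ u in (0:ℝ)..t, f u) - ∫ u in (0:ℝ)..s, f u :=
  (integral_interval_sub_left (hf.intervalIntegrable _ _) (hf.intervalIntegrable _ _)).symm

lemma cont_primitive {f : ℝ → ℝ} (hf : Continuous f) :
    Continuous (fun t => ∫ u in (0:ℝ)..t, f u) :=
  intervalIntegral.continuous_primitive (fun a b => hf.intervalIntegrable a b) 0

lemma cont_S_left {f : ℝ → ℝ} (hf : Continuous f) (t : ℝ) :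
    Continuous (fun s => ∫ u in s..t, f u) := by
  have h : (fun s => ∫ u in s..t, f u)
      = fun s => (∫ u in (0:ℝ)..t, f u) - ∫ u in (0:ℝ)..s, f u := funext fun s => S_eq hf _ _
  rw [h]
  exact continuous_const.sub (cont_primitive hf)

lemma psi_cont {lam Q0 : ℝ} {F g Gc k N X : ℝ → ℝ}
    (hF : Continuous F) (hg : Continuous g) (hGc : Continuous Gc) (hk : Continuous k)
    (hN : Continuous N) (hX : Continuous X) :
    Continuous (psi lam Q0 F g Gc k N X) := by
  have hkX : Continuous fun u => k (X u) := hk.comp hX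
  have hP := cont_primitive hkX
  have hswap : Continuous fun p : ℝ × ℝ => (∫ u in p.2..p.1, k (X u)) := by
    have h : (fun p : ℝ × ℝ => ∫ u in p.2..p.1, k (X u))
        = fun p => (∫ u in (0:ℝ)..p.1, k (X u)) - ∫ u in (0:ℝ)..p.2, k (X u) :=
      funext fun p => S_eq hkX _ _
    rw [h]
    exact ((cont_primitive hkX).comp continuous_fst).sub
      ((cont_primitive hkX).comp continuous_snd)
  have hAA : Continuous fun t => ∫ r in (0:ℝ)..t, N (X r) * g (∫ u in r..t, k (X u)) := by
    have := continuous_parametric_intervalIntegral_of_continuous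
      (μ := volume) (a₀ := (0:ℝ))
      (f := fun (t r : ℝ) => N (X r) * g (∫ u in r..t, k (X u)))
      (by exact (((hN.comp hX).comp continuous_snd).mul (hg.comp hswap))) continuous_id
    exact this
  have h3 : Continuous fun t => ∫ s in (0:ℝ)..t,
      (Gc (∫ u in s..t, k (X u)) + ∫ r in (0:ℝ)..t, N (X r) * g (∫ u in r..t, k (X u))) := by
    have := continuous_parametric_intervalIntegral_of_continuous
      (μ := volume) (a₀ := (0:ℝ))
      (f := fun (t s : ℝ) => Gc (∫ u in s..t, k (X u))
        + ∫ r in (0:ℝ)..t, N (X r) * g (∫ u in r..t, k (X u)))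
      (by exact ((hGc.comp hswap).add (hAA.comp continuous_fst))) continuous_id
    exact this
  unfold psi
  exact ((hF.comp hP).add (continuous_const.mul (hGc.comp hP))).add
    (continuous_const.mul h3)

/-- the factored form of `psi`. -/
lemma psi_eq {lam Q0 : ℝ} {F g Gc k N X : ℝ → ℝ}
    (hGc : Continuous Gc) (hk : Continuous k) (hX : Continuous X) (t : ℝ) :
    psi lam Q0 F g Gc k N X t
      = F (∫ u in (0 : ℝ)..t, k (X u))
        + Q0 * Gc (∫ u in (0 : ℝ)..t, k (X u))
        + lam * ((∫ s in (0 : ℝ)..t, Gc (∫ u in s..t, k (X u)))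
            + t * ∫ r in (0 : ℝ)..t, N (X r) * g (∫ u in r..t, k (X u))) := by
  have hkX : Continuous fun u => k (X u) := hk.comp hX
  have hGX : Continuous fun s => Gc (∫ u in s..t, k (X u)) := hGc.comp (cont_S_left hkX t)
  unfold psi
  rw [intervalIntegral.integral_add (hGX.intervalIntegrable _ _) (intervalIntegrable_const),
    intervalIntegral.integral_const]
  simp [smul_eq_mul]

lemma psi_diff_le {lam Q0 T t LF Lg LG Lk LN Mg MN : ℝ} {F g Gc k N X Y : ℝ → ℝ}
    (hQ0 : 0 ≤ Q0) (hlam : 0 ≤ lam)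
    (hLF : 0 ≤ LF) (hLg : 0 ≤ Lg) (hLG : 0 ≤ LG) (hLk : 0 ≤ Lk) (hLN : 0 ≤ LN)
    (hMg : 0 ≤ Mg) (hMN : 0 ≤ MN)
    (hF : ∀ a b : ℝ, |F a - F b| ≤ LF * |a - b|)
    (hg : ∀ a b : ℝ, |g a - g b| ≤ Lg * |a - b|)
    (hGc : ∀ a b : ℝ, |Gc a - Gc b| ≤ LG * |a - b|)
    (hk : ∀ a b : ℝ, |k a - k b| ≤ Lk * |a - b|)
    (hgM : ∀ x, |g x| ≤ Mg)
    (hN1 : ∀ s ∈ Icc (0:ℝ) T, |N (X s) - N (Y s)| ≤ LN * |X s - Y s|)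
    (hN2 : ∀ s ∈ Icc (0:ℝ) T, |N (Y s)| ≤ MN)
    (hgc : Continuous g) (hGcc : Continuous Gc) (hkc : Continuous k) (hNc : Continuous N)
    (hX : Continuous X) (hY : Continuous Y)
    (ht : t ∈ Icc (0:ℝ) T) :
    |psi lam Q0 F g Gc k N X t - psi lam Q0 F g Gc k N Y t|
      ≤ (LF * Lk + Q0 * (LG * Lk) + lam * (LG * Lk * T + T * (LN * Mg + MN * (Lg * Lk) * T)))
        * ∫ s in (0:ℝ)..t, |X s - Y s| := by
  obtain ⟨ht0, htT⟩ := ht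
  set I := ∫ s in (0:ℝ)..t, |X s - Y s| with hIdef
  have hkX : Continuous fun u => k (X u) := hkc.comp hX
  have hkY : Continuous fun u => k (Y u) := hkc.comp hY
  have hXYc : Continuous fun s => |X s - Y s| := (hX.sub hY).abs
  have hI0 : 0 ≤ I :=
    intervalIntegral.integral_nonneg ht0 (fun u _ => abs_nonneg _)
  have hSd : ∀ s ∈ Icc (0:ℝ) t,
      |(∫ u in s..t, k (X u)) - ∫ u in s..t, k (Y u)| ≤ Lk * I := by
    intro s hs
    rw [← intervalIntegral.integral_sub (hkX.intervalIntegrable _ _) (hkY.intervalIntegrable _ _)]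
    calc |∫ u in s..t, (k (X u) - k (Y u))|
        ≤ ∫ u in s..t, |k (X u) - k (Y u)| := abs_integral_le_integral_abs hs.2
      _ ≤ ∫ u in s..t, Lk * |X u - Y u| :=
          intervalIntegral.integral_mono_on hs.2 ((hkX.sub hkY).abs.intervalIntegrable _ _)
            ((continuous_const.mul hXYc).intervalIntegrable _ _) (fun u _ => hk _ _)
      _ = Lk * ∫ u in s..t, |X u - Y u| := intervalIntegral.integral_const_mul _ _
      _ ≤ Lk * I := by
          refine mul_le_mul_of_nonneg_left ?_ hLk
          exact intervalIntegral.integral_mono_interval hs.1 hs.2 le_rfl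
            (Filter.Eventually.of_forall fun u => abs_nonneg _)
            (hXYc.intervalIntegrable _ _)
  have hGX : Continuous fun s => Gc (∫ u in s..t, k (X u)) := hGcc.comp (cont_S_left hkX t)
  have hGY : Continuous fun s => Gc (∫ u in s..t, k (Y u)) := hGcc.comp (cont_S_left hkY t)
  have hNgX : Continuous fun s => N (X s) * g (∫ u in s..t, k (X u)) :=
    ((hNc.comp hX).mul (hgc.comp (cont_S_left hkX t)))
  have hNgY : Continuous fun s => N (Y s) * g (∫ u in s..t, k (Y u)) :=
    ((hNc.comp hY).mul (hgc.comp (cont_S_left hkY t)))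
  have hAd : |(∫ r in (0:ℝ)..t, N (X r) * g (∫ u in r..t, k (X u)))
      - ∫ r in (0:ℝ)..t, N (Y r) * g (∫ u in r..t, k (Y u))|
      ≤ LN * Mg * I + MN * (Lg * (Lk * I)) * T := by
    rw [← intervalIntegral.integral_sub (hNgX.intervalIntegrable _ _)
      (hNgY.intervalIntegrable _ _)]
    have hptw : ∀ r ∈ Icc (0:ℝ) t,
        |N (X r) * g (∫ u in r..t, k (X u)) - N (Y r) * g (∫ u in r..t, k (Y u))|
          ≤ LN * Mg * |X r - Y r| + MN * (Lg * (Lk * I)) := by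
      intro r hr
      have hrT : r ∈ Icc (0:ℝ) T := ⟨hr.1, hr.2.trans htT⟩
      have e : N (X r) * g (∫ u in r..t, k (X u)) - N (Y r) * g (∫ u in r..t, k (Y u))
          = (N (X r) - N (Y r)) * g (∫ u in r..t, k (X u))
            + N (Y r) * (g (∫ u in r..t, k (X u)) - g (∫ u in r..t, k (Y u))) := by ring
      rw [e]
      calc |(N (X r) - N (Y r)) * g (∫ u in r..t, k (X u))
            + N (Y r) * (g (∫ u in r..t, k (X u)) - g (∫ u in r..t, k (Y u)))|
          ≤ |N (X r) - N (Y r)| * |g (∫ u in r..t, k (X u))|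
            + |N (Y r)| * |g (∫ u in r..t, k (X u)) - g (∫ u in r..t, k (Y u))| := by
            refine (abs_add_le _ _).trans ?_
            rw [abs_mul, abs_mul]
        _ ≤ (LN * |X r - Y r|) * Mg + MN * (Lg * (Lk * I)) := by
            refine add_le_add ?_ ?_
            · exact mul_le_mul (hN1 r hrT) (hgM _) (abs_nonneg _)
                (mul_nonneg hLN (abs_nonneg _))
            · refine mul_le_mul (hN2 r hrT) ?_ (abs_nonneg _) hMN
              exact (hg _ _).trans (mul_le_mul_of_nonneg_left (hSd r hr) hLg)
        _ = LN * Mg * |X r - Y r| + MN * (Lg * (Lk * I)) := by ring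
    calc |∫ r in (0:ℝ)..t, (N (X r) * g (∫ u in r..t, k (X u))
            - N (Y r) * g (∫ u in r..t, k (Y u)))|
        ≤ ∫ r in (0:ℝ)..t, |N (X r) * g (∫ u in r..t, k (X u))
            - N (Y r) * g (∫ u in r..t, k (Y u))| := abs_integral_le_integral_abs ht0
      _ ≤ ∫ r in (0:ℝ)..t, (LN * Mg * |X r - Y r| + MN * (Lg * (Lk * I))) :=
          intervalIntegral.integral_mono_on ht0
            ((hNgX.sub hNgY).abs.intervalIntegrable _ _)
            (((continuous_const.mul hXYc).add continuous_const).intervalIntegrable _ _) hptw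
      _ = LN * Mg * I + (t - 0) * (MN * (Lg * (Lk * I))) := by
          rw [intervalIntegral.integral_add (f := fun r => LN * Mg * |X r - Y r|)
            ((continuous_const.mul hXYc).intervalIntegrable _ _)
            intervalIntegrable_const, intervalIntegral.integral_const_mul,
            intervalIntegral.integral_const, smul_eq_mul]
      _ ≤ LN * Mg * I + MN * (Lg * (Lk * I)) * T := by
          have : (t - 0) * (MN * (Lg * (Lk * I))) ≤ T * (MN * (Lg * (Lk * I))) := by
            refine mul_le_mul_of_nonneg_right (by linarith) ?_
            exact mul_nonneg hMN (mul_nonneg hLg (mul_nonneg hLk hI0))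
          linarith [this]
  have hGd : |(∫ s in (0:ℝ)..t, Gc (∫ u in s..t, k (X u)))
      - ∫ s in (0:ℝ)..t, Gc (∫ u in s..t, k (Y u))| ≤ LG * (Lk * I) * t := by
    rw [← intervalIntegral.integral_sub (hGX.intervalIntegrable _ _) (hGY.intervalIntegrable _ _)]
    calc |∫ s in (0:ℝ)..t, (Gc (∫ u in s..t, k (X u)) - Gc (∫ u in s..t, k (Y u)))|
        ≤ ∫ s in (0:ℝ)..t, |Gc (∫ u in s..t, k (X u)) - Gc (∫ u in s..t, k (Y u))| :=
          abs_integral_le_integral_abs ht0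
      _ ≤ ∫ _s in (0:ℝ)..t, LG * (Lk * I) :=
          intervalIntegral.integral_mono_on ht0 ((hGX.sub hGY).abs.intervalIntegrable _ _)
            intervalIntegrable_const
            (fun s hs => (hGc _ _).trans (mul_le_mul_of_nonneg_left (hSd s hs) hLG))
      _ = (t - 0) * (LG * (Lk * I)) := by
          rw [intervalIntegral.integral_const, smul_eq_mul]
      _ = LG * (Lk * I) * t := by ring
  have h1 : |F (∫ u in (0:ℝ)..t, k (X u)) - F (∫ u in (0:ℝ)..t, k (Y u))| ≤ LF * (Lk * I) :=
    (hF _ _).trans (mul_le_mul_of_nonneg_left (hSd 0 ⟨le_rfl, ht0⟩) hLF)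
  have h2 : |Gc (∫ u in (0:ℝ)..t, k (X u)) - Gc (∫ u in (0:ℝ)..t, k (Y u))| ≤ LG * (Lk * I) :=
    (hGc _ _).trans (mul_le_mul_of_nonneg_left (hSd 0 ⟨le_rfl, ht0⟩) hLG)
  rw [psi_eq hGcc hkc hX t, psi_eq hGcc hkc hY t]
  have hsplit : (F (∫ u in (0:ℝ)..t, k (X u)) + Q0 * Gc (∫ u in (0:ℝ)..t, k (X u))
        + lam * ((∫ s in (0:ℝ)..t, Gc (∫ u in s..t, k (X u)))
          + t * ∫ r in (0:ℝ)..t, N (X r) * g (∫ u in r..t, k (X u))))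
      - (F (∫ u in (0:ℝ)..t, k (Y u)) + Q0 * Gc (∫ u in (0:ℝ)..t, k (Y u))
        + lam * ((∫ s in (0:ℝ)..t, Gc (∫ u in s..t, k (Y u)))
          + t * ∫ r in (0:ℝ)..t, N (Y r) * g (∫ u in r..t, k (Y u))))
      = (F (∫ u in (0:ℝ)..t, k (X u)) - F (∫ u in (0:ℝ)..t, k (Y u)))
        + Q0 * (Gc (∫ u in (0:ℝ)..t, k (X u)) - Gc (∫ u in (0:ℝ)..t, k (Y u)))
        + lam * (((∫ s in (0:ℝ)..t, Gc (∫ u in s..t, k (X u)))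
            - ∫ s in (0:ℝ)..t, Gc (∫ u in s..t, k (Y u)))
          + t * ((∫ r in (0:ℝ)..t, N (X r) * g (∫ u in r..t, k (X u)))
            - ∫ r in (0:ℝ)..t, N (Y r) * g (∫ u in r..t, k (Y u)))) := by ring
  rw [hsplit]
  calc |(F (∫ u in (0:ℝ)..t, k (X u)) - F (∫ u in (0:ℝ)..t, k (Y u)))
        + Q0 * (Gc (∫ u in (0:ℝ)..t, k (X u)) - Gc (∫ u in (0:ℝ)..t, k (Y u)))
        + lam * (((∫ s in (0:ℝ)..t, Gc (∫ u in s..t, k (X u)))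
            - ∫ s in (0:ℝ)..t, Gc (∫ u in s..t, k (Y u)))
          + t * ((∫ r in (0:ℝ)..t, N (X r) * g (∫ u in r..t, k (X u)))
            - ∫ r in (0:ℝ)..t, N (Y r) * g (∫ u in r..t, k (Y u))))|
      ≤ |F (∫ u in (0:ℝ)..t, k (X u)) - F (∫ u in (0:ℝ)..t, k (Y u))|
        + Q0 * |Gc (∫ u in (0:ℝ)..t, k (X u)) - Gc (∫ u in (0:ℝ)..t, k (Y u))|
        + lam * (|(∫ s in (0:ℝ)..t, Gc (∫ u in s..t, k (X u)))
            - ∫ s in (0:ℝ)..t, Gc (∫ u in s..t, k (Y u))|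
          + t * |(∫ r in (0:ℝ)..t, N (X r) * g (∫ u in r..t, k (X u)))
            - ∫ r in (0:ℝ)..t, N (Y r) * g (∫ u in r..t, k (Y u))|) := by
        refine (abs_add_le _ _).trans (add_le_add ((abs_add_le _ _).trans (add_le_add le_rfl ?_)) ?_)
        · rw [abs_mul, abs_of_nonneg hQ0]
        · rw [abs_mul, abs_of_nonneg hlam]
          refine mul_le_mul_of_nonneg_left ((abs_add_le _ _).trans (add_le_add le_rfl ?_)) hlam
          rw [abs_mul, abs_of_nonneg ht0]
    _ ≤ LF * (Lk * I) + Q0 * (LG * (Lk * I))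
        + lam * (LG * (Lk * I) * t + t * (LN * Mg * I + MN * (Lg * (Lk * I)) * T)) := by
        refine add_le_add (add_le_add h1 (mul_le_mul_of_nonneg_left h2 hQ0)) ?_
        refine mul_le_mul_of_nonneg_left (add_le_add hGd ?_) hlam
        exact mul_le_mul_of_nonneg_left hAd ht0
    _ ≤ LF * (Lk * I) + Q0 * (LG * (Lk * I))
        + lam * (LG * (Lk * I) * T + T * (LN * Mg * I + MN * (Lg * (Lk * I)) * T)) := by
        have hc1 : LG * (Lk * I) * t ≤ LG * (Lk * I) * T :=
          mul_le_mul_of_nonneg_left htT (mul_nonneg hLG (mul_nonneg hLk hI0))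
        have hnn : 0 ≤ LN * Mg * I + MN * (Lg * (Lk * I)) * T := by
          have h0t : (0:ℝ) ≤ T := ht0.trans htT
          have := mul_nonneg (mul_nonneg hLN hMg) hI0
          have := mul_nonneg (mul_nonneg hMN (mul_nonneg hLg (mul_nonneg hLk hI0))) h0t
          linarith
        have hc2 : t * (LN * Mg * I + MN * (Lg * (Lk * I)) * T)
            ≤ T * (LN * Mg * I + MN * (Lg * (Lk * I)) * T) :=
          mul_le_mul_of_nonneg_right htT hnn
        have := mul_le_mul_of_nonneg_left (add_le_add hc1 hc2) hlam
        linarith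
    _ = (LF * Lk + Q0 * (LG * Lk) + lam * (LG * Lk * T + T * (LN * Mg + MN * (Lg * Lk) * T)))
        * I := by ring

lemma gron {h : ℝ → ℝ} {T A K : ℝ} (hK : 0 ≤ K)
    (hc : Continuous h) (hnn : ∀ t, 0 ≤ h t)
    (hin : ∀ t ∈ Icc (0:ℝ) T, h t ≤ A + K * ∫ s in (0:ℝ)..t, h s) :
    ∀ t ∈ Icc (0:ℝ) T, h t ≤ A * Real.exp (K * t) := by
  set φ : ℝ → ℝ := fun t => ∫ s in (0:ℝ)..t, h s with hφ
  have hφd : ∀ x : ℝ, HasDerivAt φ (h x) x := fun x =>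
    intervalIntegral.integral_hasDerivAt_right (hc.intervalIntegrable _ _)
      (hc.stronglyMeasurableAtFilter _ _) hc.continuousAt
  have hφc : ContinuousOn φ (Icc 0 T) := fun x _ => (hφd x).continuousAt.continuousWithinAt
  have hφnn : ∀ x ∈ Icc (0:ℝ) T, 0 ≤ φ x := fun x hx =>
    intervalIntegral.integral_nonneg hx.1 fun u _ => hnn u
  have hb := norm_le_gronwallBound_of_norm_deriv_right_le (f := φ) (f' := h)
    (δ := 0) (K := K) (ε := A) (a := 0) (b := T) hφc
    (fun x _ => (hφd x).hasDerivWithinAt)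
    (by simp [hφ])
    (fun x hx => by
      have hx' : x ∈ Icc (0:ℝ) T := ⟨hx.1, hx.2.le⟩
      rw [Real.norm_eq_abs, Real.norm_eq_abs, abs_of_nonneg (hnn x),
        abs_of_nonneg (hφnn x hx')]
      linarith [hin x hx'])
  intro t ht
  have hbt := hb t ht
  rw [Real.norm_eq_abs, abs_of_nonneg (hφnn t ht), sub_zero] at hbt
  have key : A + K * gronwallBound 0 K A t ≤ A * Real.exp (K * t) := by
    rcases eq_or_ne K 0 with hK0 | hK0
    · subst hK0
      simp [gronwallBound_K0]
    · rw [gronwallBound_of_K_ne_0 hK0]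
      field_simp
      ring_nf
      nlinarith [Real.exp_pos (K * t)]
  calc h t ≤ A + K * φ t := hin t ht
    _ ≤ A + K * gronwallBound 0 K A t := by
        have := mul_le_mul_of_nonneg_left hbt hK
        linarith
    _ ≤ A * Real.exp (K * t) := key

lemma psi_congr {lam Q0 T t : ℝ} {F g Gc k N X X' : ℝ → ℝ}
    (hXX : EqOn X X' (Icc 0 T)) (hT0 : (0:ℝ) ≤ T) (ht : t ∈ Icc (0:ℝ) T) :
    psi lam Q0 F g Gc k N X t = psi lam Q0 F g Gc k N X' t := by
  have hsub : ∀ s ∈ Icc (0:ℝ) T, uIcc s t ⊆ Icc (0:ℝ) T := by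
    intro s hs
    rw [← uIcc_of_le hT0]
    exact uIcc_subset_uIcc (by rwa [uIcc_of_le hT0]) (by rwa [uIcc_of_le hT0])
  have hS : ∀ s ∈ Icc (0:ℝ) T,
      (∫ u in s..t, k (X u)) = ∫ u in s..t, k (X' u) := fun s hs =>
    intervalIntegral.integral_congr fun u hu => by rw [hXX (hsub s hs hu)]
  have h0T : (0:ℝ) ∈ Icc (0:ℝ) T := ⟨le_rfl, hT0⟩
  have hAA : (∫ r in (0:ℝ)..t, N (X r) * g (∫ u in r..t, k (X u)))
      = ∫ r in (0:ℝ)..t, N (X' r) * g (∫ u in r..t, k (X' u)) := by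
    refine intervalIntegral.integral_congr fun r hr => ?_
    have hrT : r ∈ Icc (0:ℝ) T := hsub 0 h0T (by rwa [uIcc_comm] at hr ⊢)
    rw [hXX hrT, hS r hrT]
  have hthird : (∫ s in (0:ℝ)..t, (Gc (∫ u in s..t, k (X u))
        + ∫ r in (0:ℝ)..t, N (X r) * g (∫ u in r..t, k (X u))))
      = ∫ s in (0:ℝ)..t, (Gc (∫ u in s..t, k (X' u))
        + ∫ r in (0:ℝ)..t, N (X' r) * g (∫ u in r..t, k (X' u))) := by
    refine intervalIntegral.integral_congr fun s hs => ?_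
    have hsT : s ∈ Icc (0:ℝ) T := hsub 0 h0T (by rwa [uIcc_comm] at hs ⊢)
    rw [hS s hsT, hAA]
  unfold psi
  rw [hS 0 h0T, hthird]

lemma N_lip {k : ℝ → ℝ} {Lk Mk BR : ℝ} {m : ℝ → ℝ} (a b : ℝ)
    (hMk : ∀ x, |k x| ≤ Mk) (hk : ∀ a b : ℝ, |k a - k b| ≤ Lk * |a - b|)
    (hmab : |m a - m b| ≤ |a - b|) (hmb : |m b| ≤ BR) :
    |m a * k a - m b * k b| ≤ (Mk + BR * Lk) * |a - b| := by
  have hBR0 : 0 ≤ BR := (abs_nonneg _).trans hmb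
  have e : m a * k a - m b * k b = (m a - m b) * k a + m b * (k a - k b) := by ring
  rw [e]
  calc |(m a - m b) * k a + m b * (k a - k b)|
      ≤ |m a - m b| * |k a| + |m b| * |k a - k b| := by
        refine (abs_add_le _ _).trans ?_; rw [abs_mul, abs_mul]
    _ ≤ |a - b| * Mk + BR * (Lk * |a - b|) := by
        refine add_le_add ?_ ?_
        · exact mul_le_mul hmab (hMk a) (abs_nonneg _) (abs_nonneg _)
        · exact mul_le_mul hmb (hk a b) (abs_nonneg _) hBR0
    _ = (Mk + BR * Lk) * |a - b| := by ring

lemma max_sub_one_le_abs (x : ℝ) : max (x - 1) 0 ≤ |x| :=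
  max_le (by linarith [le_abs_self x]) (abs_nonneg x)

end FluidAux

theorem stmt0 (lam Q0 : ℝ) (hlam : 0 ≤ lam) (hQ0 : 0 ≤ Q0)
    (F g Gc k : ℝ → ℝ)
    (hF_lip : ∃ K : NNReal, LipschitzWith K F) (hF_bdd : ∃ M : ℝ, ∀ x, |F x| ≤ M)
    (hg_lip : ∃ K : NNReal, LipschitzWith K g) (hg_bdd : ∃ M : ℝ, ∀ x, |g x| ≤ M)
    (hg_nonneg : ∀ x, 0 ≤ g x)
    (hGc_lip : ∃ K : NNReal, LipschitzWith K Gc) (hGc_bdd : ∃ M : ℝ, ∀ x, |Gc x| ≤ M)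
    (hk_lip : ∃ K : NNReal, LipschitzWith K k) (hk_bdd : ∃ M : ℝ, ∀ x, |k x| ≤ M)
    (hk_nonneg : ∀ x, 0 ≤ k x)
    (T : ℝ) (hT : 0 < T) :
    (∃ X : ℝ → ℝ, ContinuousOn X (Set.Icc 0 T) ∧ FluidLimitEq lam Q0 F g Gc k T X) ∧
    (∀ X Y : ℝ → ℝ, ContinuousOn X (Set.Icc 0 T) → FluidLimitEq lam Q0 F g Gc k T X →
      ContinuousOn Y (Set.Icc 0 T) → FluidLimitEq lam Q0 F g Gc k T Y →
      Set.EqOn X Y (Set.Icc 0 T)) := by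
  classical
  obtain ⟨KF, hKF⟩ := hF_lip
  obtain ⟨MF, hMF⟩ := hF_bdd
  obtain ⟨Kg, hKg⟩ := hg_lip
  obtain ⟨Mg, hMg⟩ := hg_bdd
  obtain ⟨KG, hKG⟩ := hGc_lip
  obtain ⟨MG, hMG⟩ := hGc_bdd
  obtain ⟨Kk, hKk⟩ := hk_lip
  obtain ⟨Mk, hMk⟩ := hk_bdd
  have hFc : Continuous F := hKF.continuous
  have hgc : Continuous g := hKg.continuous
  have hGcc : Continuous Gc := hKG.continuous
  have hkc : Continuous k := hKk.continuous
  have hF' : ∀ a b : ℝ, |F a - F b| ≤ (KF:ℝ) * |a - b| := fun a b => by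
    simpa [Real.dist_eq] using hKF.dist_le_mul a b
  have hg' : ∀ a b : ℝ, |g a - g b| ≤ (Kg:ℝ) * |a - b| := fun a b => by
    simpa [Real.dist_eq] using hKg.dist_le_mul a b
  have hGc' : ∀ a b : ℝ, |Gc a - Gc b| ≤ (KG:ℝ) * |a - b| := fun a b => by
    simpa [Real.dist_eq] using hKG.dist_le_mul a b
  have hk' : ∀ a b : ℝ, |k a - k b| ≤ (Kk:ℝ) * |a - b| := fun a b => by
    simpa [Real.dist_eq] using hKk.dist_le_mul a b
  have hMF0 : 0 ≤ MF := (abs_nonneg _).trans (hMF 0)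
  have hMg0 : 0 ≤ Mg := (abs_nonneg _).trans (hMg 0)
  have hMG0 : 0 ≤ MG := (abs_nonneg _).trans (hMG 0)
  have hMk0 : 0 ≤ Mk := (abs_nonneg _).trans (hMk 0)
  set C0 : ℝ := MF + Q0 * MG + lam * (T * MG) with hC0def
  set K0 : ℝ := lam * T * (Mk * Mg) with hK0def
  have hC00 : 0 ≤ C0 := by
    have h1 := mul_nonneg hQ0 hMG0
    have h2 := mul_nonneg hlam (mul_nonneg hT.le hMG0)
    rw [hC0def]; linarith
  have hK00 : 0 ≤ K0 := by
    rw [hK0def]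
    exact mul_nonneg (mul_nonneg hlam hT.le) (mul_nonneg hMk0 hMg0)
  set R : ℝ := (C0 + 1) * Real.exp (K0 * T) with hRdef
  have hexp1 : 1 ≤ Real.exp (K0 * T) := Real.one_le_exp (mul_nonneg hK00 hT.le)
  have hR1 : 1 ≤ R := by
    rw [hRdef]; nlinarith
  have hR0 : 0 ≤ R := le_trans zero_le_one hR1
  set N : ℝ → ℝ := fun x => min (max (x - 1) 0) R * k x with hNdef
  have hNc : Continuous N :=
    (((continuous_id.sub continuous_const).max continuous_const).min continuous_const).mul hkc
  have hm_lip : ∀ a b : ℝ, |min (max (a - 1) 0) R - min (max (b - 1) 0) R| ≤ |a - b| := by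
    intro a b
    have h1 := abs_min_sub_min_le_max (max (a - 1) 0) R (max (b - 1) 0) R
    have h2 := abs_max_sub_max_le_abs (a - 1) (b - 1) 0
    have h3 : |(a - 1) - (b - 1)| = |a - b| := by ring_nf
    calc |min (max (a - 1) 0) R - min (max (b - 1) 0) R|
        ≤ max |max (a - 1) 0 - max (b - 1) 0| |R - R| := h1
      _ = |max (a - 1) 0 - max (b - 1) 0| := by
          rw [sub_self, abs_zero]; exact max_eq_left (abs_nonneg _)
      _ ≤ |(a - 1) - (b - 1)| := h2
      _ = |a - b| := h3
  have hm_nn : ∀ b : ℝ, 0 ≤ min (max (b - 1) 0) R := fun b =>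
    le_min (le_max_right _ _) hR0
  have hm_bdd : ∀ b : ℝ, |min (max (b - 1) 0) R| ≤ R := fun b => by
    rw [abs_of_nonneg (hm_nn b)]
    exact min_le_right _ _
  set LN : ℝ := Mk + R * (Kk:ℝ) with hLNdef
  set MN : ℝ := R * Mk with hMNdef
  have hLN0 : 0 ≤ LN := by
    rw [hLNdef]; exact add_nonneg hMk0 (mul_nonneg hR0 Kk.coe_nonneg)
  have hMN0 : 0 ≤ MN := by rw [hMNdef]; exact mul_nonneg hR0 hMk0
  have hN1g : ∀ a b : ℝ, |N a - N b| ≤ LN * |a - b| := fun a b => by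
    rw [hNdef, hLNdef]
    exact FluidAux.N_lip (m := fun x => min (max (x - 1) 0) R) a b hMk hk'
      (hm_lip a b) (hm_bdd b)
  have hN2g : ∀ b : ℝ, |N b| ≤ MN := fun b => by
    rw [hNdef, hMNdef]
    calc |min (max (b - 1) 0) R * k b| = |min (max (b - 1) 0) R| * |k b| := abs_mul _ _
      _ ≤ R * Mk := mul_le_mul (hm_bdd b) (hMk b) (abs_nonneg _) hR0
  have hNabs : ∀ x : ℝ, |N x| ≤ |x| * Mk := fun x => by
    rw [hNdef]
    calc |min (max (x - 1) 0) R * k x| = |min (max (x - 1) 0) R| * |k x| := abs_mul _ _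
      _ ≤ |x| * Mk := by
          refine mul_le_mul ?_ (hMk x) (abs_nonneg _) (abs_nonneg x)
          rw [abs_of_nonneg (hm_nn x)]
          exact (min_le_left _ _).trans (FluidAux.max_sub_one_le_abs x)
  set L : ℝ := (KF:ℝ) * (Kk:ℝ) + Q0 * ((KG:ℝ) * (Kk:ℝ))
      + lam * ((KG:ℝ) * (Kk:ℝ) * T + T * (LN * Mg + MN * ((Kg:ℝ) * (Kk:ℝ)) * T)) with hLdef
  have hL0 : 0 ≤ L := by
    have h1 : 0 ≤ (KF:ℝ) * (Kk:ℝ) := mul_nonneg KF.coe_nonneg Kk.coe_nonneg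
    have h2 : 0 ≤ (KG:ℝ) * (Kk:ℝ) := mul_nonneg KG.coe_nonneg Kk.coe_nonneg
    have h3 : 0 ≤ (Kg:ℝ) * (Kk:ℝ) := mul_nonneg Kg.coe_nonneg Kk.coe_nonneg
    have h4 : 0 ≤ LN * Mg := mul_nonneg hLN0 hMg0
    have h5 : 0 ≤ MN * ((Kg:ℝ) * (Kk:ℝ)) * T := mul_nonneg (mul_nonneg hMN0 h3) hT.le
    have h6 : 0 ≤ Q0 * ((KG:ℝ) * (Kk:ℝ)) := mul_nonneg hQ0 h2
    have h7 : 0 ≤ (KG:ℝ) * (Kk:ℝ) * T := mul_nonneg h2 hT.le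
    have h8 : 0 ≤ T * (LN * Mg + MN * ((Kg:ℝ) * (Kk:ℝ)) * T) :=
      mul_nonneg hT.le (by linarith)
    have h9 : 0 ≤ lam * ((KG:ℝ) * (Kk:ℝ) * T + T * (LN * Mg + MN * ((Kg:ℝ) * (Kk:ℝ)) * T)) :=
      mul_nonneg hlam (by linarith)
    rw [hLdef]; linarith
  -- the function space and the Picard map
  set ext : C(Icc (0:ℝ) T, ℝ) → ℝ → ℝ := fun f t => f (projIcc 0 T hT.le t) with hext
  have hext_cont : ∀ f, Continuous (ext f) := fun f => f.continuous.comp continuous_projIcc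
  have hext_eq : ∀ f : C(Icc (0:ℝ) T, ℝ), ∀ t : ℝ, ∀ ht : t ∈ Icc (0:ℝ) T,
      ext f t = f ⟨t, ht⟩ := fun f t ht => by
    rw [hext]; exact congrArg f (projIcc_of_mem hT.le ht)
  set Φ : C(Icc (0:ℝ) T, ℝ) → C(Icc (0:ℝ) T, ℝ) := fun f =>
    ⟨fun θ => FluidAux.psi lam Q0 F g Gc k N (ext f) θ.1,
      (FluidAux.psi_cont hFc hgc hGcc hkc hNc (hext_cont f)).comp continuous_subtype_val⟩
    with hΦ
  have hΦapp : ∀ f θ, Φ f θ = FluidAux.psi lam Q0 F g Gc k N (ext f) θ.1 := fun f θ => by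
    rw [hΦ]; rfl
  have hkey : ∀ f h : C(Icc (0:ℝ) T, ℝ), ∀ t, t ∈ Icc (0:ℝ) T →
      |FluidAux.psi lam Q0 F g Gc k N (ext f) t - FluidAux.psi lam Q0 F g Gc k N (ext h) t|
        ≤ L * ∫ s in (0:ℝ)..t, |ext f s - ext h s| := by
    intro f h t ht
    rw [hLdef]
    exact FluidAux.psi_diff_le hQ0 hlam KF.coe_nonneg Kg.coe_nonneg KG.coe_nonneg
      Kk.coe_nonneg hLN0 hMg0 hMN0 hF' hg' hGc' hk' hMg (fun s _ => hN1g _ _)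
      (fun s _ => hN2g _) hgc hGcc hkc hNc (hext_cont f) (hext_cont h) ht
  have hiter : ∀ n : ℕ, ∀ f h : C(Icc (0:ℝ) T, ℝ), ∀ θ : Icc (0:ℝ) T,
      |(Φ^[n] f) θ - (Φ^[n] h) θ| ≤ L ^ n * θ.1 ^ n / n.factorial * dist f h := by
    intro n
    induction n with
    | zero =>
      intro f h θ
      have := ContinuousMap.dist_apply_le_dist (f := f) (g := h) θ
      rw [Real.dist_eq] at this
      simpa using this
    | succ n ih =>
      intro f h θ
      rw [Function.iterate_succ_apply', Function.iterate_succ_apply']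
      rw [hΦapp, hΦapp]
      have hfact0 : (0:ℝ) < n.factorial := by exact_mod_cast n.factorial_pos
      have hmono : (∫ s in (0:ℝ)..θ.1, |ext (Φ^[n] f) s - ext (Φ^[n] h) s|)
          ≤ ∫ s in (0:ℝ)..θ.1, L ^ n * s ^ n / n.factorial * dist f h := by
        refine intervalIntegral.integral_mono_on θ.2.1
          (((hext_cont _).sub (hext_cont _)).abs.intervalIntegrable _ _)
          ((((continuous_const.mul (continuous_pow n)).div_const _).mul
            continuous_const).intervalIntegrable _ _) ?_
        intro s hs
        have hsI : s ∈ Icc (0:ℝ) T := ⟨hs.1, hs.2.trans θ.2.2⟩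
        rw [hext_eq _ s hsI, hext_eq _ s hsI]
        exact ih f h ⟨s, hsI⟩
      have hcomp : (∫ s in (0:ℝ)..θ.1, L ^ n * s ^ n / n.factorial * dist f h)
          = (L ^ n / n.factorial * dist f h) * (θ.1 ^ (n + 1) / (n + 1)) := by
        have he : (fun s : ℝ => L ^ n * s ^ n / n.factorial * dist f h)
            = fun s : ℝ => (L ^ n / n.factorial * dist f h) * s ^ n := by
          funext s; ring
        rw [he, intervalIntegral.integral_const_mul, integral_pow,
          zero_pow (Nat.succ_ne_zero n), sub_zero]
      calc |FluidAux.psi lam Q0 F g Gc k N (ext (Φ^[n] f)) θ.1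
            - FluidAux.psi lam Q0 F g Gc k N (ext (Φ^[n] h)) θ.1|
          ≤ L * ∫ s in (0:ℝ)..θ.1, |ext (Φ^[n] f) s - ext (Φ^[n] h) s| :=
            hkey _ _ θ.1 θ.2
        _ ≤ L * ((L ^ n / n.factorial * dist f h) * (θ.1 ^ (n + 1) / (n + 1))) := by
            rw [← hcomp]
            exact mul_le_mul_of_nonneg_left hmono hL0
        _ = L ^ (n + 1) * θ.1 ^ (n + 1) / (n + 1).factorial * dist f h := by
            rw [Nat.factorial_succ]
            push_cast
            have h1 : ((n:ℝ) + 1) ≠ 0 := by positivity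
            have h2 : ((n.factorial : ℝ)) ≠ 0 := ne_of_gt hfact0
            field_simp
            ring
  -- contraction of an iterate
  have hdist : ∀ n : ℕ, ∀ f h : C(Icc (0:ℝ) T, ℝ),
      dist (Φ^[n] f) (Φ^[n] h) ≤ (L * T) ^ n / n.factorial * dist f h := by
    intro n f h
    have hfact0 : (0:ℝ) < n.factorial := by exact_mod_cast n.factorial_pos
    have hnn : (0:ℝ) ≤ (L * T) ^ n / n.factorial * dist f h :=
      mul_nonneg (div_nonneg (pow_nonneg (mul_nonneg hL0 hT.le) n) hfact0.le) dist_nonneg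
    rw [ContinuousMap.dist_le hnn]
    intro θ
    rw [Real.dist_eq]
    refine (hiter n f h θ).trans ?_
    have h1 : L ^ n * θ.1 ^ n ≤ (L * T) ^ n := by
      rw [mul_pow]
      exact mul_le_mul_of_nonneg_left
        (pow_le_pow_left₀ θ.2.1 θ.2.2 n) (pow_nonneg hL0 n)
    have h2 : L ^ n * θ.1 ^ n / n.factorial ≤ (L * T) ^ n / n.factorial := by
      gcongr
    exact mul_le_mul_of_nonneg_right h2 dist_nonneg
  obtain ⟨n, hn⟩ : ∃ n : ℕ, (L * T) ^ n / n.factorial < 1 :=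
    ((FloorSemiring.tendsto_pow_div_factorial_atTop (L * T)).eventually_lt_const
      one_pos).exists
  have hKnn : (0:ℝ) ≤ (L * T) ^ n / n.factorial := by
    have hfact0 : (0:ℝ) < n.factorial := by exact_mod_cast n.factorial_pos
    exact div_nonneg (pow_nonneg (mul_nonneg hL0 hT.le) n) hfact0.le
  set Kc : NNReal := ⟨(L * T) ^ n / n.factorial, hKnn⟩ with hKc
  have hcontr : ContractingWith Kc (Φ^[n]) := by
    constructor
    · exact_mod_cast hn
    · exact LipschitzWith.of_dist_le_mul fun f h => hdist n f h
  haveI : Nonempty C(Icc (0:ℝ) T, ℝ) := ⟨ContinuousMap.const _ 0⟩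
  set X0 : C(Icc (0:ℝ) T, ℝ) := ContractingWith.fixedPoint (Φ^[n]) hcontr with hX0
  have hfix : Φ X0 = X0 := hcontr.isFixedPt_fixedPoint_iterate
  set Xe : ℝ → ℝ := ext X0 with hXe
  have hXec : Continuous Xe := hext_cont X0
  have hXeq : ∀ t ∈ Icc (0:ℝ) T, Xe t = FluidAux.psi lam Q0 F g Gc k N Xe t := by
    intro t ht
    have h1 : Xe t = X0 ⟨t, ht⟩ := hext_eq X0 t ht
    rw [h1, ← hfix, hΦapp]
  -- a priori bound for the fixed point
  have hkXe : Continuous fun u => k (Xe u) := hkc.comp hXec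
  have habs : ∀ t ∈ Icc (0:ℝ) T, |Xe t| ≤ C0 + K0 * ∫ s in (0:ℝ)..t, |Xe s| := by
    intro t ht
    have hJ0 : 0 ≤ ∫ s in (0:ℝ)..t, |Xe s| :=
      intervalIntegral.integral_nonneg ht.1 fun u _ => abs_nonneg _
    rw [hXeq t ht, FluidAux.psi_eq hGcc hkc hXec t]
    have hc3 : |∫ s in (0:ℝ)..t, Gc (∫ u in s..t, k (Xe u))| ≤ T * MG := by
      calc |∫ s in (0:ℝ)..t, Gc (∫ u in s..t, k (Xe u))|
          ≤ ∫ s in (0:ℝ)..t, |Gc (∫ u in s..t, k (Xe u))| :=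
            intervalIntegral.abs_integral_le_integral_abs ht.1
        _ ≤ ∫ _s in (0:ℝ)..t, MG :=
            intervalIntegral.integral_mono_on ht.1
              ((hGcc.comp (FluidAux.cont_S_left hkXe t)).abs.intervalIntegrable _ _)
              intervalIntegrable_const (fun s _ => hMG _)
        _ = (t - 0) * MG := by rw [intervalIntegral.integral_const, smul_eq_mul]
        _ ≤ T * MG := by
            have := mul_le_mul_of_nonneg_right (show t - 0 ≤ T by linarith [ht.2]) hMG0
            linarith
    have hc4 : |∫ r in (0:ℝ)..t, N (Xe r) * g (∫ u in r..t, k (Xe u))|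
        ≤ Mk * Mg * ∫ s in (0:ℝ)..t, |Xe s| := by
      have hNgc : Continuous fun r => N (Xe r) * g (∫ u in r..t, k (Xe u)) :=
        ((hNc.comp hXec).mul (hgc.comp (FluidAux.cont_S_left hkXe t)))
      calc |∫ r in (0:ℝ)..t, N (Xe r) * g (∫ u in r..t, k (Xe u))|
          ≤ ∫ r in (0:ℝ)..t, |N (Xe r) * g (∫ u in r..t, k (Xe u))| :=
            intervalIntegral.abs_integral_le_integral_abs ht.1
        _ ≤ ∫ r in (0:ℝ)..t, Mk * Mg * |Xe r| := by
            refine intervalIntegral.integral_mono_on ht.1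
              (hNgc.abs.intervalIntegrable _ _)
              ((continuous_const.mul hXec.abs).intervalIntegrable _ _) ?_
            intro r _
            calc |N (Xe r) * g (∫ u in r..t, k (Xe u))|
                = |N (Xe r)| * |g (∫ u in r..t, k (Xe u))| := abs_mul _ _
              _ ≤ (|Xe r| * Mk) * Mg :=
                  mul_le_mul (hNabs _) (hMg _) (abs_nonneg _)
                    (mul_nonneg (abs_nonneg _) hMk0)
              _ = Mk * Mg * |Xe r| := by ring
        _ = Mk * Mg * ∫ s in (0:ℝ)..t, |Xe s| := intervalIntegral.integral_const_mul _ _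
    have habs1 : |F (∫ u in (0:ℝ)..t, k (Xe u))| ≤ MF := hMF _
    have habs2 : |Gc (∫ u in (0:ℝ)..t, k (Xe u))| ≤ MG := hMG _
    set c3 := ∫ s in (0:ℝ)..t, Gc (∫ u in s..t, k (Xe u)) with hc3def
    set c4 := ∫ r in (0:ℝ)..t, N (Xe r) * g (∫ u in r..t, k (Xe u)) with hc4def
    set J := ∫ s in (0:ℝ)..t, |Xe s| with hJdef
    calc |F (∫ u in (0:ℝ)..t, k (Xe u)) + Q0 * Gc (∫ u in (0:ℝ)..t, k (Xe u))
          + lam * (c3 + t * c4)|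
        ≤ |F (∫ u in (0:ℝ)..t, k (Xe u))| + Q0 * |Gc (∫ u in (0:ℝ)..t, k (Xe u))|
          + lam * (|c3| + t * |c4|) := by
          refine (abs_add_le _ _).trans (add_le_add ((abs_add_le _ _).trans
            (add_le_add le_rfl ?_)) ?_)
          · rw [abs_mul, abs_of_nonneg hQ0]
          · rw [abs_mul, abs_of_nonneg hlam]
            refine mul_le_mul_of_nonneg_left ((abs_add_le _ _).trans
              (add_le_add le_rfl ?_)) hlam
            rw [abs_mul, abs_of_nonneg ht.1]
      _ ≤ MF + Q0 * MG + lam * (T * MG + T * (Mk * Mg * J)) := by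
          have hq := mul_le_mul_of_nonneg_left habs2 hQ0
          have h4' : t * |c4| ≤ T * (Mk * Mg * J) := by
            calc t * |c4| ≤ t * (Mk * Mg * J) :=
                  mul_le_mul_of_nonneg_left hc4 ht.1
              _ ≤ T * (Mk * Mg * J) :=
                  mul_le_mul_of_nonneg_right ht.2
                    (mul_nonneg (mul_nonneg hMk0 hMg0) hJ0)
          have h34 := mul_le_mul_of_nonneg_left (add_le_add hc3 h4') hlam
          linarith
      _ ≤ C0 + K0 * J := by
          rw [hC0def, hK0def]
          have : lam * (T * MG + T * (Mk * Mg * J))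
              = lam * (T * MG) + lam * T * (Mk * Mg) * J := by ring
          linarith [this.le, this.ge]
  have hgrow : ∀ t ∈ Icc (0:ℝ) T, |Xe t| ≤ C0 * Real.exp (K0 * t) :=
    FluidAux.gron hK00 hXec.abs (fun t => abs_nonneg _) habs
  have hRb : ∀ s ∈ Icc (0:ℝ) T, max (Xe s - 1) 0 ≤ R := by
    intro s hs
    have h1 : Xe s ≤ C0 * Real.exp (K0 * s) := (le_abs_self _).trans (hgrow s hs)
    have h2 : Real.exp (K0 * s) ≤ Real.exp (K0 * T) :=
      Real.exp_le_exp.mpr (mul_le_mul_of_nonneg_left hs.2 hK00)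
    have h3 : C0 * Real.exp (K0 * s) ≤ (C0 + 1) * Real.exp (K0 * T) := by
      have he0 : 0 < Real.exp (K0 * s) := Real.exp_pos _
      nlinarith
    refine max_le ?_ hR0
    rw [hRdef]
    linarith
  have hNeq : ∀ s ∈ Icc (0:ℝ) T, N (Xe s) = max (Xe s - 1) 0 * k (Xe s) := by
    intro s hs
    show min (max (Xe s - 1) 0) R * k (Xe s) = max (Xe s - 1) 0 * k (Xe s)
    rw [min_eq_left (hRb s hs)]
  have hfluid : FluidLimitEq lam Q0 F g Gc k T Xe := by
    intro t ht
    have heq : FluidAux.psi lam Q0 F g Gc k N Xe t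
        = FluidAux.psi lam Q0 F g Gc k (fun x => max (x - 1) 0 * k x) Xe t := by
      have hAAeq : (∫ r in (0:ℝ)..t, N (Xe r) * g (∫ u in r..t, k (Xe u)))
          = ∫ r in (0:ℝ)..t,
              (fun x => max (x - 1) 0 * k x) (Xe r) * g (∫ u in r..t, k (Xe u)) := by
        refine intervalIntegral.integral_congr fun r hr => ?_
        rw [uIcc_of_le ht.1] at hr
        rw [hNeq r ⟨hr.1, hr.2.trans ht.2⟩]
      unfold FluidAux.psi
      rw [hAAeq]
    rw [hXeq t ht, heq]
    rfl
  refine ⟨⟨Xe, hXec.continuousOn, hfluid⟩, ?_⟩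
  -- uniqueness
  intro X Y hXc hXeqn hYc hYeqn
  set No : ℝ → ℝ := fun x => max (x - 1) 0 * k x with hNodef
  have hNoc : Continuous No :=
    (((continuous_id.sub continuous_const).max continuous_const)).mul hkc
  set X' : ℝ → ℝ := fun t => X ((projIcc 0 T hT.le t : Icc (0:ℝ) T) : ℝ) with hX'def
  set Y' : ℝ → ℝ := fun t => Y ((projIcc 0 T hT.le t : Icc (0:ℝ) T) : ℝ) with hY'def
  have hX'c : Continuous X' :=
    hXc.comp_continuous (continuous_subtype_val.comp continuous_projIcc)
      (fun t => (projIcc 0 T hT.le t).2)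
  have hY'c : Continuous Y' :=
    hYc.comp_continuous (continuous_subtype_val.comp continuous_projIcc)
      (fun t => (projIcc 0 T hT.le t).2)
  have hXX' : EqOn X X' (Icc 0 T) := by
    intro t ht
    rw [hX'def]
    simp [projIcc_of_mem hT.le ht]
  have hYY' : EqOn Y Y' (Icc 0 T) := by
    intro t ht
    rw [hY'def]
    simp [projIcc_of_mem hT.le ht]
  have hX'eq : ∀ t ∈ Icc (0:ℝ) T, X' t = FluidAux.psi lam Q0 F g Gc k No X' t := by
    intro t ht
    have h1 : X t = FluidAux.psi lam Q0 F g Gc k No X t := hXeqn t ht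
    calc X' t = X t := (hXX' ht).symm
      _ = FluidAux.psi lam Q0 F g Gc k No X t := h1
      _ = FluidAux.psi lam Q0 F g Gc k No X' t := FluidAux.psi_congr hXX' hT.le ht
  have hY'eq : ∀ t ∈ Icc (0:ℝ) T, Y' t = FluidAux.psi lam Q0 F g Gc k No Y' t := by
    intro t ht
    have h1 : Y t = FluidAux.psi lam Q0 F g Gc k No Y t := hYeqn t ht
    calc Y' t = Y t := (hYY' ht).symm
      _ = FluidAux.psi lam Q0 F g Gc k No Y t := h1
      _ = FluidAux.psi lam Q0 F g Gc k No Y' t := FluidAux.psi_congr hYY' hT.le ht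
  obtain ⟨BX, hBX⟩ := isCompact_Icc.exists_bound_of_continuousOn hXc
  obtain ⟨BY, hBY⟩ := isCompact_Icc.exists_bound_of_continuousOn hYc
  set B : ℝ := max BX BY with hBdef
  have hX'b : ∀ s : ℝ, |X' s| ≤ B := by
    intro s
    rw [hX'def]
    have := hBX _ (projIcc 0 T hT.le s).2
    rw [Real.norm_eq_abs] at this
    exact this.trans (le_max_left _ _)
  have hY'b : ∀ s : ℝ, |Y' s| ≤ B := by
    intro s
    rw [hY'def]
    have := hBY _ (projIcc 0 T hT.le s).2
    rw [Real.norm_eq_abs] at this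
    exact this.trans (le_max_right _ _)
  have hB0 : 0 ≤ B := (abs_nonneg _).trans (hX'b 0)
  have hmaxlip : ∀ a b : ℝ, |max (a - 1) 0 - max (b - 1) 0| ≤ |a - b| := by
    intro a b
    have h2 := abs_max_sub_max_le_abs (a - 1) (b - 1) 0
    have h3 : |(a - 1) - (b - 1)| = |a - b| := by ring_nf
    rw [h3] at h2
    exact h2
  have hN1u : ∀ s : ℝ, |No (X' s) - No (Y' s)| ≤ (Mk + B * (Kk:ℝ)) * |X' s - Y' s| := by
    intro s
    rw [hNodef]
    refine FluidAux.N_lip (m := fun x => max (x - 1) 0) (X' s) (Y' s) hMk hk'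
      (hmaxlip _ _) ?_
    rw [abs_of_nonneg (le_max_right _ _)]
    exact (FluidAux.max_sub_one_le_abs _).trans (hY'b s)
  have hN2u : ∀ s : ℝ, |No (Y' s)| ≤ B * Mk := by
    intro s
    rw [hNodef]
    calc |max (Y' s - 1) 0 * k (Y' s)| = |max (Y' s - 1) 0| * |k (Y' s)| := abs_mul _ _
      _ ≤ B * Mk := by
          refine mul_le_mul ?_ (hMk _) (abs_nonneg _) hB0
          rw [abs_of_nonneg (le_max_right _ _)]
          exact (FluidAux.max_sub_one_le_abs _).trans (hY'b s)
  set LNu : ℝ := Mk + B * (Kk:ℝ) with hLNudef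
  set MNu : ℝ := B * Mk with hMNudef
  have hLNu0 : 0 ≤ LNu := by
    rw [hLNudef]; exact add_nonneg hMk0 (mul_nonneg hB0 Kk.coe_nonneg)
  have hMNu0 : 0 ≤ MNu := by rw [hMNudef]; exact mul_nonneg hB0 hMk0
  set Lu : ℝ := (KF:ℝ) * (Kk:ℝ) + Q0 * ((KG:ℝ) * (Kk:ℝ))
      + lam * ((KG:ℝ) * (Kk:ℝ) * T + T * (LNu * Mg + MNu * ((Kg:ℝ) * (Kk:ℝ)) * T))
      with hLudef
  have hLu0 : 0 ≤ Lu := by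
    have h1 : 0 ≤ (KF:ℝ) * (Kk:ℝ) := mul_nonneg KF.coe_nonneg Kk.coe_nonneg
    have h2 : 0 ≤ (KG:ℝ) * (Kk:ℝ) := mul_nonneg KG.coe_nonneg Kk.coe_nonneg
    have h3 : 0 ≤ (Kg:ℝ) * (Kk:ℝ) := mul_nonneg Kg.coe_nonneg Kk.coe_nonneg
    have h4 : 0 ≤ LNu * Mg := mul_nonneg hLNu0 hMg0
    have h5 : 0 ≤ MNu * ((Kg:ℝ) * (Kk:ℝ)) * T := mul_nonneg (mul_nonneg hMNu0 h3) hT.le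
    have h6 : 0 ≤ Q0 * ((KG:ℝ) * (Kk:ℝ)) := mul_nonneg hQ0 h2
    have h7 : 0 ≤ (KG:ℝ) * (Kk:ℝ) * T := mul_nonneg h2 hT.le
    have h8 : 0 ≤ T * (LNu * Mg + MNu * ((Kg:ℝ) * (Kk:ℝ)) * T) :=
      mul_nonneg hT.le (by linarith)
    have h9 : 0 ≤ lam * ((KG:ℝ) * (Kk:ℝ) * T
        + T * (LNu * Mg + MNu * ((Kg:ℝ) * (Kk:ℝ)) * T)) := mul_nonneg hlam (by linarith)
    rw [hLudef]; linarith
  have hdiff : ∀ t ∈ Icc (0:ℝ) T,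
      |X' t - Y' t| ≤ 0 + Lu * ∫ s in (0:ℝ)..t, |X' s - Y' s| := by
    intro t ht
    rw [hX'eq t ht, hY'eq t ht, zero_add, hLudef]
    exact FluidAux.psi_diff_le hQ0 hlam KF.coe_nonneg Kg.coe_nonneg KG.coe_nonneg
      Kk.coe_nonneg hLNu0 hMg0 hMNu0 hF' hg' hGc' hk' hMg (fun s _ => hN1u s)
      (fun s _ => hN2u s) hgc hGcc hkc hNoc hX'c hY'c ht
  have hzero : ∀ t ∈ Icc (0:ℝ) T, |X' t - Y' t| ≤ 0 * Real.exp (Lu * t) :=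
    FluidAux.gron hLu0 (hX'c.sub hY'c).abs (fun t => abs_nonneg _) hdiff
  intro t ht
  have h0 : |X' t - Y' t| ≤ 0 := by simpa using hzero t ht
  have heq0 : X' t = Y' t := by
    have h1 : |X' t - Y' t| = 0 := le_antisymm h0 (abs_nonneg _)
    rwa [abs_eq_zero, sub_eq_zero] at h1
  calc X t = X' t := hXX' ht
    _ = Y' t := heq0
    _ = Y t := (hYY' ht).symm
end

section
/- Fix T > 0. Let k, H₁, H₂, H₃, H₄ : ℝ → ℝ be bounded, Lipschitz continuous functions. Then the integral equation x_t = H₁(∫₀ᵗ k(x_s) ds) + ∫₀ᵗ H₂(∫ₛᵗ k(x_u) du) ds + ∫₀ᵗ H₃(x_s)·H₄(∫ₛᵗ k(x_u) du) ds, for t ∈ [0,T] (so that in particular x₀ = H₁(0)), has a unique solution in the space C([0,T], ℝ) of continuous real-valued functions on [0,T]. -/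
open MeasureTheory Set

namespace Stmt1Aux
variable {T : ℝ} (k H1 H2 H3 H4 : ℝ → ℝ)

/-- The right-hand side of the integral equation (same parse as in `IntegralEq1`). -/
noncomputable def rhs (x : ℝ → ℝ) (t : ℝ) : ℝ :=
  H1 (∫ u in (0 : ℝ)..t, k (x u))
      + ∫ s in (0 : ℝ)..t, H2 (∫ u in s..t, k (x u))
      + ∫ s in (0 : ℝ)..t, H3 (x s) * H4 (∫ u in s..t, k (x u))

/-- The cumulative kernel integral. -/
noncomputable def F (x : ℝ → ℝ) (t : ℝ) : ℝ := ∫ u in (0:ℝ)..t, k (x u)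

theorem inner_eq (hk : Continuous k) {x : ℝ → ℝ} (hx : Continuous x) (s t : ℝ) :
    ∫ u in s..t, k (x u) = F k x t - F k x s :=
  (intervalIntegral.integral_interval_sub_left ((hk.comp hx).intervalIntegrable _ _)
    ((hk.comp hx).intervalIntegrable _ _)).symm

theorem F_cont (hk : Continuous k) {x : ℝ → ℝ} (hx : Continuous x) :
    Continuous (F k x) := by
  exact intervalIntegral.continuous_parametric_intervalIntegral_of_continuous
    (f := fun (_ : ℝ) u => k (x u)) (by fun_prop) continuous_id

theorem rhs_eq (hk : Continuous k) (h2 : Continuous H2) (h3 : Continuous H3)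
    (h4 : Continuous H4) {x : ℝ → ℝ} (hx : Continuous x) (t : ℝ) :
    rhs k H1 H2 H3 H4 x t = H1 (F k x t)
      + ((∫ s in (0:ℝ)..t, H2 (F k x t - F k x s))
      + t * ∫ s in (0:ℝ)..t, H3 (x s) * H4 (F k x t - F k x s)) := by
  have hF := F_cont k hk hx
  have e3 : (∫ s in (0:ℝ)..t, H3 (x s) * H4 (∫ u in s..t, k (x u)))
      = ∫ s in (0:ℝ)..t, H3 (x s) * H4 (F k x t - F k x s) :=
    intervalIntegral.integral_congr fun s _ => by rw [inner_eq k hk hx]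
  unfold rhs
  rw [e3]
  have e2 : (∫ s in (0:ℝ)..t, (H2 (∫ u in s..t, k (x u))
        + ∫ s in (0:ℝ)..t, H3 (x s) * H4 (F k x t - F k x s)))
      = ∫ s in (0:ℝ)..t, (H2 (F k x t - F k x s)
        + ∫ s in (0:ℝ)..t, H3 (x s) * H4 (F k x t - F k x s)) :=
    intervalIntegral.integral_congr fun s _ => by rw [inner_eq k hk hx]
  rw [e2, intervalIntegral.integral_add, intervalIntegral.integral_const]
  · rw [smul_eq_mul, show (∫ u in (0:ℝ)..t, k (x u)) = F k x t from rfl]; ring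
  · exact ((h2.comp ((hF.comp continuous_const).sub hF))).intervalIntegrable _ _
  · exact intervalIntegrable_const

theorem rhs_congr {f g : ℝ → ℝ} (hfg : EqOn f g (Icc 0 T)) {t : ℝ} (ht : t ∈ Icc (0:ℝ) T) :
    rhs k H1 H2 H3 H4 f t = rhs k H1 H2 H3 H4 g t := by
  have hsub : ∀ s ∈ Icc (0:ℝ) t, ∀ u ∈ uIcc s t, u ∈ Icc (0:ℝ) T := by
    intro s hs u hu
    rw [uIcc_of_le hs.2] at hu
    exact ⟨le_trans hs.1 hu.1, le_trans hu.2 ht.2⟩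
  have h0t : ∀ u ∈ uIcc (0:ℝ) t, u ∈ Icc (0:ℝ) T := by
    intro u hu
    rw [uIcc_of_le ht.1] at hu
    exact ⟨hu.1, le_trans hu.2 ht.2⟩
  have e1 : (∫ u in (0:ℝ)..t, k (f u)) = ∫ u in (0:ℝ)..t, k (g u) :=
    intervalIntegral.integral_congr fun u hu => by rw [hfg (h0t u hu)]
  have e3 : (∫ s in (0:ℝ)..t, H3 (f s) * H4 (∫ u in s..t, k (f u)))
      = ∫ s in (0:ℝ)..t, H3 (g s) * H4 (∫ u in s..t, k (g u)) := by
    refine intervalIntegral.integral_congr fun s hs => ?_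
    rw [uIcc_of_le ht.1] at hs
    have : (∫ u in s..t, k (f u)) = ∫ u in s..t, k (g u) :=
      intervalIntegral.integral_congr fun u hu => by rw [hfg (hsub s hs u hu)]
    rw [this, hfg ⟨hs.1, le_trans hs.2 ht.2⟩]
  have e2 : (∫ s in (0:ℝ)..t, (H2 (∫ u in s..t, k (f u))
        + ∫ s in (0:ℝ)..t, H3 (f s) * H4 (∫ u in s..t, k (f u))))
      = ∫ s in (0:ℝ)..t, (H2 (∫ u in s..t, k (g u))
        + ∫ s in (0:ℝ)..t, H3 (g s) * H4 (∫ u in s..t, k (g u))) := by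
    refine intervalIntegral.integral_congr fun s hs => ?_
    rw [uIcc_of_le ht.1] at hs
    have : (∫ u in s..t, k (f u)) = ∫ u in s..t, k (g u) :=
      intervalIntegral.integral_congr fun u hu => by rw [hfg (hsub s hs u hu)]
    rw [this, e3]
  unfold rhs
  rw [e1, e2]

theorem rhs_cont (hk : Continuous k) (h1 : Continuous H1) (h2 : Continuous H2)
    (h3 : Continuous H3) (h4 : Continuous H4) {x : ℝ → ℝ} (hx : Continuous x) :
    Continuous (rhs k H1 H2 H3 H4 x) := by
  have hF := F_cont k hk hx
  have hrw : rhs k H1 H2 H3 H4 x = fun t => H1 (F k x t)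
      + ((∫ s in (0:ℝ)..t, H2 (F k x t - F k x s))
      + t * ∫ s in (0:ℝ)..t, H3 (x s) * H4 (F k x t - F k x s)) :=
    funext fun t => rhs_eq k H1 H2 H3 H4 hk h2 h3 h4 hx t
  rw [hrw]
  refine (h1.comp hF).add (Continuous.add ?_ (continuous_id.mul ?_))
  · exact intervalIntegral.continuous_parametric_intervalIntegral_of_continuous
      (f := fun t s => H2 (F k x t - F k x s))
      (h2.comp ((hF.comp continuous_fst).sub (hF.comp continuous_snd))) continuous_id
  · exact intervalIntegral.continuous_parametric_intervalIntegral_of_continuous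
      (f := fun t s => H3 (x s) * H4 (F k x t - F k x s))
      (((h3.comp hx).comp continuous_snd).mul
        (h4.comp ((hF.comp continuous_fst).sub (hF.comp continuous_snd)))) continuous_id

theorem FG_bound {Lk : NNReal} (hk : LipschitzWith Lk k) {x y : ℝ → ℝ}
    (hx : Continuous x) (hy : Continuous y) {s t : ℝ} (hs0 : 0 ≤ s) (hst : s ≤ t) :
    |F k x s - F k y s| ≤ Lk * ∫ u in (0:ℝ)..t, |x u - y u| := by
  have habs : Continuous fun u => |x u - y u| := (hx.sub hy).abs
  have hkx : Continuous fun u => k (x u) := hk.continuous.comp hx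
  have hky : Continuous fun u => k (y u) := hk.continuous.comp hy
  calc |F k x s - F k y s| = |∫ u in (0:ℝ)..s, (k (x u) - k (y u))| := by
        rw [F, F, intervalIntegral.integral_sub (hkx.intervalIntegrable _ _)
          (hky.intervalIntegrable _ _)]
    _ ≤ ∫ u in (0:ℝ)..s, |k (x u) - k (y u)| :=
        intervalIntegral.abs_integral_le_integral_abs hs0
    _ ≤ ∫ u in (0:ℝ)..s, Lk * |x u - y u| := by
        refine intervalIntegral.integral_mono_on hs0 ((hkx.sub hky).abs.intervalIntegrable _ _)
          ((continuous_const.mul habs).intervalIntegrable _ _) fun u _ => ?_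
        have := hk.dist_le_mul (x u) (y u)
        rwa [Real.dist_eq, Real.dist_eq] at this
    _ = Lk * ∫ u in (0:ℝ)..s, |x u - y u| := intervalIntegral.integral_const_mul _ _
    _ ≤ Lk * ∫ u in (0:ℝ)..t, |x u - y u| := by
        refine mul_le_mul_of_nonneg_left ?_ Lk.coe_nonneg
        exact intervalIntegral.integral_mono_interval le_rfl hs0 hst
          (Filter.Eventually.of_forall fun u => abs_nonneg _)
          (habs.intervalIntegrable _ _)

theorem lip_abs {L : NNReal} {f : ℝ → ℝ} (hf : LipschitzWith L f) (a b : ℝ) :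
    |f a - f b| ≤ L * |a - b| := by
  have := hf.dist_le_mul a b
  rwa [Real.dist_eq, Real.dist_eq] at this

theorem key {Lk L1 L2 L3 L4 : NNReal} {M3 M4 : ℝ}
    (hk : LipschitzWith Lk k) (h1 : LipschitzWith L1 H1) (h2 : LipschitzWith L2 H2)
    (h3 : LipschitzWith L3 H3) (h4 : LipschitzWith L4 H4)
    (hM3 : ∀ y, |H3 y| ≤ M3) (hM4 : ∀ y, |H4 y| ≤ M4)
    {x y : ℝ → ℝ} (hx : Continuous x) (hy : Continuous y) {t : ℝ} (ht : t ∈ Icc (0:ℝ) T) :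
    |rhs k H1 H2 H3 H4 x t - rhs k H1 H2 H3 H4 y t|
      ≤ (L1 * Lk + 2 * L2 * Lk * T + M4 * L3 * T + 2 * M3 * L4 * Lk * T ^ 2)
        * ∫ u in (0:ℝ)..t, |x u - y u| := by
  obtain ⟨ht0, htT⟩ := ht
  have hM30 : 0 ≤ M3 := le_trans (abs_nonneg _) (hM3 0)
  have hM40 : 0 ≤ M4 := le_trans (abs_nonneg _) (hM4 0)
  have hT0 : 0 ≤ T := le_trans ht0 htT
  have hFx := F_cont k hk.continuous hx
  have hFy := F_cont k hk.continuous hy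
  set I := ∫ u in (0:ℝ)..t, |x u - y u| with hIdef
  have hI0 : 0 ≤ I :=
    intervalIntegral.integral_nonneg ht0 fun u _ => abs_nonneg _
  have hFG : ∀ s ∈ Icc (0:ℝ) t, |F k x s - F k y s| ≤ Lk * I := fun s hs =>
    FG_bound k hk hx hy hs.1 hs.2
  -- continuity of various integrands
  have c2x : Continuous fun s => H2 (F k x t - F k x s) :=
    h2.continuous.comp (continuous_const.sub hFx)
  have c2y : Continuous fun s => H2 (F k y t - F k y s) :=
    h2.continuous.comp (continuous_const.sub hFy)
  have c3x : Continuous fun s => H3 (x s) * H4 (F k x t - F k x s) :=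
    (h3.continuous.comp hx).mul (h4.continuous.comp (continuous_const.sub hFx))
  have c3y : Continuous fun s => H3 (y s) * H4 (F k y t - F k y s) :=
    (h3.continuous.comp hy).mul (h4.continuous.comp (continuous_const.sub hFy))
  have habs : Continuous fun u => |x u - y u| := (hx.sub hy).abs
  -- bound on the H2 integral difference
  have hPb : |(∫ s in (0:ℝ)..t, H2 (F k x t - F k x s))
      - ∫ s in (0:ℝ)..t, H2 (F k y t - F k y s)| ≤ T * (L2 * (2 * (Lk * I))) := by
    rw [← intervalIntegral.integral_sub (c2x.intervalIntegrable _ _)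
      (c2y.intervalIntegrable _ _)]
    calc |∫ s in (0:ℝ)..t, (H2 (F k x t - F k x s) - H2 (F k y t - F k y s))|
        ≤ ∫ s in (0:ℝ)..t, |H2 (F k x t - F k x s) - H2 (F k y t - F k y s)| :=
          intervalIntegral.abs_integral_le_integral_abs ht0
      _ ≤ ∫ s in (0:ℝ)..t, (L2 * (2 * (Lk * I))) := by
          refine intervalIntegral.integral_mono_on ht0
            ((c2x.sub c2y).abs.intervalIntegrable _ _) (intervalIntegrable_const)
            fun s hs => ?_
          calc |H2 (F k x t - F k x s) - H2 (F k y t - F k y s)|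
              ≤ L2 * |(F k x t - F k x s) - (F k y t - F k y s)| := lip_abs h2 _ _
            _ ≤ L2 * (2 * (Lk * I)) := by
                refine mul_le_mul_of_nonneg_left ?_ L2.coe_nonneg
                calc |(F k x t - F k x s) - (F k y t - F k y s)|
                    = |(F k x t - F k y t) - (F k x s - F k y s)| := by ring_nf
                  _ ≤ |F k x t - F k y t| + |F k x s - F k y s| := abs_sub _ _
                  _ ≤ Lk * I + Lk * I := add_le_add
                      (hFG t ⟨ht0, le_refl t⟩) (hFG s hs)
                  _ = 2 * (Lk * I) := by ring
      _ = (t - 0) • (L2 * (2 * (Lk * I))) := intervalIntegral.integral_const _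
      _ ≤ T * (L2 * (2 * (Lk * I))) := by
          rw [smul_eq_mul, sub_zero]
          exact mul_le_mul_of_nonneg_right htT
            (by positivity)
  -- bound on the H3*H4 integral difference
  have hQb : |(∫ s in (0:ℝ)..t, H3 (x s) * H4 (F k x t - F k x s))
      - ∫ s in (0:ℝ)..t, H3 (y s) * H4 (F k y t - F k y s)|
      ≤ T * (M3 * (L4 * (2 * (Lk * I)))) + M4 * L3 * I := by
    rw [← intervalIntegral.integral_sub (c3x.intervalIntegrable _ _)
      (c3y.intervalIntegrable _ _)]
    calc |∫ s in (0:ℝ)..t, (H3 (x s) * H4 (F k x t - F k x s)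
            - H3 (y s) * H4 (F k y t - F k y s))|
        ≤ ∫ s in (0:ℝ)..t, |H3 (x s) * H4 (F k x t - F k x s)
            - H3 (y s) * H4 (F k y t - F k y s)| :=
          intervalIntegral.abs_integral_le_integral_abs ht0
      _ ≤ ∫ s in (0:ℝ)..t, (M3 * (L4 * (2 * (Lk * I))) + M4 * L3 * |x s - y s|) := by
          refine intervalIntegral.integral_mono_on ht0
            ((c3x.sub c3y).abs.intervalIntegrable _ _)
            ((continuous_const.add (continuous_const.mul habs)).intervalIntegrable _ _)
            fun s hs => ?_
          have split : H3 (x s) * H4 (F k x t - F k x s) - H3 (y s) * H4 (F k y t - F k y s)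
              = H3 (x s) * (H4 (F k x t - F k x s) - H4 (F k y t - F k y s))
                + (H3 (x s) - H3 (y s)) * H4 (F k y t - F k y s) := by ring
          rw [split]
          calc |H3 (x s) * (H4 (F k x t - F k x s) - H4 (F k y t - F k y s))
                + (H3 (x s) - H3 (y s)) * H4 (F k y t - F k y s)|
              ≤ |H3 (x s)| * |H4 (F k x t - F k x s) - H4 (F k y t - F k y s)|
                + |H3 (x s) - H3 (y s)| * |H4 (F k y t - F k y s)| := by
                refine le_trans (abs_add_le _ _) ?_
                rw [abs_mul, abs_mul]
            _ ≤ M3 * (L4 * (2 * (Lk * I))) + (L3 * |x s - y s|) * M4 := by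
                refine add_le_add ?_ ?_
                · refine mul_le_mul (hM3 _) ?_ (abs_nonneg _) hM30
                  calc |H4 (F k x t - F k x s) - H4 (F k y t - F k y s)|
                      ≤ L4 * |(F k x t - F k x s) - (F k y t - F k y s)| := lip_abs h4 _ _
                    _ ≤ L4 * (2 * (Lk * I)) := by
                        refine mul_le_mul_of_nonneg_left ?_ L4.coe_nonneg
                        calc |(F k x t - F k x s) - (F k y t - F k y s)|
                            = |(F k x t - F k y t) - (F k x s - F k y s)| := by ring_nf
                          _ ≤ |F k x t - F k y t| + |F k x s - F k y s| := abs_sub _ _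
                          _ ≤ Lk * I + Lk * I := add_le_add
                              (hFG t ⟨ht0, le_refl t⟩) (hFG s hs)
                          _ = 2 * (Lk * I) := by ring
                · exact mul_le_mul (lip_abs h3 _ _) (hM4 _) (abs_nonneg _)
                    (by positivity)
            _ = M3 * (L4 * (2 * (Lk * I))) + M4 * L3 * |x s - y s| := by ring
      _ = (t - 0) • (M3 * (L4 * (2 * (Lk * I)))) + M4 * L3 * I := by
          rw [intervalIntegral.integral_add (g := fun s => M4 * L3 * |x s - y s|)
            intervalIntegrable_const
            ((continuous_const.mul habs).intervalIntegrable _ _),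
            intervalIntegral.integral_const, intervalIntegral.integral_const_mul]
      _ ≤ T * (M3 * (L4 * (2 * (Lk * I)))) + M4 * L3 * I := by
          rw [smul_eq_mul, sub_zero]
          exact add_le_add_left (mul_le_mul_of_nonneg_right htT (by positivity)) _
  -- the H1 difference
  have h1b : |H1 (F k x t) - H1 (F k y t)| ≤ L1 * (Lk * I) :=
    le_trans (lip_abs h1 _ _)
      (mul_le_mul_of_nonneg_left (hFG t ⟨ht0, le_refl t⟩) L1.coe_nonneg)
  -- put everything together
  rw [rhs_eq k H1 H2 H3 H4 hk.continuous h2.continuous h3.continuous h4.continuous hx t,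
    rhs_eq k H1 H2 H3 H4 hk.continuous h2.continuous h3.continuous h4.continuous hy t]
  have habs_t : |t| ≤ T := by rw [abs_of_nonneg ht0]; exact htT
  set P1 := H1 (F k x t); set Q1 := H1 (F k y t)
  set P2 := ∫ s in (0:ℝ)..t, H2 (F k x t - F k x s)
  set Q2 := ∫ s in (0:ℝ)..t, H2 (F k y t - F k y s)
  set P3 := ∫ s in (0:ℝ)..t, H3 (x s) * H4 (F k x t - F k x s)
  set Q3 := ∫ s in (0:ℝ)..t, H3 (y s) * H4 (F k y t - F k y s)
  calc |P1 + (P2 + t * P3) - (Q1 + (Q2 + t * Q3))|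
      = |(P1 - Q1) + ((P2 - Q2) + t * (P3 - Q3))| := by ring_nf
    _ ≤ |P1 - Q1| + (|P2 - Q2| + |t| * |P3 - Q3|) := by
        refine le_trans (abs_add_le _ _) (add_le_add_right ?_ _)
        refine le_trans (abs_add_le _ _) (add_le_add_right ?_ _)
        rw [abs_mul]
    _ ≤ L1 * (Lk * I) + (T * (L2 * (2 * (Lk * I)))
        + T * (T * (M3 * (L4 * (2 * (Lk * I)))) + M4 * L3 * I)) := by
        refine add_le_add h1b (add_le_add hPb ?_)
        calc |t| * |P3 - Q3| ≤ T * |P3 - Q3| :=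
              mul_le_mul_of_nonneg_right habs_t (abs_nonneg _)
          _ ≤ T * (T * (M3 * (L4 * (2 * (Lk * I)))) + M4 * L3 * I) :=
              mul_le_mul_of_nonneg_left hQb hT0
    _ ≤ (L1 * Lk + 2 * L2 * Lk * T + M4 * L3 * T + 2 * M3 * L4 * Lk * T ^ 2) * I := by
        nlinarith [hI0, hT0, hM30, hM40, Lk.coe_nonneg, L1.coe_nonneg, L2.coe_nonneg,
          L3.coe_nonneg, L4.coe_nonneg]

end Stmt1Aux

namespace Stmt1Aux2
theorem ee_dist {T : ℝ} (hT0 : (0:ℝ) ≤ T) (x y : C(Icc (0:ℝ) T, ℝ)) (t : ℝ) :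
    |IccExtend hT0 x t - IccExtend hT0 y t| ≤ dist x y := by
  rw [← Real.dist_eq]
  exact ContinuousMap.dist_apply_le_dist _

theorem iter_bound {T : ℝ} (hT0 : (0:ℝ) ≤ T) {A : ℝ} (hA0 : 0 ≤ A)
    (Φ : C(Icc (0:ℝ) T, ℝ) → C(Icc (0:ℝ) T, ℝ))
    (hΦ : ∀ x y : C(Icc (0:ℝ) T, ℝ), ∀ t ∈ Icc (0:ℝ) T,
      |IccExtend hT0 (Φ x) t - IccExtend hT0 (Φ y) t|
        ≤ A * ∫ u in (0:ℝ)..t, |IccExtend hT0 x u - IccExtend hT0 y u|) :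
    ∀ (n : ℕ) (x y : C(Icc (0:ℝ) T, ℝ)), ∀ t ∈ Icc (0:ℝ) T,
      |IccExtend hT0 (Φ^[n] x) t - IccExtend hT0 (Φ^[n] y) t|
        ≤ A ^ n * t ^ n / n.factorial * dist x y := by
  intro n
  induction n with
  | zero => intro x y t _; simpa using ee_dist hT0 x y t
  | succ n ih =>
    intro x y t ht
    simp only [Function.iterate_succ_apply']
    have hfac : ((n.factorial : ℝ)) ≠ 0 := Nat.cast_ne_zero.mpr n.factorial_ne_zero
    have hn1 : ((n : ℝ) + 1) ≠ 0 := by positivity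
    calc |IccExtend hT0 (Φ (Φ^[n] x)) t - IccExtend hT0 (Φ (Φ^[n] y)) t|
        ≤ A * ∫ u in (0:ℝ)..t, |IccExtend hT0 (Φ^[n] x) u - IccExtend hT0 (Φ^[n] y) u| :=
          hΦ _ _ t ht
      _ ≤ A * ∫ u in (0:ℝ)..t, (A ^ n * u ^ n / n.factorial * dist x y) := by
          refine mul_le_mul_of_nonneg_left ?_ hA0
          refine intervalIntegral.integral_mono_on ht.1 ?_ ?_
            fun u hu => ih x y u ⟨hu.1, le_trans hu.2 ht.2⟩
          · exact (((Φ^[n] x).continuous.Icc_extend'.sub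
              (Φ^[n] y).continuous.Icc_extend').abs).intervalIntegrable _ _
          · apply Continuous.intervalIntegrable; fun_prop
      _ = A ^ (n + 1) * t ^ (n + 1) / (n + 1).factorial * dist x y := by
          rw [show (fun u => A ^ n * u ^ n / n.factorial * dist x y)
            = fun u => (A ^ n / n.factorial * dist x y) * u ^ n from funext fun u => by ring]
          rw [intervalIntegral.integral_const_mul, integral_pow, Nat.factorial_succ]
          push_cast
          field_simp
          ring
end Stmt1Aux2

/-- The integral equation
`x_t = H₁(∫₀ᵗ k(x_s) ds) + ∫₀ᵗ H₂(∫ₛᵗ k(x_u) du) ds + ∫₀ᵗ H₃(x_s)·H₄(∫ₛᵗ k(x_u) du) ds`. -/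
def IntegralEq1 (k H1 H2 H3 H4 : ℝ → ℝ) (T : ℝ) (x : ℝ → ℝ) : Prop :=
  ∀ t ∈ Set.Icc (0 : ℝ) T,
    x t = H1 (∫ u in (0 : ℝ)..t, k (x u))
      + ∫ s in (0 : ℝ)..t, H2 (∫ u in s..t, k (x u))
      + ∫ s in (0 : ℝ)..t, H3 (x s) * H4 (∫ u in s..t, k (x u))

theorem stmt1 (T : ℝ) (hT : 0 < T) (k H1 H2 H3 H4 : ℝ → ℝ)
    (hk_lip : ∃ K : NNReal, LipschitzWith K k) (hk_bdd : ∃ M : ℝ, ∀ y, |k y| ≤ M)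
    (h1_lip : ∃ K : NNReal, LipschitzWith K H1) (h1_bdd : ∃ M : ℝ, ∀ y, |H1 y| ≤ M)
    (h2_lip : ∃ K : NNReal, LipschitzWith K H2) (h2_bdd : ∃ M : ℝ, ∀ y, |H2 y| ≤ M)
    (h3_lip : ∃ K : NNReal, LipschitzWith K H3) (h3_bdd : ∃ M : ℝ, ∀ y, |H3 y| ≤ M)
    (h4_lip : ∃ K : NNReal, LipschitzWith K H4) (h4_bdd : ∃ M : ℝ, ∀ y, |H4 y| ≤ M) :
    (∃ x : ℝ → ℝ, ContinuousOn x (Set.Icc 0 T) ∧ IntegralEq1 k H1 H2 H3 H4 T x) ∧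
    (∀ x y : ℝ → ℝ, ContinuousOn x (Set.Icc 0 T) → IntegralEq1 k H1 H2 H3 H4 T x →
      ContinuousOn y (Set.Icc 0 T) → IntegralEq1 k H1 H2 H3 H4 T y →
      Set.EqOn x y (Set.Icc 0 T)) := by
  clear hk_bdd h1_bdd h2_bdd
  obtain ⟨Lk, hk⟩ := hk_lip
  obtain ⟨L1, h1⟩ := h1_lip
  obtain ⟨L2, h2⟩ := h2_lip
  obtain ⟨L3, h3⟩ := h3_lip
  obtain ⟨L4, h4⟩ := h4_lip
  obtain ⟨M3, hM3⟩ := h3_bdd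
  obtain ⟨M4, hM4⟩ := h4_bdd
  have hM30 : 0 ≤ M3 := le_trans (abs_nonneg _) (hM3 0)
  have hM40 : 0 ≤ M4 := le_trans (abs_nonneg _) (hM4 0)
  have hT0 : (0:ℝ) ≤ T := hT.le
  set A : ℝ := L1 * Lk + 2 * L2 * Lk * T + M4 * L3 * T + 2 * M3 * L4 * Lk * T ^ 2 with hAdef
  have hA0 : 0 ≤ A := by positivity
  set E : C(Icc (0:ℝ) T, ℝ) → ℝ → ℝ := fun x => IccExtend hT0 x with hEdef
  have hEcont : ∀ x, Continuous (E x) := fun x => x.continuous.Icc_extend'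
  have hEeq : ∀ (x : C(Icc (0:ℝ) T, ℝ)) {t : ℝ} (ht : t ∈ Icc (0:ℝ) T),
      E x t = x ⟨t, ht⟩ := fun x _ ht => IccExtend_of_mem hT0 x ht
  set Φ : C(Icc (0:ℝ) T, ℝ) → C(Icc (0:ℝ) T, ℝ) := fun x =>
    ⟨fun p => Stmt1Aux.rhs k H1 H2 H3 H4 (E x) p.1,
      (Stmt1Aux.rhs_cont k H1 H2 H3 H4 hk.continuous h1.continuous h2.continuous
        h3.continuous h4.continuous (hEcont x)).comp continuous_subtype_val⟩ with hΦdef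
  have hEΦ : ∀ (x : C(Icc (0:ℝ) T, ℝ)) {t : ℝ}, t ∈ Icc (0:ℝ) T →
      E (Φ x) t = Stmt1Aux.rhs k H1 H2 H3 H4 (E x) t := fun x t ht => hEeq (Φ x) ht
  have hΦkey : ∀ x y : C(Icc (0:ℝ) T, ℝ), ∀ t ∈ Icc (0:ℝ) T,
      |IccExtend hT0 (Φ x) t - IccExtend hT0 (Φ y) t|
        ≤ A * ∫ u in (0:ℝ)..t, |IccExtend hT0 x u - IccExtend hT0 y u| := by
    intro x y t ht
    have hx := hEeq
    show |E (Φ x) t - E (Φ y) t| ≤ A * ∫ u in (0:ℝ)..t, |E x u - E y u|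
    rw [hEΦ x ht, hEΦ y ht]
    exact Stmt1Aux.key k H1 H2 H3 H4 hk h1 h2 h3 h4 hM3 hM4 (hEcont x) (hEcont y) ht
  have hiter := Stmt1Aux2.iter_bound hT0 hA0 Φ hΦkey
  -- choose `n` making the `n`-th iterate a contraction
  obtain ⟨n, hn⟩ : ∃ n : ℕ, A ^ n * T ^ n / n.factorial < 1 := by
    have h := FloorSemiring.tendsto_pow_div_factorial_atTop (A * T)
    have h2 := h.eventually (gt_mem_nhds (by norm_num : (0:ℝ) < 1))
    obtain ⟨n, hn⟩ := h2.exists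
    exact ⟨n, by rwa [mul_pow] at hn⟩
  have hc0 : 0 ≤ A ^ n * T ^ n / n.factorial := by positivity
  set K : NNReal := ⟨A ^ n * T ^ n / n.factorial, hc0⟩ with hKdef
  have hlip : ∀ x y : C(Icc (0:ℝ) T, ℝ), dist (Φ^[n] x) (Φ^[n] y) ≤ K * dist x y := by
    intro x y
    rw [ContinuousMap.dist_le (by positivity)]
    intro p
    rw [Real.dist_eq, ← hEeq (Φ^[n] x) p.2, ← hEeq (Φ^[n] y) p.2]
    refine le_trans (hiter n x y p.1 p.2) ?_
    have : A ^ n * (p : ℝ) ^ n / n.factorial ≤ A ^ n * T ^ n / n.factorial := by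
      gcongr
      exacts [p.2.1, p.2.2]
    exact mul_le_mul_of_nonneg_right this dist_nonneg
  have hcontr : ContractingWith K (Φ^[n]) := by
    refine ⟨?_, LipschitzWith.of_dist_le_mul hlip⟩
    rw [← NNReal.coe_lt_coe]
    exact hn
  set z : C(Icc (0:ℝ) T, ℝ) := hcontr.fixedPoint (Φ^[n]) with hzdef
  have hfix : Function.IsFixedPt Φ z := hcontr.isFixedPt_fixedPoint_iterate
  have huniq : ∀ u w : C(Icc (0:ℝ) T, ℝ), Function.IsFixedPt Φ u →
      Function.IsFixedPt Φ w → u = w := fun u w hu hw =>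
    hcontr.fixedPoint_unique' (hu.iterate n) (hw.iterate n)
  -- a continuous solution restricted to `Icc 0 T` is a fixed point of `Φ`
  have hsol_fix : ∀ x : ℝ → ℝ, ContinuousOn x (Icc 0 T) → IntegralEq1 k H1 H2 H3 H4 T x →
      ∀ hx : Continuous ((Icc (0:ℝ) T).restrict x),
        Function.IsFixedPt Φ (⟨(Icc (0:ℝ) T).restrict x, hx⟩ : C(Icc (0:ℝ) T, ℝ)) := by
    intro x hxc hxs hx
    set x' : C(Icc (0:ℝ) T, ℝ) := ⟨(Icc (0:ℝ) T).restrict x, hx⟩ with hx'def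
    have hEx' : EqOn (E x') x (Icc 0 T) := fun u hu => hEeq x' hu
    refine ContinuousMap.ext fun p => ?_
    show Stmt1Aux.rhs k H1 H2 H3 H4 (E x') p.1 = x p.1
    rw [Stmt1Aux.rhs_congr k H1 H2 H3 H4 hEx' p.2]
    exact (hxs p.1 p.2).symm
  constructor
  · refine ⟨E z, (hEcont z).continuousOn, ?_⟩
    intro t ht
    have h := hEΦ z ht
    rw [hfix] at h
    exact h
  · intro x y hxc hxs hyc hys
    have hx : Continuous ((Icc (0:ℝ) T).restrict x) := hxc.restrict
    have hy : Continuous ((Icc (0:ℝ) T).restrict y) := hyc.restrict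
    have hxy := huniq _ _ (hsol_fix x hxc hxs hx) (hsol_fix y hyc hys hy)
    intro t ht
    have := congrFun (congrArg (fun f : C(Icc (0:ℝ) T, ℝ) => (f : Icc (0:ℝ) T → ℝ)) hxy)
      ⟨t, ht⟩
    exact this
end

section
/- Fix T > 0. Let k, H₁, H₂, H₃, H₄, H₅ : ℝ → ℝ be Lipschitz continuous functions, and assume in addition that H₄ and H₅ are bounded. Then the integral equation x_t = H₁(S(0,t)) + ∫₀ᵗ H₂(S(s,t)) ds + ∫₀ᵗ H₃(x_s)·H₅(x_s)·H₄(S(s,t)) ds, where S(s,t) = ∫ₛᵗ k(x_u) du, for t ∈ [0,T] (so that in particular x₀ = H₁(0)), has a unique solution in the space C([0,T], ℝ) of continuous real-valued functions on [0,T]. -/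
open MeasureTheory Set

/-- The integral equation
`x_t = H₁(S(0,t)) + ∫₀ᵗ H₂(S(s,t)) ds + ∫₀ᵗ H₃(x_s)·H₅(x_s)·H₄(S(s,t)) ds`
with `S(s,t) = ∫ₛᵗ k(x_u) du`. -/
def IntegralEq2 (k H1 H2 H3 H4 H5 : ℝ → ℝ) (T : ℝ) (x : ℝ → ℝ) : Prop :=
  ∀ t ∈ Set.Icc (0 : ℝ) T,
    x t = H1 (∫ u in (0 : ℝ)..t, k (x u))
      + ∫ s in (0 : ℝ)..t, H2 (∫ u in s..t, k (x u))
      + ∫ s in (0 : ℝ)..t, H3 (x s) * H5 (x s) * H4 (∫ u in s..t, k (x u))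

namespace IE2Aux

/-- All data and hypotheses bundled. -/
structure Data where
  T : ℝ
  k : ℝ → ℝ
  H1 : ℝ → ℝ
  H2 : ℝ → ℝ
  H3 : ℝ → ℝ
  H4 : ℝ → ℝ
  H5 : ℝ → ℝ
  K : ℝ
  L1 : ℝ
  L2 : ℝ
  L3 : ℝ
  L4 : ℝ
  L5 : ℝ
  M4 : ℝ
  M5 : ℝ
  hT : 0 < T
  hK : 0 ≤ K
  hL1 : 0 ≤ L1
  hL2 : 0 ≤ L2
  hL3 : 0 ≤ L3
  hL4 : 0 ≤ L4
  hL5 : 0 ≤ L5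
  hM4 : 0 ≤ M4
  hM5 : 0 ≤ M5
  hkc : Continuous k
  h1c : Continuous H1
  h2c : Continuous H2
  h3c : Continuous H3
  h4c : Continuous H4
  h5c : Continuous H5
  hk : ∀ a b, |k a - k b| ≤ K * |a - b|
  h1 : ∀ a b, |H1 a - H1 b| ≤ L1 * |a - b|
  h2 : ∀ a b, |H2 a - H2 b| ≤ L2 * |a - b|
  h3 : ∀ a b, |H3 a - H3 b| ≤ L3 * |a - b|
  h4 : ∀ a b, |H4 a - H4 b| ≤ L4 * |a - b|
  h5 : ∀ a b, |H5 a - H5 b| ≤ L5 * |a - b|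
  hb4 : ∀ y, |H4 y| ≤ M4
  hb5 : ∀ y, |H5 y| ≤ M5

namespace Data

variable (D : Data)

/-- The Picard map. -/
noncomputable def Phi (f : ℝ → ℝ) : ℝ → ℝ := fun t =>
  D.H1 (∫ u in (0 : ℝ)..t, D.k (f u))
    + ∫ s in (0 : ℝ)..t, D.H2 (∫ u in s..t, D.k (f u))
    + ∫ s in (0 : ℝ)..t, D.H3 (f s) * D.H5 (f s) * D.H4 (∫ u in s..t, D.k (f u))

lemma integralEq2_iff (x : ℝ → ℝ) :
    IntegralEq2 D.k D.H1 D.H2 D.H3 D.H4 D.H5 D.T x ↔ ∀ t ∈ Set.Icc (0:ℝ) D.T, x t = D.Phi x t :=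
  Iff.rfl

/-- simple abs bound from Lipschitz -/
lemma lip_abs {F : ℝ → ℝ} {L : ℝ} (h : ∀ a b, |F a - F b| ≤ L * |a - b|) (y : ℝ) :
    |F y| ≤ |F 0| + L * |y| := by
  have := h y 0
  rw [sub_zero] at this
  calc |F y| = |F 0 + (F y - F 0)| := by ring_nf
    _ ≤ |F 0| + |F y - F 0| := abs_add_le _ _
    _ ≤ |F 0| + L * |y| := by linarith

/-- three-factor product bound -/
lemma prod3 {a1 a2 b1 b2 c1 c2 A B C Da Db Dc : ℝ}
    (ha2 : |a2| ≤ A) (hb1 : |b1| ≤ B) (hb2 : |b2| ≤ B) (hc1 : |c1| ≤ C)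
    (hda : |a1 - a2| ≤ Da) (hdb : |b1 - b2| ≤ Db) (hdc : |c1 - c2| ≤ Dc) :
    |a1 * b1 * c1 - a2 * b2 * c2| ≤ Da * (B * C) + A * (Db * C) + A * (B * Dc) := by
  have hB : (0:ℝ) ≤ B := le_trans (abs_nonneg _) hb1
  have hC : (0:ℝ) ≤ C := le_trans (abs_nonneg _) hc1
  have hA : (0:ℝ) ≤ A := le_trans (abs_nonneg _) ha2
  have key : a1 * b1 * c1 - a2 * b2 * c2
      = (a1 - a2) * b1 * c1 + a2 * (b1 - b2) * c1 + a2 * b2 * (c1 - c2) := by ring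
  rw [key]
  have hDa : (0:ℝ) ≤ Da := le_trans (abs_nonneg _) hda
  have hDb : (0:ℝ) ≤ Db := le_trans (abs_nonneg _) hdb
  have t1 : |(a1 - a2) * b1 * c1| ≤ Da * (B * C) := by
    rw [abs_mul, abs_mul]
    calc |a1 - a2| * |b1| * |c1|
        ≤ Da * B * C :=
          mul_le_mul (mul_le_mul hda hb1 (abs_nonneg _) hDa) hc1 (abs_nonneg _)
            (mul_nonneg hDa hB)
      _ = Da * (B * C) := by ring
  have t2 : |a2 * (b1 - b2) * c1| ≤ A * (Db * C) := by
    rw [abs_mul, abs_mul]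
    calc |a2| * |b1 - b2| * |c1|
        ≤ A * Db * C :=
          mul_le_mul (mul_le_mul ha2 hdb (abs_nonneg _) hA) hc1 (abs_nonneg _)
            (mul_nonneg hA hDb)
      _ = A * (Db * C) := by ring
  have t3 : |a2 * b2 * (c1 - c2)| ≤ A * (B * Dc) := by
    rw [abs_mul, abs_mul]
    calc |a2| * |b2| * |c1 - c2|
        ≤ A * B * Dc :=
          mul_le_mul (mul_le_mul ha2 hb2 (abs_nonneg _) hA) hdc (abs_nonneg _)
            (mul_nonneg hA hB)
      _ = A * (B * Dc) := by ring
  calc |(a1 - a2) * b1 * c1 + a2 * (b1 - b2) * c1 + a2 * b2 * (c1 - c2)|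
      ≤ |(a1 - a2) * b1 * c1 + a2 * (b1 - b2) * c1| + |a2 * b2 * (c1 - c2)| := abs_add_le _ _
    _ ≤ |(a1 - a2) * b1 * c1| + |a2 * (b1 - b2) * c1| + |a2 * b2 * (c1 - c2)| := by
        have := abs_add_le ((a1 - a2) * b1 * c1) (a2 * (b1 - b2) * c1); linarith
    _ ≤ Da * (B * C) + A * (Db * C) + A * (B * Dc) := by linarith

/-- dropping an initial piece of an integral of a nonneg function -/
lemma integral_tail_le {h : ℝ → ℝ} (hh : Continuous h) (hnn : ∀ u, 0 ≤ h u)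
    {s t : ℝ} (h0s : 0 ≤ s) (hst : s ≤ t) :
    (∫ u in s..t, h u) ≤ ∫ u in (0:ℝ)..t, h u := by
  rw [← intervalIntegral.integral_add_adjacent_intervals
    (hh.intervalIntegrable 0 s) (hh.intervalIntegrable s t)]
  have : (0:ℝ) ≤ ∫ u in (0:ℝ)..s, h u :=
    intervalIntegral.integral_nonneg h0s (fun u _ => hnn u)
  linarith

lemma S_diff {f g : ℝ → ℝ} (hf : Continuous f) (hg : Continuous g)
    {s t : ℝ} (h0s : 0 ≤ s) (hst : s ≤ t) :
    |(∫ u in s..t, D.k (f u)) - ∫ u in s..t, D.k (g u)|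
      ≤ D.K * ∫ u in (0:ℝ)..t, |f u - g u| := by
  have hkf : Continuous fun u => D.k (f u) := D.hkc.comp hf
  have hkg : Continuous fun u => D.k (g u) := D.hkc.comp hg
  have hfg : Continuous fun u => D.K * |f u - g u| :=
    continuous_const.mul (hf.sub hg).abs
  rw [← intervalIntegral.integral_sub (hkf.intervalIntegrable s t) (hkg.intervalIntegrable s t)]
  calc |∫ u in s..t, (D.k (f u) - D.k (g u))|
      ≤ ∫ u in s..t, |D.k (f u) - D.k (g u)| :=
        intervalIntegral.abs_integral_le_integral_abs hst
    _ ≤ ∫ u in s..t, D.K * |f u - g u| := by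
        apply intervalIntegral.integral_mono_on hst
          ((hkf.sub hkg).abs.intervalIntegrable s t) (hfg.intervalIntegrable s t)
        intro u _
        exact D.hk _ _
    _ ≤ ∫ u in (0:ℝ)..t, D.K * |f u - g u| :=
        integral_tail_le hfg (fun u => mul_nonneg D.hK (abs_nonneg _)) h0s hst
    _ = D.K * ∫ u in (0:ℝ)..t, |f u - g u| := intervalIntegral.integral_const_mul _ _

lemma S_bound {f : ℝ → ℝ} (hf : Continuous f)
    {s t : ℝ} (h0s : 0 ≤ s) (hst : s ≤ t) (htT : t ≤ D.T) :
    |∫ u in s..t, D.k (f u)| ≤ |D.k 0| * D.T + D.K * ∫ u in (0:ℝ)..t, |f u| := by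
  have hkf : Continuous fun u => D.k (f u) := D.hkc.comp hf
  have hbnd : Continuous fun u => |D.k 0| + D.K * |f u| :=
    continuous_const.add (continuous_const.mul hf.abs)
  have h0t : (0:ℝ) ≤ t := le_trans h0s hst
  calc |∫ u in s..t, D.k (f u)|
      ≤ ∫ u in s..t, |D.k (f u)| := intervalIntegral.abs_integral_le_integral_abs hst
    _ ≤ ∫ u in (0:ℝ)..t, |D.k (f u)| :=
        integral_tail_le hkf.abs (fun u => abs_nonneg _) h0s hst
    _ ≤ ∫ u in (0:ℝ)..t, (|D.k 0| + D.K * |f u|) := by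
        apply intervalIntegral.integral_mono_on h0t
          (hkf.abs.intervalIntegrable 0 t) (hbnd.intervalIntegrable 0 t)
        intro u _
        exact lip_abs D.hk (f u)
    _ = |D.k 0| * t + D.K * ∫ u in (0:ℝ)..t, |f u| := by
        rw [intervalIntegral.integral_add (continuous_const.intervalIntegrable 0 t)
          ((continuous_const.mul hf.abs).intervalIntegrable 0 t) (g := fun u => D.K * |f u|),
          intervalIntegral.integral_const, intervalIntegral.integral_const_mul]
        simp [smul_eq_mul, mul_comm]
    _ ≤ |D.k 0| * D.T + D.K * ∫ u in (0:ℝ)..t, |f u| := by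
        have : (0:ℝ) ≤ ∫ u in (0:ℝ)..t, |f u| :=
          intervalIntegral.integral_nonneg h0t (fun u _ => abs_nonneg _)
        have := mul_le_mul_of_nonneg_left htT (abs_nonneg (D.k 0))
        linarith

lemma inner_cont {f : ℝ → ℝ} (hf : Continuous f) (t : ℝ) :
    Continuous fun s => ∫ u in s..t, D.k (f u) := by
  have hkf : Continuous fun u => D.k (f u) := D.hkc.comp hf
  have h1 : Continuous fun s => ∫ u in t..s, D.k (f u) :=
    intervalIntegral.continuous_primitive (fun a b => hkf.intervalIntegrable a b) t
  have : (fun s => ∫ u in s..t, D.k (f u)) = fun s => -∫ u in t..s, D.k (f u) := by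
    funext s; rw [intervalIntegral.integral_symm]
  rw [this]; exact h1.neg

lemma phi_eq {f : ℝ → ℝ} (hf : Continuous f) (t : ℝ) :
    D.Phi f t = D.H1 (∫ u in (0:ℝ)..t, D.k (f u))
      + (∫ s in (0:ℝ)..t, D.H2 (∫ u in s..t, D.k (f u)))
      + t * ∫ s in (0:ℝ)..t, D.H3 (f s) * D.H5 (f s) * D.H4 (∫ u in s..t, D.k (f u)) := by
  have hint : IntervalIntegrable (fun s => D.H2 (∫ u in s..t, D.k (f u)))
      MeasureTheory.volume 0 t := (D.h2c.comp (inner_cont D hf t)).intervalIntegrable 0 t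
  unfold Phi
  rw [intervalIntegral.integral_add hint (intervalIntegrable_const), intervalIntegral.integral_const,
    smul_eq_mul, sub_zero]
  ring

lemma phi_cont {f : ℝ → ℝ} (hf : Continuous f) : Continuous (D.Phi f) := by
  have hkf : Continuous fun u => D.k (f u) := D.hkc.comp hf
  have hG : Continuous fun t => ∫ u in (0:ℝ)..t, D.k (f u) :=
    intervalIntegral.continuous_primitive (fun a b => hkf.intervalIntegrable a b) 0
  have hS : ∀ s t : ℝ, (∫ u in s..t, D.k (f u))
      = (∫ u in (0:ℝ)..t, D.k (f u)) - ∫ u in (0:ℝ)..s, D.k (f u) := fun s t =>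
    (intervalIntegral.integral_interval_sub_left (hkf.intervalIntegrable 0 t)
      (hkf.intervalIntegrable 0 s)).symm
  have hSc : Continuous fun p : ℝ × ℝ => ∫ u in p.2..p.1, D.k (f u) := by
    have heq : (fun p : ℝ × ℝ => ∫ u in p.2..p.1, D.k (f u))
        = fun p => (∫ u in (0:ℝ)..p.1, D.k (f u)) - ∫ u in (0:ℝ)..p.2, D.k (f u) :=
      funext fun p => hS p.2 p.1
    rw [heq]; exact (hG.comp continuous_fst).sub (hG.comp continuous_snd)
  have hQ : Continuous fun t =>
      ∫ s in (0:ℝ)..t, D.H3 (f s) * D.H5 (f s) * D.H4 (∫ u in s..t, D.k (f u)) := by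
    refine intervalIntegral.continuous_parametric_intervalIntegral_of_continuous ?_ continuous_id
    show Continuous fun p : ℝ × ℝ =>
      D.H3 (f p.2) * D.H5 (f p.2) * D.H4 (∫ u in p.2..p.1, D.k (f u))
    exact ((D.h3c.comp (hf.comp continuous_snd)).mul
      (D.h5c.comp (hf.comp continuous_snd))).mul (D.h4c.comp hSc)
  unfold Phi
  refine (D.h1c.comp hG).add ?_
  refine intervalIntegral.continuous_parametric_intervalIntegral_of_continuous ?_ continuous_id
  show Continuous fun p : ℝ × ℝ => D.H2 (∫ u in p.2..p.1, D.k (f u))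
    + ∫ s in (0:ℝ)..p.1, D.H3 (f s) * D.H5 (f s) * D.H4 (∫ u in s..p.1, D.k (f u))
  exact (D.h2c.comp hSc).add (hQ.comp continuous_fst)

lemma phi_congr {f g : ℝ → ℝ} (h : Set.EqOn f g (Set.Icc 0 D.T))
    {t : ℝ} (ht : t ∈ Set.Icc (0:ℝ) D.T) : D.Phi f t = D.Phi g t := by
  have hIcc : Set.uIcc (0:ℝ) D.T = Set.Icc (0:ℝ) D.T := Set.uIcc_of_le D.hT.le
  have hsub : ∀ {s : ℝ}, s ∈ Set.Icc (0:ℝ) D.T → Set.uIcc s t ⊆ Set.Icc (0:ℝ) D.T := by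
    intro s hs
    rw [← hIcc]
    exact Set.uIcc_subset_uIcc (hIcc ▸ hs) (hIcc ▸ ht)
  have h0T : (0:ℝ) ∈ Set.Icc (0:ℝ) D.T := ⟨le_refl _, D.hT.le⟩
  have hmem : ∀ {s : ℝ}, s ∈ Set.uIcc (0:ℝ) t → s ∈ Set.Icc (0:ℝ) D.T := by
    intro s hs
    exact hsub h0T hs
  have hS : ∀ s ∈ Set.Icc (0:ℝ) D.T,
      (∫ u in s..t, D.k (f u)) = ∫ u in s..t, D.k (g u) := by
    intro s hs
    apply intervalIntegral.integral_congr
    intro u hu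
    exact congrArg D.k (h (hsub hs hu))
  unfold Phi
  rw [hS 0 h0T]
  congr 1
  apply intervalIntegral.integral_congr
  intro s hs
  beta_reduce
  have hsI := hmem hs
  rw [hS s hsI]
  congr 1
  apply intervalIntegral.integral_congr
  intro s' hs'
  beta_reduce
  have hs'I := hmem hs'
  rw [hS s' hs'I, h hs'I]

noncomputable def Abnd : ℝ := |D.H1 0| + D.L1 * (|D.k 0| * D.T)
  + (|D.H2 0| + D.L2 * (|D.k 0| * D.T)) * D.T + D.T * ((|D.H3 0| * (D.M5 * D.M4)) * D.T)

noncomputable def Bbnd : ℝ := D.L1 * D.K + D.L2 * D.K * D.T + D.T * (D.L3 * (D.M5 * D.M4))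

lemma Abnd_nonneg : 0 ≤ D.Abnd :=
  add_nonneg (add_nonneg (add_nonneg (abs_nonneg _)
    (mul_nonneg D.hL1 (mul_nonneg (abs_nonneg _) D.hT.le)))
    (mul_nonneg (add_nonneg (abs_nonneg _)
      (mul_nonneg D.hL2 (mul_nonneg (abs_nonneg _) D.hT.le))) D.hT.le))
    (mul_nonneg D.hT.le (mul_nonneg (mul_nonneg (abs_nonneg _)
      (mul_nonneg D.hM5 D.hM4)) D.hT.le))

lemma Bbnd_nonneg : 0 ≤ D.Bbnd :=
  add_nonneg (add_nonneg (mul_nonneg D.hL1 D.hK)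
    (mul_nonneg (mul_nonneg D.hL2 D.hK) D.hT.le))
    (mul_nonneg D.hT.le (mul_nonneg D.hL3 (mul_nonneg D.hM5 D.hM4)))

lemma phi_growth {f : ℝ → ℝ} (hf : Continuous f) {t : ℝ} (ht : t ∈ Set.Icc (0:ℝ) D.T) :
    |D.Phi f t| ≤ D.Abnd + D.Bbnd * ∫ s in (0:ℝ)..t, |f s| := by
  obtain ⟨ht0, htT⟩ := ht
  set I0 := ∫ s in (0:ℝ)..t, |f s| with hI0def
  have hI0 : 0 ≤ I0 :=
    intervalIntegral.integral_nonneg ht0 (fun s _ => abs_nonneg _)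
  have hSb : ∀ s, 0 ≤ s → s ≤ t →
      |∫ u in s..t, D.k (f u)| ≤ |D.k 0| * D.T + D.K * I0 :=
    fun s h1 h2 => D.S_bound hf h1 h2 htT
  have hs0 : (0:ℝ) ≤ |D.k 0| * D.T + D.K * I0 :=
    add_nonneg (mul_nonneg (abs_nonneg _) D.hT.le) (mul_nonneg D.hK hI0)
  -- term 1
  have g1 : |D.H1 (∫ u in (0:ℝ)..t, D.k (f u))|
      ≤ |D.H1 0| + D.L1 * (|D.k 0| * D.T + D.K * I0) := by
    refine (lip_abs D.h1 _).trans ?_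
    have h := mul_le_mul_of_nonneg_left (hSb 0 le_rfl ht0) D.hL1
    linarith
  -- term 2
  have g2 : |∫ s in (0:ℝ)..t, D.H2 (∫ u in s..t, D.k (f u))|
      ≤ (|D.H2 0| + D.L2 * (|D.k 0| * D.T + D.K * I0)) * D.T := by
    have hc : ∀ s ∈ Set.uIoc (0:ℝ) t, ‖D.H2 (∫ u in s..t, D.k (f u))‖
        ≤ |D.H2 0| + D.L2 * (|D.k 0| * D.T + D.K * I0) := by
      intro s hs
      rw [Set.uIoc_of_le ht0] at hs
      rw [Real.norm_eq_abs]
      refine (lip_abs D.h2 _).trans ?_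
      have h := mul_le_mul_of_nonneg_left (hSb s hs.1.le hs.2) D.hL2
      linarith
    have h := intervalIntegral.norm_integral_le_of_norm_le_const hc
    rw [Real.norm_eq_abs, sub_zero, abs_of_nonneg ht0] at h
    refine h.trans ?_
    exact mul_le_mul_of_nonneg_left htT
      (add_nonneg (abs_nonneg _) (mul_nonneg D.hL2 hs0))
  -- term 3
  have g3 : |t * ∫ s in (0:ℝ)..t, D.H3 (f s) * D.H5 (f s) * D.H4 (∫ u in s..t, D.k (f u))|
      ≤ D.T * ((|D.H3 0| * (D.M5 * D.M4)) * D.T + D.L3 * (D.M5 * D.M4) * I0) := by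
    rw [abs_mul]
    have hqint : IntervalIntegrable
        (fun s => |D.H3 (f s) * D.H5 (f s) * D.H4 (∫ u in s..t, D.k (f u))|)
        MeasureTheory.volume 0 t :=
      (((D.h3c.comp hf).mul (D.h5c.comp hf)).mul
        (D.h4c.comp (inner_cont D hf t))).abs.intervalIntegrable 0 t
    have hbint : IntervalIntegrable
        (fun s => |D.H3 0| * (D.M5 * D.M4) + D.L3 * (D.M5 * D.M4) * |f s|)
        MeasureTheory.volume 0 t :=
      (continuous_const.add (continuous_const.mul hf.abs)).intervalIntegrable 0 t
    have hq : ∀ s ∈ Set.Icc (0:ℝ) t,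
        |D.H3 (f s) * D.H5 (f s) * D.H4 (∫ u in s..t, D.k (f u))|
        ≤ |D.H3 0| * (D.M5 * D.M4) + D.L3 * (D.M5 * D.M4) * |f s| := by
      intro s _
      rw [abs_mul, abs_mul]
      have h3b : |D.H3 (f s)| ≤ |D.H3 0| + D.L3 * |f s| := lip_abs D.h3 _
      have hA0 : (0:ℝ) ≤ |D.H3 0| + D.L3 * |f s| :=
        add_nonneg (abs_nonneg _) (mul_nonneg D.hL3 (abs_nonneg _))
    
      have step1 : |D.H3 (f s)| * |D.H5 (f s)| ≤ (|D.H3 0| + D.L3 * |f s|) * D.M5 :=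
        mul_le_mul h3b (D.hb5 _) (abs_nonneg _) hA0
      have step2 : |D.H3 (f s)| * |D.H5 (f s)| * |D.H4 (∫ u in s..t, D.k (f u))|
          ≤ (|D.H3 0| + D.L3 * |f s|) * D.M5 * D.M4 :=
        mul_le_mul step1 (D.hb4 _) (abs_nonneg _) (mul_nonneg hA0 D.hM5)
      have e : (|D.H3 0| + D.L3 * |f s|) * D.M5 * D.M4
          = |D.H3 0| * (D.M5 * D.M4) + D.L3 * (D.M5 * D.M4) * |f s| := by ring
      linarith
    have hQ : |∫ s in (0:ℝ)..t, D.H3 (f s) * D.H5 (f s) * D.H4 (∫ u in s..t, D.k (f u))|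
        ≤ (|D.H3 0| * (D.M5 * D.M4)) * D.T + D.L3 * (D.M5 * D.M4) * I0 := by
      calc |∫ s in (0:ℝ)..t, D.H3 (f s) * D.H5 (f s) * D.H4 (∫ u in s..t, D.k (f u))|
          ≤ ∫ s in (0:ℝ)..t, |D.H3 (f s) * D.H5 (f s) * D.H4 (∫ u in s..t, D.k (f u))| :=
            intervalIntegral.abs_integral_le_integral_abs ht0
        _ ≤ ∫ s in (0:ℝ)..t, (|D.H3 0| * (D.M5 * D.M4) + D.L3 * (D.M5 * D.M4) * |f s|) :=
            intervalIntegral.integral_mono_on ht0 hqint hbint hq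
        _ = (|D.H3 0| * (D.M5 * D.M4)) * t + D.L3 * (D.M5 * D.M4) * I0 := by
            rw [intervalIntegral.integral_add (continuous_const.intervalIntegrable 0 t)
              ((continuous_const.mul hf.abs).intervalIntegrable 0 t)
              (g := fun s => D.L3 * (D.M5 * D.M4) * |f s|),
              intervalIntegral.integral_const, intervalIntegral.integral_const_mul]
            rw [hI0def]; simp [smul_eq_mul]; ring
        _ ≤ (|D.H3 0| * (D.M5 * D.M4)) * D.T + D.L3 * (D.M5 * D.M4) * I0 := by
            have := mul_le_mul_of_nonneg_left htT
              (mul_nonneg (abs_nonneg (D.H3 0)) (mul_nonneg D.hM5 D.hM4))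
            linarith
    have haT : |t| ≤ D.T := by rw [abs_of_nonneg ht0]; exact htT
    exact mul_le_mul haT hQ (abs_nonneg _) D.hT.le
  -- combine
  rw [phi_eq D hf t]
  have e : D.Abnd + D.Bbnd * I0
      = (|D.H1 0| + D.L1 * (|D.k 0| * D.T + D.K * I0))
        + (|D.H2 0| + D.L2 * (|D.k 0| * D.T + D.K * I0)) * D.T
        + D.T * ((|D.H3 0| * (D.M5 * D.M4)) * D.T + D.L3 * (D.M5 * D.M4) * I0) := by
    unfold Abnd Bbnd; ring
  rw [e]
  have h1 := abs_add_le (D.H1 (∫ u in (0:ℝ)..t, D.k (f u))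
      + ∫ s in (0:ℝ)..t, D.H2 (∫ u in s..t, D.k (f u)))
    (t * ∫ s in (0:ℝ)..t, D.H3 (f s) * D.H5 (f s) * D.H4 (∫ u in s..t, D.k (f u)))
  have h2 := abs_add_le (D.H1 (∫ u in (0:ℝ)..t, D.k (f u)))
    (∫ s in (0:ℝ)..t, D.H2 (∫ u in s..t, D.k (f u)))
  linarith

noncomputable def CC (R : ℝ) : ℝ :=
  D.L1 * D.K + D.L2 * D.K * D.T
    + D.T * (D.L3 * (D.M5 * D.M4) + (|D.H3 0| + D.L3 * R) * (D.L5 * D.M4)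
      + (|D.H3 0| + D.L3 * R) * (D.M5 * (D.L4 * D.K)) * D.T)

lemma CC_nonneg {R : ℝ} (hR : 0 ≤ R) : 0 ≤ D.CC R := by
  have h0 : (0:ℝ) ≤ |D.H3 0| + D.L3 * R := add_nonneg (abs_nonneg _) (mul_nonneg D.hL3 hR)
  exact add_nonneg (add_nonneg (mul_nonneg D.hL1 D.hK)
    (mul_nonneg (mul_nonneg D.hL2 D.hK) D.hT.le))
    (mul_nonneg D.hT.le (add_nonneg (add_nonneg
      (mul_nonneg D.hL3 (mul_nonneg D.hM5 D.hM4))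
      (mul_nonneg h0 (mul_nonneg D.hL5 D.hM4)))
      (mul_nonneg (mul_nonneg h0 (mul_nonneg D.hM5 (mul_nonneg D.hL4 D.hK))) D.hT.le)))

lemma phi_lip {f g : ℝ → ℝ} (hf : Continuous f) (hg : Continuous g) {R : ℝ}
    (hfR : ∀ s ∈ Set.Icc (0:ℝ) D.T, |f s| ≤ R) (hgR : ∀ s ∈ Set.Icc (0:ℝ) D.T, |g s| ≤ R)
    {t : ℝ} (ht : t ∈ Set.Icc (0:ℝ) D.T) :
    |D.Phi f t - D.Phi g t| ≤ D.CC R * ∫ s in (0:ℝ)..t, |f s - g s| := by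
  obtain ⟨ht0, htT⟩ := ht
  have hR0 : 0 ≤ R := le_trans (abs_nonneg _) (hfR 0 ⟨le_refl _, D.hT.le⟩)
  set I := ∫ s in (0:ℝ)..t, |f s - g s| with hIdef
  have hI : 0 ≤ I :=
    intervalIntegral.integral_nonneg ht0 (fun s _ => abs_nonneg _)
  set R3 := |D.H3 0| + D.L3 * R with hR3def
  have hR3 : 0 ≤ R3 := add_nonneg (abs_nonneg _) (mul_nonneg D.hL3 hR0)
  have hSd : ∀ s, 0 ≤ s → s ≤ t →
      |(∫ u in s..t, D.k (f u)) - ∫ u in s..t, D.k (g u)| ≤ D.K * I :=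
    fun s h1 h2 => D.S_diff hf hg h1 h2
  -- term 1
  have g1 : |D.H1 (∫ u in (0:ℝ)..t, D.k (f u)) - D.H1 (∫ u in (0:ℝ)..t, D.k (g u))|
      ≤ D.L1 * (D.K * I) :=
    (D.h1 _ _).trans (mul_le_mul_of_nonneg_left (hSd 0 (le_refl _) ht0) D.hL1)
  -- term 2
  have hintf2 : IntervalIntegrable (fun s => D.H2 (∫ u in s..t, D.k (f u)))
      MeasureTheory.volume 0 t := (D.h2c.comp (inner_cont D hf t)).intervalIntegrable 0 t
  have hintg2 : IntervalIntegrable (fun s => D.H2 (∫ u in s..t, D.k (g u)))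
      MeasureTheory.volume 0 t := (D.h2c.comp (inner_cont D hg t)).intervalIntegrable 0 t
  have g2 : |(∫ s in (0:ℝ)..t, D.H2 (∫ u in s..t, D.k (f u)))
      - ∫ s in (0:ℝ)..t, D.H2 (∫ u in s..t, D.k (g u))| ≤ D.L2 * (D.K * I) * D.T := by
    rw [← intervalIntegral.integral_sub hintf2 hintg2]
    have hc : ∀ s ∈ Set.uIoc (0:ℝ) t,
        ‖D.H2 (∫ u in s..t, D.k (f u)) - D.H2 (∫ u in s..t, D.k (g u))‖
        ≤ D.L2 * (D.K * I) := by
      intro s hs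
      rw [Set.uIoc_of_le ht0] at hs
      rw [Real.norm_eq_abs]
      exact (D.h2 _ _).trans (mul_le_mul_of_nonneg_left (hSd s hs.1.le hs.2) D.hL2)
    have h := intervalIntegral.norm_integral_le_of_norm_le_const hc
    rw [Real.norm_eq_abs, sub_zero, abs_of_nonneg ht0] at h
    exact h.trans (mul_le_mul_of_nonneg_left htT
      (mul_nonneg D.hL2 (mul_nonneg D.hK hI)))
  -- term 3
  have hqintf : IntervalIntegrable
      (fun s => D.H3 (f s) * D.H5 (f s) * D.H4 (∫ u in s..t, D.k (f u)))
      MeasureTheory.volume 0 t :=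
    (((D.h3c.comp hf).mul (D.h5c.comp hf)).mul
      (D.h4c.comp (inner_cont D hf t))).intervalIntegrable 0 t
  have hqintg : IntervalIntegrable
      (fun s => D.H3 (g s) * D.H5 (g s) * D.H4 (∫ u in s..t, D.k (g u)))
      MeasureTheory.volume 0 t :=
    (((D.h3c.comp hg).mul (D.h5c.comp hg)).mul
      (D.h4c.comp (inner_cont D hg t))).intervalIntegrable 0 t
  have hdiff : ∀ s ∈ Set.Icc (0:ℝ) t,
      |D.H3 (f s) * D.H5 (f s) * D.H4 (∫ u in s..t, D.k (f u))
        - D.H3 (g s) * D.H5 (g s) * D.H4 (∫ u in s..t, D.k (g u))|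
      ≤ (D.L3 * (D.M5 * D.M4) + R3 * (D.L5 * D.M4)) * |f s - g s|
        + R3 * (D.M5 * (D.L4 * (D.K * I))) := by
    intro s hs
    have hsT : s ∈ Set.Icc (0:ℝ) D.T := ⟨hs.1, le_trans hs.2 htT⟩
    have ha2 : |D.H3 (g s)| ≤ R3 := by
      refine (lip_abs D.h3 _).trans ?_
      have := mul_le_mul_of_nonneg_left (hgR s hsT) D.hL3
      rw [hR3def]; linarith
    have hkey := prod3 ha2 (D.hb5 (f s)) (D.hb5 (g s)) (D.hb4 (∫ u in s..t, D.k (f u)))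
      (D.h3 (f s) (g s)) (D.h5 (f s) (g s))
      ((D.h4 _ _).trans (mul_le_mul_of_nonneg_left (hSd s hs.1 hs.2) D.hL4))
    have e : D.L3 * |f s - g s| * (D.M5 * D.M4) + R3 * (D.L5 * |f s - g s| * D.M4)
        + R3 * (D.M5 * (D.L4 * (D.K * I)))
        = (D.L3 * (D.M5 * D.M4) + R3 * (D.L5 * D.M4)) * |f s - g s|
          + R3 * (D.M5 * (D.L4 * (D.K * I))) := by ring
    linarith [hkey, e.le, e.ge]
  have hdint : IntervalIntegrable
      (fun s => (D.L3 * (D.M5 * D.M4) + R3 * (D.L5 * D.M4)) * |f s - g s|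
        + R3 * (D.M5 * (D.L4 * (D.K * I)))) MeasureTheory.volume 0 t :=
    ((continuous_const.mul (hf.sub hg).abs).add continuous_const).intervalIntegrable 0 t
  have hQd : |(∫ s in (0:ℝ)..t, D.H3 (f s) * D.H5 (f s) * D.H4 (∫ u in s..t, D.k (f u)))
      - ∫ s in (0:ℝ)..t, D.H3 (g s) * D.H5 (g s) * D.H4 (∫ u in s..t, D.k (g u))|
      ≤ (D.L3 * (D.M5 * D.M4) + R3 * (D.L5 * D.M4)) * I
        + R3 * (D.M5 * (D.L4 * (D.K * I))) * D.T := by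
    rw [← intervalIntegral.integral_sub hqintf hqintg]
    have step1 : |∫ s in (0:ℝ)..t, (D.H3 (f s) * D.H5 (f s) * D.H4 (∫ u in s..t, D.k (f u))
        - D.H3 (g s) * D.H5 (g s) * D.H4 (∫ u in s..t, D.k (g u)))|
        ≤ ∫ s in (0:ℝ)..t, |D.H3 (f s) * D.H5 (f s) * D.H4 (∫ u in s..t, D.k (f u))
          - D.H3 (g s) * D.H5 (g s) * D.H4 (∫ u in s..t, D.k (g u))| :=
      intervalIntegral.abs_integral_le_integral_abs ht0
    have step2 := intervalIntegral.integral_mono_on ht0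
      ((hqintf.sub hqintg).abs) hdint hdiff
    have step3 : (∫ s in (0:ℝ)..t, ((D.L3 * (D.M5 * D.M4) + R3 * (D.L5 * D.M4)) * |f s - g s|
        + R3 * (D.M5 * (D.L4 * (D.K * I)))))
        = (D.L3 * (D.M5 * D.M4) + R3 * (D.L5 * D.M4)) * I
          + R3 * (D.M5 * (D.L4 * (D.K * I))) * t := by
      rw [intervalIntegral.integral_add
        ((continuous_const.mul (hf.sub hg).abs).intervalIntegrable 0 t)
        (continuous_const.intervalIntegrable 0 t)
        (f := fun s => (D.L3 * (D.M5 * D.M4) + R3 * (D.L5 * D.M4)) * |f s - g s|),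
        intervalIntegral.integral_const_mul, intervalIntegral.integral_const]
      rw [hIdef]; simp [smul_eq_mul]; ring
    have step4 : R3 * (D.M5 * (D.L4 * (D.K * I))) * t
        ≤ R3 * (D.M5 * (D.L4 * (D.K * I))) * D.T :=
      mul_le_mul_of_nonneg_left htT
        (mul_nonneg hR3 (mul_nonneg D.hM5 (mul_nonneg D.hL4 (mul_nonneg D.hK hI))))
    rw [step3] at step2
    linarith
  have g3 : |t * (∫ s in (0:ℝ)..t, D.H3 (f s) * D.H5 (f s) * D.H4 (∫ u in s..t, D.k (f u)))
      - t * ∫ s in (0:ℝ)..t, D.H3 (g s) * D.H5 (g s) * D.H4 (∫ u in s..t, D.k (g u))|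
      ≤ D.T * ((D.L3 * (D.M5 * D.M4) + R3 * (D.L5 * D.M4)) * I
        + R3 * (D.M5 * (D.L4 * (D.K * I))) * D.T) := by
    rw [← mul_sub, abs_mul]
    have haT : |t| ≤ D.T := by rw [abs_of_nonneg ht0]; exact htT
    exact mul_le_mul haT hQd (abs_nonneg _) D.hT.le
  -- combine
  rw [phi_eq D hf t, phi_eq D hg t]
  have e : D.CC R * I = D.L1 * (D.K * I) + D.L2 * (D.K * I) * D.T
      + D.T * ((D.L3 * (D.M5 * D.M4) + R3 * (D.L5 * D.M4)) * I
        + R3 * (D.M5 * (D.L4 * (D.K * I))) * D.T) := by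
    rw [hR3def]; unfold CC; ring
  rw [e]
  set a1 := D.H1 (∫ u in (0:ℝ)..t, D.k (f u))
  set a2 := D.H1 (∫ u in (0:ℝ)..t, D.k (g u))
  set b1 := ∫ s in (0:ℝ)..t, D.H2 (∫ u in s..t, D.k (f u))
  set b2 := ∫ s in (0:ℝ)..t, D.H2 (∫ u in s..t, D.k (g u))
  set c1 := ∫ s in (0:ℝ)..t, D.H3 (f s) * D.H5 (f s) * D.H4 (∫ u in s..t, D.k (f u))
  set c2 := ∫ s in (0:ℝ)..t, D.H3 (g s) * D.H5 (g s) * D.H4 (∫ u in s..t, D.k (g u))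
  have e2 : a1 + b1 + t * c1 - (a2 + b2 + t * c2)
      = (a1 - a2) + ((b1 - b2) + (t * c1 - t * c2)) := by ring
  rw [e2]
  have h1 := abs_add_le (a1 - a2) ((b1 - b2) + (t * c1 - t * c2))
  have h2 := abs_add_le (b1 - b2) (t * c1 - t * c2)
  linarith

/-- the iterated Picard estimate / Grönwall iteration -/
lemma iter_bound {C Dd : ℝ} (hC : 0 ≤ C) (hD : 0 ≤ Dd) (d : ℕ → ℝ → ℝ)
    (hcont : ∀ n, Continuous (d n)) (hnn : ∀ n s, 0 ≤ d n s)
    (h0 : ∀ t ∈ Set.Icc (0:ℝ) D.T, d 0 t ≤ Dd)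
    (hrec : ∀ n, ∀ t ∈ Set.Icc (0:ℝ) D.T, d (n+1) t ≤ C * ∫ s in (0:ℝ)..t, d n s) :
    ∀ n, ∀ t ∈ Set.Icc (0:ℝ) D.T, d n t ≤ Dd * C ^ n * t ^ n / n.factorial := by
  intro n
  induction n with
  | zero =>
    intro t ht
    simpa using h0 t ht
  | succ n ih =>
    intro t ht
    obtain ⟨ht0, htT⟩ := ht
    have hfac : (0:ℝ) < n.factorial := by exact_mod_cast n.factorial_pos
    have hInt1 : IntervalIntegrable (d n) MeasureTheory.volume 0 t :=
      (hcont n).intervalIntegrable 0 t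
    have hInt2 : IntervalIntegrable (fun s => Dd * C ^ n / n.factorial * s ^ n)
        MeasureTheory.volume 0 t :=
      (continuous_const.mul (continuous_pow n)).intervalIntegrable 0 t
    have hmono : (∫ s in (0:ℝ)..t, d n s)
        ≤ ∫ s in (0:ℝ)..t, Dd * C ^ n / n.factorial * s ^ n := by
      apply intervalIntegral.integral_mono_on ht0 hInt1 hInt2
      intro s hs
      have := ih s ⟨hs.1, le_trans hs.2 htT⟩
      calc d n s ≤ Dd * C ^ n * s ^ n / n.factorial := this
        _ = Dd * C ^ n / n.factorial * s ^ n := by ring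
    have hval : (∫ s in (0:ℝ)..t, Dd * C ^ n / n.factorial * s ^ n)
        = Dd * C ^ n / n.factorial * (t ^ (n+1) / (n+1)) := by
      rw [intervalIntegral.integral_const_mul, integral_pow]
      norm_num
    rw [hval] at hmono
    have hstep := (hrec n t ⟨ht0, htT⟩).trans (mul_le_mul_of_nonneg_left hmono hC)
    have e : C * (Dd * C ^ n / n.factorial * (t ^ (n+1) / (n+1)))
        = Dd * C ^ (n+1) * t ^ (n+1) / (n+1).factorial := by
      rw [Nat.factorial_succ]
      push_cast
      field_simp
      ring
    rw [e] at hstep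
    exact hstep

noncomputable def env (t : ℝ) : ℝ := (D.Abnd + 1) * Real.exp ((D.Bbnd + 1) * t)

noncomputable def Rbig : ℝ := D.env D.T

lemma env_nonneg (t : ℝ) : 0 ≤ D.env t :=
  mul_nonneg (by linarith [D.Abnd_nonneg]) (Real.exp_nonneg _)

lemma env_le_Rbig {t : ℝ} (ht : t ∈ Set.Icc (0:ℝ) D.T) : D.env t ≤ D.Rbig := by
  unfold env Rbig
  have h1 : (0:ℝ) ≤ D.Abnd + 1 := by linarith [D.Abnd_nonneg]
  apply mul_le_mul_of_nonneg_left _ h1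
  apply Real.exp_le_exp.2
  have hB : (0:ℝ) ≤ D.Bbnd + 1 := by linarith [D.Bbnd_nonneg]
  exact mul_le_mul_of_nonneg_left ht.2 hB

lemma Rbig_nonneg : 0 ≤ D.Rbig := D.env_nonneg _

lemma phi_invariant {f : ℝ → ℝ} (hf : Continuous f)
    (henv : ∀ s ∈ Set.Icc (0:ℝ) D.T, |f s| ≤ D.env s) :
    ∀ t ∈ Set.Icc (0:ℝ) D.T, |D.Phi f t| ≤ D.env t := by
  intro t ht
  have hA := D.Abnd_nonneg
  have hB := D.Bbnd_nonneg
  have hBpos : (0:ℝ) < D.Bbnd + 1 := by linarith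
  refine (phi_growth D hf ht).trans ?_
  have hint : (∫ s in (0:ℝ)..t, |f s|) ≤ ∫ s in (0:ℝ)..t, D.env s := by
    apply intervalIntegral.integral_mono_on ht.1 (hf.abs.intervalIntegrable 0 t)
      ((continuous_const.mul ((continuous_const.mul continuous_id).rexp)).intervalIntegrable 0 t)
    intro s hs
    exact henv s ⟨hs.1, le_trans hs.2 ht.2⟩
  have hval : (∫ s in (0:ℝ)..t, D.env s)
      = (D.Abnd + 1) * ((D.Bbnd + 1)⁻¹ * (Real.exp ((D.Bbnd + 1) * t) - 1)) := by
    unfold env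
    rw [intervalIntegral.integral_const_mul]
    congr 1
    rw [intervalIntegral.integral_comp_mul_left Real.exp (ne_of_gt hBpos)]
    rw [integral_exp]
    simp [smul_eq_mul, Real.exp_zero]
  set E := Real.exp ((D.Bbnd + 1) * t) with hE
  have hE1 : 1 ≤ E := Real.one_le_exp (mul_nonneg hBpos.le ht.1)
  set q : ℝ := (D.Bbnd + 1)⁻¹ * (E - 1) with hqdef
  have hq0 : 0 ≤ q := mul_nonneg (inv_nonneg.2 hBpos.le) (by linarith)
  have hqe : (D.Bbnd + 1) * q = E - 1 := by
    rw [hqdef, ← mul_assoc, mul_inv_cancel₀ (ne_of_gt hBpos), one_mul]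
  have hIle : D.Bbnd * ∫ s in (0:ℝ)..t, |f s| ≤ D.Bbnd * ((D.Abnd + 1) * q) := by
    apply mul_le_mul_of_nonneg_left _ hB
    rw [← hval]
    exact hint
  have hfin : D.Abnd + D.Bbnd * ((D.Abnd + 1) * q) ≤ (D.Abnd + 1) * E := by
    have h1 : D.Bbnd * q ≤ E - 1 := by nlinarith
    nlinarith
  show D.Abnd + D.Bbnd * ∫ s in (0:ℝ)..t, |f s| ≤ (D.Abnd + 1) * E
  nlinarith [mul_le_mul_of_nonneg_left hint hB]

end Data
end IE2Aux

theorem stmt2 (T : ℝ) (hT : 0 < T) (k H1 H2 H3 H4 H5 : ℝ → ℝ)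
    (hk_lip : ∃ K : NNReal, LipschitzWith K k)
    (h1_lip : ∃ K : NNReal, LipschitzWith K H1)
    (h2_lip : ∃ K : NNReal, LipschitzWith K H2)
    (h3_lip : ∃ K : NNReal, LipschitzWith K H3)
    (h4_lip : ∃ K : NNReal, LipschitzWith K H4) (h4_bdd : ∃ M : ℝ, ∀ y, |H4 y| ≤ M)
    (h5_lip : ∃ K : NNReal, LipschitzWith K H5) (h5_bdd : ∃ M : ℝ, ∀ y, |H5 y| ≤ M) :
    (∃ x : ℝ → ℝ, ContinuousOn x (Set.Icc 0 T) ∧ IntegralEq2 k H1 H2 H3 H4 H5 T x) ∧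
    (∀ x y : ℝ → ℝ, ContinuousOn x (Set.Icc 0 T) → IntegralEq2 k H1 H2 H3 H4 H5 T x →
      ContinuousOn y (Set.Icc 0 T) → IntegralEq2 k H1 H2 H3 H4 H5 T y →
      Set.EqOn x y (Set.Icc 0 T)) := by
  classical
  obtain ⟨K0, hk⟩ := hk_lip
  obtain ⟨K1, hl1⟩ := h1_lip
  obtain ⟨K2, hl2⟩ := h2_lip
  obtain ⟨K3, hl3⟩ := h3_lip
  obtain ⟨K4, hl4⟩ := h4_lip
  obtain ⟨M4', hb4⟩ := h4_bdd
  obtain ⟨K5, hl5⟩ := h5_lip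
  obtain ⟨M5', hb5⟩ := h5_bdd
  have lipabs : ∀ (F : ℝ → ℝ) (L : NNReal), LipschitzWith L F →
      ∀ a b, |F a - F b| ≤ (L : ℝ) * |a - b| := by
    intro F L hL a b
    have := hL.dist_le_mul a b
    simpa [Real.dist_eq] using this
  let D : IE2Aux.Data :=
    { T := T, k := k, H1 := H1, H2 := H2, H3 := H3, H4 := H4, H5 := H5,
      K := K0, L1 := K1, L2 := K2, L3 := K3, L4 := K4, L5 := K5,
      M4 := max M4' 0, M5 := max M5' 0,
      hT := hT, hK := K0.2, hL1 := K1.2, hL2 := K2.2, hL3 := K3.2, hL4 := K4.2,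
      hL5 := K5.2, hM4 := le_max_right _ _, hM5 := le_max_right _ _,
      hkc := hk.continuous, h1c := hl1.continuous, h2c := hl2.continuous,
      h3c := hl3.continuous, h4c := hl4.continuous, h5c := hl5.continuous,
      hk := lipabs k K0 hk, h1 := lipabs H1 K1 hl1, h2 := lipabs H2 K2 hl2,
      h3 := lipabs H3 K3 hl3, h4 := lipabs H4 K4 hl4, h5 := lipabs H5 K5 hl5,
      hb4 := fun y => (hb4 y).trans (le_max_left _ _),
      hb5 := fun y => (hb5 y).trans (le_max_left _ _) }
  -- the complete metric space of candidate solutions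
  let Y : Set C(Set.Icc (0:ℝ) T, ℝ) :=
    {h | ∀ s : Set.Icc (0:ℝ) T, |h s| ≤ D.env ↑s}
  have hYclosed : IsClosed Y := by
    have hYeq : Y = ⋂ s : Set.Icc (0:ℝ) T,
        {h : C(Set.Icc (0:ℝ) T, ℝ) | |h s| ≤ D.env ↑s} := by
      ext h; simp [Y, Set.mem_iInter]
    rw [hYeq]
    refine isClosed_iInter fun s => ?_
    exact isClosed_le ((continuous_eval_const s).abs) continuous_const
  haveI : CompleteSpace Y := hYclosed.completeSpace_coe
  haveI : Nonempty Y := by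
    refine ⟨⟨(0 : C(Set.Icc (0:ℝ) T, ℝ)), fun s => ?_⟩⟩
    simp only [ContinuousMap.zero_apply, abs_zero]
    exact D.env_nonneg _
  -- extension operator
  let ext : Y → ℝ → ℝ := fun h t => h.1 (Set.projIcc 0 T hT.le t)
  have hextcont : ∀ h : Y, Continuous (ext h) :=
    fun h => h.1.continuous.comp continuous_projIcc
  have hextval : ∀ (h : Y) {t : ℝ} (ht : t ∈ Set.Icc (0:ℝ) T),
      ext h t = h.1 ⟨t, ht⟩ := by
    intro h t ht
    simp only [ext, Set.projIcc_of_mem hT.le ht]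
  have hextbd : ∀ (h : Y), ∀ s ∈ Set.Icc (0:ℝ) T, |ext h s| ≤ D.env s := by
    intro h s hs
    rw [hextval h hs]
    exact h.2 ⟨s, hs⟩
  have hextR : ∀ (h : Y), ∀ s ∈ Set.Icc (0:ℝ) T, |ext h s| ≤ D.Rbig :=
    fun h s hs => (hextbd h s hs).trans (D.env_le_Rbig hs)
  -- the Picard operator on Y
  let PhiHat : Y → Y := fun h =>
    ⟨⟨fun s => D.Phi (ext h) ↑s, (D.phi_cont (hextcont h)).comp continuous_subtype_val⟩,
      fun s => D.phi_invariant (hextcont h) (hextbd h) ↑s s.2⟩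
  have hPhiHatval : ∀ (h : Y) {t : ℝ} (ht : t ∈ Set.Icc (0:ℝ) T),
      ext (PhiHat h) t = D.Phi (ext h) t := by
    intro h t ht
    rw [hextval (PhiHat h) ht]
    rfl
  have hdist_apply : ∀ (h g : Y) {t : ℝ} (ht : t ∈ Set.Icc (0:ℝ) T),
      |ext h t - ext g t| ≤ dist h g := by
    intro h g t ht
    rw [hextval h ht, hextval g ht, ← Real.dist_eq, Subtype.dist_eq]
    exact ContinuousMap.dist_apply_le_dist _
  have hcc0 : 0 ≤ D.CC D.Rbig := D.CC_nonneg D.Rbig_nonneg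
  -- iterated contraction estimate
  have iterkey : ∀ (f g : Y) (n : ℕ), ∀ t ∈ Set.Icc (0:ℝ) T,
      |ext (PhiHat^[n] f) t - ext (PhiHat^[n] g) t|
        ≤ dist f g * (D.CC D.Rbig) ^ n * t ^ n / n.factorial := by
    intro f g
    refine D.iter_bound hcc0 dist_nonneg
      (fun n t => |ext (PhiHat^[n] f) t - ext (PhiHat^[n] g) t|)
      (fun n => ((hextcont _).sub (hextcont _)).abs)
      (fun n s => abs_nonneg _)
      (fun t ht => by simpa using hdist_apply f g ht) ?_
    intro n t ht
    have e1 : PhiHat^[n+1] f = PhiHat (PhiHat^[n] f) := Function.iterate_succ_apply' _ _ _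
    have e2 : PhiHat^[n+1] g = PhiHat (PhiHat^[n] g) := Function.iterate_succ_apply' _ _ _
    beta_reduce
    rw [e1, e2, hPhiHatval _ ht, hPhiHatval _ ht]
    exact D.phi_lip (hextcont _) (hextcont _) (hextR _) (hextR _) ht
  have hdist_iter : ∀ n (f g : Y), dist (PhiHat^[n] f) (PhiHat^[n] g)
      ≤ (D.CC D.Rbig * T) ^ n / n.factorial * dist f g := by
    intro n f g
    have hfac : (0:ℝ) ≤ n.factorial := Nat.cast_nonneg _
    have hb : 0 ≤ (D.CC D.Rbig * T) ^ n / n.factorial * dist f g :=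
      mul_nonneg (div_nonneg (pow_nonneg (mul_nonneg hcc0 hT.le) n) hfac) dist_nonneg
    rw [Subtype.dist_eq, ContinuousMap.dist_le hb]
    intro s
    have hkey := iterkey f g n ↑s s.2
    rw [hextval _ s.2, hextval _ s.2] at hkey
    simp only [Subtype.coe_eta] at hkey
    rw [Real.dist_eq]
    refine hkey.trans ?_
    have hsn : (↑s:ℝ) ^ n ≤ T ^ n := pow_le_pow_left₀ s.2.1 s.2.2 n
    have hfacpos : (0:ℝ) < n.factorial := by exact_mod_cast n.factorial_pos
    have hmul : dist f g * D.CC D.Rbig ^ n * (↑s:ℝ) ^ n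
        ≤ dist f g * D.CC D.Rbig ^ n * T ^ n :=
      mul_le_mul_of_nonneg_left hsn (mul_nonneg dist_nonneg (pow_nonneg hcc0 n))
    calc dist f g * D.CC D.Rbig ^ n * (↑s:ℝ) ^ n / n.factorial
        ≤ dist f g * D.CC D.Rbig ^ n * T ^ n / n.factorial :=
          (div_le_div_iff_of_pos_right hfacpos).2 hmul
      _ = (D.CC D.Rbig * T) ^ n / n.factorial * dist f g := by rw [mul_pow]; ring
  -- find a contracting iterate
  obtain ⟨n, hn⟩ : ∃ n : ℕ, (D.CC D.Rbig * T) ^ n / n.factorial < 1 := by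
    have htend := FloorSemiring.tendsto_pow_div_factorial_atTop (D.CC D.Rbig * T)
    exact (htend.eventually_lt_const one_pos).exists
  have hq0 : 0 ≤ (D.CC D.Rbig * T) ^ n / n.factorial :=
    div_nonneg (pow_nonneg (mul_nonneg hcc0 hT.le) n) (Nat.cast_nonneg _)
  have hlip : LipschitzWith (Real.toNNReal ((D.CC D.Rbig * T) ^ n / n.factorial))
      (PhiHat^[n]) := by
    apply LipschitzWith.of_dist_le_mul
    intro f g
    rw [Real.coe_toNNReal _ hq0]
    exact hdist_iter n f g
  have hcontr : ContractingWith (Real.toNNReal ((D.CC D.Rbig * T) ^ n / n.factorial))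
      (PhiHat^[n]) := by
    constructor
    · exact_mod_cast Real.toNNReal_lt_one.2 hn
    · exact hlip
  set xhat : Y := ContractingWith.fixedPoint (PhiHat^[n]) hcontr with hxhat
  have hfixn : PhiHat^[n] xhat = xhat := hcontr.fixedPoint_isFixedPt
  have hxfix : PhiHat xhat = xhat := by
    have hcomm : PhiHat^[n] (PhiHat xhat) = PhiHat (PhiHat^[n] xhat) := by
      rw [← Function.iterate_succ_apply, Function.iterate_succ_apply']
    have hfx : Function.IsFixedPt (PhiHat^[n]) (PhiHat xhat) := by
      show PhiHat^[n] (PhiHat xhat) = PhiHat xhat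
      rw [hcomm, hfixn]
    have := hcontr.fixedPoint_unique hfx
    rw [← hxhat] at this
    exact this
  constructor
  · -- existence
    refine ⟨ext xhat, (hextcont xhat).continuousOn, ?_⟩
    intro t ht
    have h1 : ext xhat t = D.Phi (ext xhat) t := by
      conv_lhs => rw [← hxfix]
      exact hPhiHatval xhat ht
    exact h1
  · -- uniqueness
    intro x y hxc hx hyc hy
    set x' : ℝ → ℝ := fun t => x ↑(Set.projIcc 0 T hT.le t) with hx'def
    set y' : ℝ → ℝ := fun t => y ↑(Set.projIcc 0 T hT.le t) with hy'def
    have hx'c : Continuous x' := (hxc.restrict).comp continuous_projIcc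
    have hy'c : Continuous y' := (hyc.restrict).comp continuous_projIcc
    have hx'eq : Set.EqOn x' x (Set.Icc 0 T) := by
      intro t ht
      simp only [hx'def, Set.projIcc_of_mem hT.le ht]
    have hy'eq : Set.EqOn y' y (Set.Icc 0 T) := by
      intro t ht
      simp only [hy'def, Set.projIcc_of_mem hT.le ht]
    have hx'sol : ∀ t ∈ Set.Icc (0:ℝ) T, x' t = D.Phi x' t := by
      intro t ht
      rw [hx'eq ht]
      have h0 : x t = D.Phi x t := hx t ht
      rw [h0]
      exact (D.phi_congr hx'eq ht).symm
    have hy'sol : ∀ t ∈ Set.Icc (0:ℝ) T, y' t = D.Phi y' t := by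
      intro t ht
      rw [hy'eq ht]
      have h0 : y t = D.Phi y t := hy t ht
      rw [h0]
      exact (D.phi_congr hy'eq ht).symm
    obtain ⟨Rx, hRx⟩ := isCompact_Icc.exists_bound_of_continuousOn hx'c.continuousOn
    obtain ⟨Ry, hRy⟩ := isCompact_Icc.exists_bound_of_continuousOn hy'c.continuousOn
    set RR : ℝ := max Rx Ry with hRR
    have hx'R : ∀ s ∈ Set.Icc (0:ℝ) T, |x' s| ≤ RR :=
      fun s hs => (hRx s hs).trans (le_max_left _ _)
    have hy'R : ∀ s ∈ Set.Icc (0:ℝ) T, |y' s| ≤ RR :=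
      fun s hs => (hRy s hs).trans (le_max_right _ _)
    have hRR0 : 0 ≤ RR := le_trans (abs_nonneg _) (hx'R 0 ⟨le_refl _, hT.le⟩)
    have hCCR : 0 ≤ D.CC RR := D.CC_nonneg hRR0
    have key := D.iter_bound hCCR (by linarith : (0:ℝ) ≤ RR + RR)
      (fun _ t => |x' t - y' t|)
      (fun _ => (hx'c.sub hy'c).abs)
      (fun _ s => abs_nonneg _)
      (fun t ht => by
        beta_reduce
        have h1 := hx'R t ht
        have h2 := hy'R t ht
        calc |x' t - y' t| ≤ |x' t| + |y' t| := abs_sub _ _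
          _ ≤ RR + RR := add_le_add h1 h2)
      (fun m t ht => by
        beta_reduce
        rw [hx'sol t ht, hy'sol t ht]
        exact D.phi_lip hx'c hy'c hx'R hy'R ht)
    intro t ht
    have hlim : Filter.Tendsto
        (fun m : ℕ => (RR + RR) * (D.CC RR) ^ m * t ^ m / m.factorial)
        Filter.atTop (nhds 0) := by
      have h := (FloorSemiring.tendsto_pow_div_factorial_atTop (D.CC RR * t)).const_mul
        (RR + RR)
      rw [mul_zero] at h
      have heq : (fun m : ℕ => (RR + RR) * (D.CC RR) ^ m * t ^ m / m.factorial)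
          = fun m : ℕ => (RR + RR) * ((D.CC RR * t) ^ m / m.factorial) := by
        funext m
        rw [mul_pow]
        ring
      rw [heq]
      exact h
    have hle : |x' t - y' t| ≤ 0 := ge_of_tendsto' hlim (fun m => key m t ht)
    have hzero : x' t - y' t = 0 := by
      have := abs_nonneg (x' t - y' t)
      have habs : |x' t - y' t| = 0 := le_antisymm hle this
      exact abs_eq_zero.1 habs
    have : x' t = y' t := by linarith
    rw [← hx'eq ht, ← hy'eq ht]
    exact this
end

section
/- Fix T > 0. Let k, H₁, H₂, H₃ : ℝ → ℝ be Lipschitz continuous and let H₄, H₅ : ℝ → ℝ be bounded. Then there exists a constant C, depending only on T, on the Lipschitz constants of k, H₁, H₂, H₃, on the values k(0), H₁(0), H₂(0), H₃(0), and on the supremum norms of H₄ and H₅, such that every continuous function x : [0,T] → ℝ satisfying x_t = H₁(S(0,t)) + ∫₀ᵗ H₂(S(s,t)) ds + ∫₀ᵗ H₃(x_s)·H₅(x_s)·H₄(S(s,t)) ds for all t ∈ [0,T], with S(s,t) = ∫ₛᵗ k(x_u) du, obeys sup_{t ∈ [0,T]} |x_t| ≤ C. -/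
open MeasureTheory Set

/-- If `|g| ≤ b` pointwise on `[p,q]` with `b` interval integrable, then
`|∫ g| ≤ ∫ b`, with no integrability assumption on `g`. -/
lemma abs_intervalIntegral_le {g b : ℝ → ℝ} {p q : ℝ} (hpq : p ≤ q)
    (hb : IntervalIntegrable b MeasureTheory.volume p q)
    (hgb : ∀ s ∈ Set.Icc p q, |g s| ≤ b s) :
    |∫ s in p..q, g s| ≤ ∫ s in p..q, b s := by
  by_cases hg : IntervalIntegrable g MeasureTheory.volume p q
  · calc |∫ s in p..q, g s| ≤ ∫ s in p..q, |g s| :=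
          intervalIntegral.abs_integral_le_integral_abs hpq
      _ ≤ ∫ s in p..q, b s := intervalIntegral.integral_mono_on hpq hg.abs hb hgb
  · rw [intervalIntegral.integral_undef hg, abs_zero]
    exact intervalIntegral.integral_nonneg hpq fun s hs => (abs_nonneg _).trans (hgb s hs)

lemma lip_abs_bound {L : NNReal} {f : ℝ → ℝ} (hf : LipschitzWith L f) (y : ℝ) :
    |f y| ≤ |f 0| + L * |y| := by
  have h := hf.dist_le_mul y 0
  rw [Real.dist_eq, Real.dist_eq, sub_zero] at h
  calc |f y| = |(f y - f 0) + f 0| := by congr 1; ring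
    _ ≤ |f y - f 0| + |f 0| := abs_add_le _ _
    _ ≤ (L : ℝ) * |y| + |f 0| := by linarith
    _ = |f 0| + L * |y| := by ring

set_option maxHeartbeats 2000000 in
/-- A priori (Gronwall) bound: the constant `C` depends only on `T`, the Lipschitz
constants of `k, H₁, H₂, H₃`, the values `k(0), H₁(0), H₂(0), H₃(0)`, and the sup
norms of `H₄`, `H₅`. -/
theorem stmt3 (T : ℝ) (hT : 0 < T)
    (Lk L1 L2 L3 : NNReal) (k0 H10 H20 H30 M4 M5 : ℝ) :
    ∃ C : ℝ, ∀ k H1 H2 H3 H4 H5 : ℝ → ℝ,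
      LipschitzWith Lk k → LipschitzWith L1 H1 → LipschitzWith L2 H2 →
      LipschitzWith L3 H3 →
      k 0 = k0 → H1 0 = H10 → H2 0 = H20 → H3 0 = H30 →
      (∀ y, |H4 y| ≤ M4) → (∀ y, |H5 y| ≤ M5) →
      ∀ x : ℝ → ℝ, ContinuousOn x (Set.Icc 0 T) →
        IntegralEq2 k H1 H2 H3 H4 H5 T x →
        ∀ t ∈ Set.Icc (0 : ℝ) T, |x t| ≤ C := by
  set A : ℝ := |H10| + (L1 : ℝ) * (|k0| * T) + T * |H20| + T * ((L2 : ℝ) * (|k0| * T))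
      + T * (T * (|H30| * (M4 * M5))) with hA
  set B : ℝ := (L1 : ℝ) * Lk + T * ((L2 : ℝ) * Lk) + T * ((L3 : ℝ) * (M4 * M5)) with hB
  refine ⟨A + B * (A * (T * Real.exp (B * T))), ?_⟩
  intro k H1 H2 H3 H4 H5 hk h1 h2 h3 hk0 h10 h20 h30 hM4 hM5 x hx hxeq t ht
  have hM4' : 0 ≤ M4 := (abs_nonneg _).trans (hM4 0)
  have hM5' : 0 ≤ M5 := (abs_nonneg _).trans (hM5 0)
  -- clamp x to a globally continuous function z
  set z : ℝ → ℝ := fun u => x (max 0 (min u T)) with hzdef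
  have hmem : ∀ u : ℝ, max 0 (min u T) ∈ Set.Icc (0 : ℝ) T :=
    fun u => ⟨le_max_left _ _, max_le hT.le (min_le_right _ _)⟩
  have hz_cont : Continuous z :=
    hx.comp_continuous (continuous_const.max (continuous_id.min continuous_const)) hmem
  have hzx : ∀ u ∈ Set.Icc (0 : ℝ) T, z u = x u := by
    intro u hu
    simp only [hzdef]
    rw [min_eq_left hu.2, max_eq_right hu.1]
  have hzabs : Continuous fun u => |z u| := hz_cont.abs
  set φ : ℝ → ℝ := fun w => ∫ u in (0 : ℝ)..w, |z u| with hφdef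
  have hφnonneg : ∀ w, 0 ≤ w → 0 ≤ φ w :=
    fun w hw => intervalIntegral.integral_nonneg hw fun u _ => abs_nonneg _
  -- bound on S(s,r)
  have hS : ∀ r ∈ Set.Icc (0 : ℝ) T, ∀ s ∈ Set.Icc (0 : ℝ) r,
      |∫ u in s..r, k (x u)| ≤ |k0| * T + Lk * φ r := by
    intro r hr s hs
    have hsr : s ≤ r := hs.2
    have hcongr : (∫ u in s..r, k (x u)) = ∫ u in s..r, k (z u) := by
      apply intervalIntegral.integral_congr
      intro u hu
      rw [Set.uIcc_of_le hsr] at hu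
      show k (x u) = k (z u)
      rw [hzx u ⟨hs.1.trans hu.1, hu.2.trans hr.2⟩]
    rw [hcongr]
    have hbc : Continuous fun u => |k0| + (Lk : ℝ) * |z u| :=
      continuous_const.add (continuous_const.mul hzabs)
    calc |∫ u in s..r, k (z u)| ≤ ∫ u in s..r, (|k0| + (Lk : ℝ) * |z u|) := by
          apply abs_intervalIntegral_le hsr (hbc.intervalIntegrable _ _)
          intro u _
          have := lip_abs_bound hk (z u)
          rw [hk0] at this
          exact this
      _ ≤ ∫ u in (0 : ℝ)..r, (|k0| + (Lk : ℝ) * |z u|) :=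
          intervalIntegral.integral_mono_interval hs.1 hsr le_rfl
            (Filter.Eventually.of_forall fun u => by positivity)
            (hbc.intervalIntegrable _ _)
      _ = |k0| * r + Lk * φ r := by
          rw [intervalIntegral.integral_add (f := fun _ => |k0|) (g := fun u => (Lk : ℝ) * |z u|)
            (intervalIntegrable_const)
            ((continuous_const.mul hzabs).intervalIntegrable _ _),
            intervalIntegral.integral_const, intervalIntegral.integral_const_mul]
          simp [smul_eq_mul, mul_comm, hφdef]
      _ ≤ |k0| * T + Lk * φ r := by
          have : |k0| * r ≤ |k0| * T := mul_le_mul_of_nonneg_left hr.2 (abs_nonneg _)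
          linarith
  -- the key pointwise bound
  have key : ∀ r ∈ Set.Icc (0 : ℝ) T, |z r| ≤ A + B * φ r := by
    intro r hr
    have hφr : 0 ≤ φ r := hφnonneg r hr.1
    rw [hzx r hr, hxeq r hr]
    have h1b : |H1 (∫ u in (0 : ℝ)..r, k (x u))| ≤ |H10| + L1 * (|k0| * T + Lk * φ r) := by
      have hl := lip_abs_bound h1 (∫ u in (0 : ℝ)..r, k (x u))
      rw [h10] at hl
      refine hl.trans ?_
      have := hS r hr 0 ⟨le_refl _, hr.1⟩
      have := mul_le_mul_of_nonneg_left this (NNReal.coe_nonneg L1)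
      linarith
    have h3b : |∫ s in (0 : ℝ)..r, H3 (x s) * H5 (x s) * H4 (∫ u in s..r, k (x u))|
        ≤ T * (|H30| * (M4 * M5)) + ((L3 : ℝ) * (M4 * M5)) * φ r := by
      have hbc : Continuous fun s => (|H30| + (L3 : ℝ) * |z s|) * (M4 * M5) :=
        (continuous_const.add (continuous_const.mul hzabs)).mul continuous_const
      have step : |∫ s in (0 : ℝ)..r, H3 (x s) * H5 (x s) * H4 (∫ u in s..r, k (x u))|
          ≤ ∫ s in (0 : ℝ)..r, (|H30| + (L3 : ℝ) * |z s|) * (M4 * M5) := by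
        apply abs_intervalIntegral_le hr.1 (hbc.intervalIntegrable _ _)
        intro s hs
        have hxz : x s = z s := (hzx s ⟨hs.1, hs.2.trans hr.2⟩).symm
        have h3l : |H3 (x s)| ≤ |H30| + (L3 : ℝ) * |z s| := by
          have h' := lip_abs_bound h3 (x s)
          rw [h30] at h'
          calc |H3 (x s)| ≤ |H30| + (L3 : ℝ) * |x s| := h'
            _ = |H30| + (L3 : ℝ) * |z s| := by rw [hxz]
        calc |H3 (x s) * H5 (x s) * H4 (∫ u in s..r, k (x u))|
            = |H3 (x s)| * |H5 (x s)| * |H4 (∫ u in s..r, k (x u))| := by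
              rw [abs_mul, abs_mul]
          _ ≤ (|H30| + (L3 : ℝ) * |z s|) * M5 * M4 := by
              have e1 : |H3 (x s)| * |H5 (x s)| ≤ (|H30| + (L3 : ℝ) * |z s|) * M5 :=
                mul_le_mul h3l (hM5 _) (abs_nonneg _) (by positivity)
              exact mul_le_mul e1 (hM4 _) (abs_nonneg _)
                (mul_nonneg (by positivity) hM5')
          _ = (|H30| + (L3 : ℝ) * |z s|) * (M4 * M5) := by ring
      refine step.trans ?_
      have heq : (∫ s in (0 : ℝ)..r, (|H30| + (L3 : ℝ) * |z s|) * (M4 * M5))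
          = (|H30| * r + (L3 : ℝ) * φ r) * (M4 * M5) := by
        rw [intervalIntegral.integral_mul_const,
          intervalIntegral.integral_add (f := fun _ => |H30|) (g := fun u => (L3 : ℝ) * |z u|)
            (intervalIntegrable_const)
            ((continuous_const.mul hzabs).intervalIntegrable _ _),
          intervalIntegral.integral_const, intervalIntegral.integral_const_mul]
        simp [smul_eq_mul, mul_comm, hφdef]
      rw [heq]
      have h45 : 0 ≤ M4 * M5 := mul_nonneg hM4' hM5'
      have hφr : 0 ≤ φ r := hφnonneg r hr.1
      have : |H30| * r ≤ |H30| * T := mul_le_mul_of_nonneg_left hr.2 (abs_nonneg _)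
      nlinarith
    have hIcnn : 0 ≤ T * (|H30| * (M4 * M5)) + ((L3 : ℝ) * (M4 * M5)) * φ r := by
      have h45 : 0 ≤ M4 * M5 := mul_nonneg hM4' hM5'
      have hφr : 0 ≤ φ r := hφnonneg r hr.1
      have : 0 ≤ ((L3 : ℝ) * (M4 * M5)) * φ r :=
        mul_nonneg (mul_nonneg (NNReal.coe_nonneg _) h45) hφr
      nlinarith [mul_nonneg hT.le (mul_nonneg (abs_nonneg H30) h45)]
    have h2b : |∫ s in (0 : ℝ)..r, (H2 (∫ u in s..r, k (x u))
          + ∫ s in (0 : ℝ)..r, H3 (x s) * H5 (x s) * H4 (∫ u in s..r, k (x u)))|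
        ≤ T * (|H20| + L2 * (|k0| * T + Lk * φ r))
          + T * (T * (|H30| * (M4 * M5)) + ((L3 : ℝ) * (M4 * M5)) * φ r) := by
      set D : ℝ := (|H20| + L2 * (|k0| * T + Lk * φ r))
        + (T * (|H30| * (M4 * M5)) + ((L3 : ℝ) * (M4 * M5)) * φ r) with hD
      have hc : ∀ s ∈ Set.uIoc (0 : ℝ) r,
          ‖H2 (∫ u in s..r, k (x u))
            + ∫ s in (0 : ℝ)..r, H3 (x s) * H5 (x s) * H4 (∫ u in s..r, k (x u))‖ ≤ D := by
        intro s hs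
        rw [Set.uIoc_of_le hr.1] at hs
        rw [Real.norm_eq_abs]
        have hl := lip_abs_bound h2 (∫ u in s..r, k (x u))
        rw [h20] at hl
        have hSb := hS r hr s ⟨hs.1.le, hs.2⟩
        have h2' : |H2 (∫ u in s..r, k (x u))| ≤ |H20| + L2 * (|k0| * T + Lk * φ r) := by
          refine hl.trans ?_
          have := mul_le_mul_of_nonneg_left hSb (NNReal.coe_nonneg L2)
          linarith
        calc |H2 (∫ u in s..r, k (x u))
              + ∫ s in (0 : ℝ)..r, H3 (x s) * H5 (x s) * H4 (∫ u in s..r, k (x u))|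
            ≤ |H2 (∫ u in s..r, k (x u))|
              + |∫ s in (0 : ℝ)..r, H3 (x s) * H5 (x s) * H4 (∫ u in s..r, k (x u))| :=
              abs_add_le _ _
          _ ≤ D := by rw [hD]; linarith
      have hle := intervalIntegral.norm_integral_le_of_norm_le_const hc
      rw [Real.norm_eq_abs] at hle
      refine hle.trans ?_
      have hDnn : 0 ≤ D := by
        rw [hD]
        have hφr : 0 ≤ φ r := hφnonneg r hr.1
        have h1' : (0:ℝ) ≤ |H20| + L2 * (|k0| * T + Lk * φ r) := by positivity
        linarith
      have habs : |r - 0| ≤ T := by rw [sub_zero, abs_of_nonneg hr.1]; exact hr.2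
      calc D * |r - 0| ≤ D * T := mul_le_mul_of_nonneg_left habs hDnn
        _ = T * (|H20| + L2 * (|k0| * T + Lk * φ r))
            + T * (T * (|H30| * (M4 * M5)) + ((L3 : ℝ) * (M4 * M5)) * φ r) := by
            rw [hD]; ring
    calc |H1 (∫ u in (0 : ℝ)..r, k (x u))
          + ∫ s in (0 : ℝ)..r, (H2 (∫ u in s..r, k (x u))
            + ∫ s in (0 : ℝ)..r, H3 (x s) * H5 (x s) * H4 (∫ u in s..r, k (x u)))|
        ≤ |H1 (∫ u in (0 : ℝ)..r, k (x u))|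
          + |∫ s in (0 : ℝ)..r, (H2 (∫ u in s..r, k (x u))
            + ∫ s in (0 : ℝ)..r, H3 (x s) * H5 (x s) * H4 (∫ u in s..r, k (x u)))| :=
          abs_add_le _ _
      _ ≤ A + B * φ r := by
          rw [hA, hB]
          nlinarith [h1b, h2b]
  -- nonnegativity of A and B
  have hAnn : 0 ≤ A := by
    rw [hA]
    have h45 : 0 ≤ M4 * M5 := mul_nonneg hM4' hM5'
    have : (0:ℝ) ≤ T * (|H30| * (M4 * M5)) := mul_nonneg hT.le (mul_nonneg (abs_nonneg _) h45)
    positivity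
  have hBnn : 0 ≤ B := by
    rw [hB]
    have h45 : 0 ≤ M4 * M5 := mul_nonneg hM4' hM5'
    have : (0:ℝ) ≤ (L3 : ℝ) * (M4 * M5) := mul_nonneg (NNReal.coe_nonneg _) h45
    positivity
  -- Gronwall
  have hφd : ∀ w : ℝ, HasDerivAt φ (|z w|) w :=
    fun w => (hzabs.integral_hasStrictDerivAt 0 w).hasDerivAt
  have hφcont : Continuous φ :=
    continuous_iff_continuousAt.mpr fun w => (hφd w).continuousAt
  have hφ0 : φ 0 = 0 := intervalIntegral.integral_same
  have hgron := norm_le_gronwallBound_of_norm_deriv_right_le (f := φ)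
    (f' := fun w => |z w|) (δ := 0) (K := B) (ε := A) (a := 0) (b := T)
    hφcont.continuousOn (fun w _ => (hφd w).hasDerivWithinAt)
    (by simp [hφ0]) ?_
  · have hφt : φ t ≤ gronwallBound 0 B A (t - 0) := by
      have := hgron t ht
      rwa [Real.norm_eq_abs, abs_of_nonneg (hφnonneg t ht.1)] at this
    have hgb2 : gronwallBound 0 B A (t - 0) ≤ A * (T * Real.exp (B * T)) := by
      rw [sub_zero]
      rcases eq_or_lt_of_le hBnn with hB0 | hB0
      · rw [← hB0, gronwallBound_K0]
        simp only [zero_add, zero_mul, Real.exp_zero, mul_one]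
        have : A * t ≤ A * T := mul_le_mul_of_nonneg_left ht.2 hAnn
        linarith
      · rw [gronwallBound_of_K_ne_0 hB0.ne']
        have hE : (0:ℝ) < Real.exp (B * t) := Real.exp_pos _
        have key2 : Real.exp (B * t) - 1 ≤ B * t * Real.exp (B * t) := by
          have h := Real.add_one_le_exp (-(B * t))
          rw [Real.exp_neg] at h
          have h2 : (-(B * t) + 1) * Real.exp (B * t)
              ≤ (Real.exp (B * t))⁻¹ * Real.exp (B * t) :=
            mul_le_mul_of_nonneg_right h hE.le
          rw [inv_mul_cancel₀ hE.ne'] at h2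
          nlinarith
        have hexp : Real.exp (B * t) ≤ Real.exp (B * T) :=
          Real.exp_le_exp.mpr (mul_le_mul_of_nonneg_left ht.2 hBnn)
        show (0:ℝ) * Real.exp (B * t) + A / B * (Real.exp (B * t) - 1)
            ≤ A * (T * Real.exp (B * T))
        calc (0:ℝ) * Real.exp (B * t) + A / B * (Real.exp (B * t) - 1)
            = A / B * (Real.exp (B * t) - 1) := by ring
          _ ≤ A / B * (B * t * Real.exp (B * t)) :=
              mul_le_mul_of_nonneg_left key2 (div_nonneg hAnn hBnn)
          _ = A * (t * Real.exp (B * t)) := by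
              field_simp
          _ ≤ A * (T * Real.exp (B * T)) := by
              refine mul_le_mul_of_nonneg_left ?_ hAnn
              exact mul_le_mul ht.2 hexp hE.le hT.le
    rw [← hzx t ht]
    have := key t ht
    have hmul : B * φ t ≤ B * (A * (T * Real.exp (B * T))) :=
      mul_le_mul_of_nonneg_left (hφt.trans hgb2) hBnn
    linarith
  · intro w hw
    have hw' : w ∈ Set.Icc (0:ℝ) T := ⟨hw.1, hw.2.le⟩
    rw [Real.norm_eq_abs, abs_abs, Real.norm_eq_abs, abs_of_nonneg (hφnonneg w hw.1)]
    have := key w hw'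
    linarith
end

section
/- Fix T > 0. Let k, H₁, H₂, H₃, H₄ : ℝ → ℝ be bounded, Lipschitz continuous functions. Then there exists a constant d₄, depending only on T and on the supremum norms and Lipschitz constants of k, H₁, H₂, H₃, H₄, such that every continuous function x : [0,T] → ℝ satisfying x_t = H₁(∫₀ᵗ k(x_u) du) + ∫₀ᵗ H₂(∫ₛᵗ k(x_u) du) ds + ∫₀ᵗ H₃(x_s)·H₄(∫ₛᵗ k(x_u) du) ds for all t ∈ [0,T] is Lipschitz continuous with |x_t − x_s| ≤ d₄·|t − s| for all s, t ∈ [0,T]. -/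
open MeasureTheory Set

private lemma aux4 (T : ℝ) (hT : 0 < T)
    (Lk L1 L2 L3 L4 : NNReal) (Mk M2 M3 M4 : ℝ)
    (k H1 H2 H3 H4 : ℝ → ℝ)
    (hk : LipschitzWith Lk k) (h1 : LipschitzWith L1 H1) (h2 : LipschitzWith L2 H2)
    (h3 : LipschitzWith L3 H3) (h4 : LipschitzWith L4 H4)
    (hMk : ∀ y, |k y| ≤ Mk) (hM2 : ∀ y, |H2 y| ≤ M2)
    (hM3 : ∀ y, |H3 y| ≤ M3) (hM4 : ∀ y, |H4 y| ≤ M4)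
    (x : ℝ → ℝ) (hx : ContinuousOn x (Set.Icc 0 T))
    (hEq : IntegralEq1 k H1 H2 H3 H4 T x)
    (s t : ℝ) (hs : s ∈ Set.Icc (0:ℝ) T) (ht : t ∈ Set.Icc (0:ℝ) T) (hst : s ≤ t) :
    |x t - x s| ≤
      ((L1:ℝ)*Mk + (M2 + T*((L2:ℝ)*Mk))
        + (T*(M3*M4) + T*(M3*M4 + T*(M3*((L4:ℝ)*Mk))))) * (t - s) := by
  obtain ⟨hs0, hsT⟩ := hs
  obtain ⟨ht0, htT⟩ := ht
  have hts0 : 0 ≤ t - s := sub_nonneg.2 hst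
  have hMk0 : 0 ≤ Mk := (abs_nonneg _).trans (hMk 0)
  have hM20 : 0 ≤ M2 := (abs_nonneg _).trans (hM2 0)
  have hM30 : 0 ≤ M3 := (abs_nonneg _).trans (hM3 0)
  have hM40 : 0 ≤ M4 := (abs_nonneg _).trans (hM4 0)
  have hstmem : s ∈ Icc (0:ℝ) T := ⟨hs0, hsT⟩
  have htmem : t ∈ Icc (0:ℝ) T := ⟨ht0, htT⟩
  have hgC : ContinuousOn (fun u => k (x u)) (Icc 0 T) := hk.continuous.comp_continuousOn hx
  have hgInt : ∀ a b : ℝ, a ∈ Icc (0:ℝ) T → b ∈ Icc (0:ℝ) T →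
      IntervalIntegrable (fun u => k (x u)) volume a b :=
    fun a b ha hb => (hgC.mono (uIcc_subset_Icc ha hb)).intervalIntegrable
  have habs : ∀ a b : ℝ, |∫ u in a..b, k (x u)| ≤ Mk * |b - a| := by
    intro a b
    rw [← Real.norm_eq_abs]
    exact intervalIntegral.norm_integral_le_of_norm_le_const
      (fun u _ => by rw [Real.norm_eq_abs]; exact hMk (x u))
  have habs' : ∀ a b : ℝ, a ≤ b → |∫ u in a..b, k (x u)| ≤ Mk * (b - a) := by
    intro a b hab
    have := habs a b
    rwa [abs_of_nonneg (sub_nonneg.2 hab)] at this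
  -- split identity for inner integrals
  have hsplit : ∀ u ∈ Icc (0:ℝ) s,
      (∫ r in u..t, k (x r)) - (∫ r in u..s, k (x r)) = ∫ r in s..t, k (x r) := by
    intro u hu
    have hu' : u ∈ Icc (0:ℝ) T := ⟨hu.1, hu.2.trans hsT⟩
    have := intervalIntegral.integral_add_adjacent_intervals
      (hgInt u s hu' hstmem) (hgInt s t hstmem htmem)
    linarith
  -- continuity of primitives
  have hIcc0t : uIcc (0:ℝ) t = Icc 0 t := uIcc_of_le ht0
  have hIcc0s : uIcc (0:ℝ) s = Icc 0 s := uIcc_of_le hs0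
  have hFtC : ContinuousOn (fun u => ∫ r in u..t, k (x r)) (Icc 0 t) := by
    have h' : IntegrableOn (fun u => k (x u)) (uIcc 0 t) volume := by
      rw [hIcc0t]; exact (hgC.mono (Icc_subset_Icc le_rfl htT)).integrableOn_Icc
    have := intervalIntegral.continuousOn_primitive_interval_left (μ := volume) h'
    rwa [hIcc0t] at this
  have hFsC : ContinuousOn (fun u => ∫ r in u..s, k (x r)) (Icc 0 s) := by
    have h' : IntegrableOn (fun u => k (x u)) (uIcc 0 s) volume := by
      rw [hIcc0s]; exact (hgC.mono (Icc_subset_Icc le_rfl hsT)).integrableOn_Icc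
    have := intervalIntegral.continuousOn_primitive_interval_left (μ := volume) h'
    rwa [hIcc0s] at this
  have hx0t : ContinuousOn x (Icc 0 t) := hx.mono (Icc_subset_Icc le_rfl htT)
  have hx0s : ContinuousOn x (Icc 0 s) := hx.mono (Icc_subset_Icc le_rfl hsT)
  -- continuity / integrability of the integrands
  have hφtC : ContinuousOn (fun u => H2 (∫ r in u..t, k (x r))) (Icc 0 t) :=
    h2.continuous.comp_continuousOn hFtC
  have hφsC : ContinuousOn (fun u => H2 (∫ r in u..s, k (x r))) (Icc 0 s) :=
    h2.continuous.comp_continuousOn hFsC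
  have hψtC : ContinuousOn (fun u => H3 (x u) * H4 (∫ r in u..t, k (x r))) (Icc 0 t) :=
    (h3.continuous.comp_continuousOn hx0t).mul (h4.continuous.comp_continuousOn hFtC)
  have hψsC : ContinuousOn (fun u => H3 (x u) * H4 (∫ r in u..s, k (x r))) (Icc 0 s) :=
    (h3.continuous.comp_continuousOn hx0s).mul (h4.continuous.comp_continuousOn hFsC)
  have h0t : (0:ℝ) ∈ Icc (0:ℝ) t := ⟨le_rfl, ht0⟩
  have hst' : s ∈ Icc (0:ℝ) t := ⟨hs0, hst⟩
  have htt : t ∈ Icc (0:ℝ) t := ⟨ht0, le_rfl⟩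
  have h0s : (0:ℝ) ∈ Icc (0:ℝ) s := ⟨le_rfl, hs0⟩
  have hss : s ∈ Icc (0:ℝ) s := ⟨hs0, le_rfl⟩
  have hφtI0s : IntervalIntegrable (fun u => H2 (∫ r in u..t, k (x r))) volume 0 s :=
    (hφtC.mono (uIcc_subset_Icc h0t hst')).intervalIntegrable
  have hφtIst : IntervalIntegrable (fun u => H2 (∫ r in u..t, k (x r))) volume s t :=
    (hφtC.mono (uIcc_subset_Icc hst' htt)).intervalIntegrable
  have hφtI0t : IntervalIntegrable (fun u => H2 (∫ r in u..t, k (x r))) volume 0 t :=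
    (hφtC.mono (uIcc_subset_Icc h0t htt)).intervalIntegrable
  have hφsI0s : IntervalIntegrable (fun u => H2 (∫ r in u..s, k (x r))) volume 0 s :=
    (hφsC.mono (uIcc_subset_Icc h0s hss)).intervalIntegrable
  have hψtI0s : IntervalIntegrable (fun u => H3 (x u) * H4 (∫ r in u..t, k (x r))) volume 0 s :=
    (hψtC.mono (uIcc_subset_Icc h0t hst')).intervalIntegrable
  have hψtIst : IntervalIntegrable (fun u => H3 (x u) * H4 (∫ r in u..t, k (x r))) volume s t :=
    (hψtC.mono (uIcc_subset_Icc hst' htt)).intervalIntegrable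
  have hψtI0t : IntervalIntegrable (fun u => H3 (x u) * H4 (∫ r in u..t, k (x r))) volume 0 t :=
    (hψtC.mono (uIcc_subset_Icc h0t htt)).intervalIntegrable
  have hψsI0s : IntervalIntegrable (fun u => H3 (x u) * H4 (∫ r in u..s, k (x r))) volume 0 s :=
    (hψsC.mono (uIcc_subset_Icc h0s hss)).intervalIntegrable
  -- the equations
  have et := hEq t ⟨ht0, htT⟩
  have es := hEq s ⟨hs0, hsT⟩
  set It3 : ℝ := ∫ u in (0:ℝ)..t, H3 (x u) * H4 (∫ r in u..t, k (x r)) with hIt3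
  set Is3 : ℝ := ∫ u in (0:ℝ)..s, H3 (x u) * H4 (∫ r in u..s, k (x r)) with hIs3
  have etsplit : (∫ u in (0:ℝ)..t, (H2 (∫ r in u..t, k (x r)) + It3))
      = (∫ u in (0:ℝ)..t, H2 (∫ r in u..t, k (x r))) + t * It3 := by
    rw [intervalIntegral.integral_add hφtI0t intervalIntegrable_const,
      intervalIntegral.integral_const, sub_zero, smul_eq_mul]
  have essplit : (∫ u in (0:ℝ)..s, (H2 (∫ r in u..s, k (x r)) + Is3))
      = (∫ u in (0:ℝ)..s, H2 (∫ r in u..s, k (x r))) + s * Is3 := by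
    rw [intervalIntegral.integral_add hφsI0s intervalIntegrable_const,
      intervalIntegral.integral_const, sub_zero, smul_eq_mul]
  rw [etsplit] at et
  rw [essplit] at es
  -- decomposition
  have e1 : (∫ u in (0:ℝ)..s, H2 (∫ r in u..t, k (x r)))
      + ∫ u in s..t, H2 (∫ r in u..t, k (x r))
      = ∫ u in (0:ℝ)..t, H2 (∫ r in u..t, k (x r)) :=
    intervalIntegral.integral_add_adjacent_intervals hφtI0s hφtIst
  have e2 : (∫ u in (0:ℝ)..s,
        (H2 (∫ r in u..t, k (x r)) - H2 (∫ r in u..s, k (x r))))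
      = (∫ u in (0:ℝ)..s, H2 (∫ r in u..t, k (x r)))
        - ∫ u in (0:ℝ)..s, H2 (∫ r in u..s, k (x r)) :=
    intervalIntegral.integral_sub hφtI0s hφsI0s
  have e3 : (∫ u in (0:ℝ)..s, H3 (x u) * H4 (∫ r in u..t, k (x r)))
      + ∫ u in s..t, H3 (x u) * H4 (∫ r in u..t, k (x r)) = It3 :=
    intervalIntegral.integral_add_adjacent_intervals hψtI0s hψtIst
  have e4 : (∫ u in (0:ℝ)..s,
        (H3 (x u) * H4 (∫ r in u..t, k (x r)) - H3 (x u) * H4 (∫ r in u..s, k (x r))))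
      = (∫ u in (0:ℝ)..s, H3 (x u) * H4 (∫ r in u..t, k (x r)))
        - ∫ u in (0:ℝ)..s, H3 (x u) * H4 (∫ r in u..s, k (x r)) :=
    intervalIntegral.integral_sub hψtI0s hψsI0s
  have hxts : x t - x s =
      (H1 (∫ u in (0:ℝ)..t, k (x u)) - H1 (∫ u in (0:ℝ)..s, k (x u)))
      + ((∫ u in (0:ℝ)..s,
            (H2 (∫ r in u..t, k (x r)) - H2 (∫ r in u..s, k (x r))))
          + ∫ u in s..t, H2 (∫ r in u..t, k (x r)))
      + ((t - s) * It3 + s * (It3 - Is3)) := by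
    rw [et, es, e2]
    have : t * It3 - s * Is3 = (t - s) * It3 + s * (It3 - Is3) := by ring
    linarith [e1]
  -- bounds
  have hB1 : |H1 (∫ u in (0:ℝ)..t, k (x u)) - H1 (∫ u in (0:ℝ)..s, k (x u))|
      ≤ (L1:ℝ) * (Mk * (t - s)) := by
    have hd := h1.dist_le_mul (∫ u in (0:ℝ)..t, k (x u)) (∫ u in (0:ℝ)..s, k (x u))
    rw [Real.dist_eq, Real.dist_eq] at hd
    have h0 : (∫ u in (0:ℝ)..t, k (x u)) - (∫ u in (0:ℝ)..s, k (x u))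
        = ∫ r in s..t, k (x r) := hsplit 0 h0s
    rw [h0] at hd
    exact hd.trans (mul_le_mul_of_nonneg_left (habs' s t hst) L1.coe_nonneg)
  have hB2a : |∫ u in s..t, H2 (∫ r in u..t, k (x r))| ≤ M2 * (t - s) := by
    rw [← Real.norm_eq_abs]
    have := intervalIntegral.norm_integral_le_of_norm_le_const
      (a := s) (b := t) (C := M2)
      (f := fun u => H2 (∫ r in u..t, k (x r)))
      (fun u _ => by beta_reduce; rw [Real.norm_eq_abs]; exact hM2 _)
    rwa [abs_of_nonneg hts0] at this
  have hB2b : |∫ u in (0:ℝ)..s,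
      (H2 (∫ r in u..t, k (x r)) - H2 (∫ r in u..s, k (x r)))|
      ≤ ((L2:ℝ) * (Mk * (t - s))) * s := by
    rw [← Real.norm_eq_abs]
    have := intervalIntegral.norm_integral_le_of_norm_le_const
      (a := 0) (b := s) (C := (L2:ℝ) * (Mk * (t - s)))
      (f := fun u => H2 (∫ r in u..t, k (x r)) - H2 (∫ r in u..s, k (x r)))
      (fun u hu => by
        have hu' : u ∈ Icc (0:ℝ) s := by
          rw [uIoc_of_le hs0] at hu; exact ⟨hu.1.le, hu.2⟩
        beta_reduce
        rw [Real.norm_eq_abs]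
        have hd := h2.dist_le_mul (∫ r in u..t, k (x r)) (∫ r in u..s, k (x r))
        rw [Real.dist_eq, Real.dist_eq, hsplit u hu'] at hd
        exact hd.trans (mul_le_mul_of_nonneg_left (habs' s t hst) L2.coe_nonneg))
    rwa [sub_zero, abs_of_nonneg hs0] at this
  have hB3a : |∫ u in s..t, H3 (x u) * H4 (∫ r in u..t, k (x r))|
      ≤ M3 * M4 * (t - s) := by
    rw [← Real.norm_eq_abs]
    have := intervalIntegral.norm_integral_le_of_norm_le_const
      (a := s) (b := t) (C := M3 * M4)
      (f := fun u => H3 (x u) * H4 (∫ r in u..t, k (x r)))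
      (fun u _ => by
        beta_reduce
        rw [Real.norm_eq_abs, abs_mul]
        exact mul_le_mul (hM3 _) (hM4 _) (abs_nonneg _) hM30)
    rwa [abs_of_nonneg hts0] at this
  have hB3b : |∫ u in (0:ℝ)..s,
      (H3 (x u) * H4 (∫ r in u..t, k (x r)) - H3 (x u) * H4 (∫ r in u..s, k (x r)))|
      ≤ (M3 * ((L4:ℝ) * (Mk * (t - s)))) * s := by
    rw [← Real.norm_eq_abs]
    have := intervalIntegral.norm_integral_le_of_norm_le_const
      (a := 0) (b := s) (C := M3 * ((L4:ℝ) * (Mk * (t - s))))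
      (f := fun u => H3 (x u) * H4 (∫ r in u..t, k (x r))
        - H3 (x u) * H4 (∫ r in u..s, k (x r)))
      (fun u hu => by
        have hu' : u ∈ Icc (0:ℝ) s := by
          rw [uIoc_of_le hs0] at hu; exact ⟨hu.1.le, hu.2⟩
        beta_reduce
        rw [Real.norm_eq_abs, ← mul_sub, abs_mul]
        have hd := h4.dist_le_mul (∫ r in u..t, k (x r)) (∫ r in u..s, k (x r))
        rw [Real.dist_eq, Real.dist_eq, hsplit u hu'] at hd
        exact mul_le_mul (hM3 _)
          (hd.trans (mul_le_mul_of_nonneg_left (habs' s t hst) L4.coe_nonneg))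
          (abs_nonneg _) hM30)
    rwa [sub_zero, abs_of_nonneg hs0] at this
  have hIt3b : |It3| ≤ M3 * M4 * T := by
    rw [hIt3, ← Real.norm_eq_abs]
    have := intervalIntegral.norm_integral_le_of_norm_le_const
      (a := 0) (b := t) (C := M3 * M4)
      (f := fun u => H3 (x u) * H4 (∫ r in u..t, k (x r)))
      (fun u _ => by
        beta_reduce
        rw [Real.norm_eq_abs, abs_mul]
        exact mul_le_mul (hM3 _) (hM4 _) (abs_nonneg _) hM30)
    rw [sub_zero, abs_of_nonneg ht0] at this
    exact this.trans (mul_le_mul_of_nonneg_left htT (mul_nonneg hM30 hM40))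
  have hdiff : |It3 - Is3| ≤ (M3*M4 + T*(M3*((L4:ℝ)*Mk))) * (t - s) := by
    have heq : It3 - Is3 =
        (∫ u in (0:ℝ)..s,
          (H3 (x u) * H4 (∫ r in u..t, k (x r)) - H3 (x u) * H4 (∫ r in u..s, k (x r))))
        + ∫ u in s..t, H3 (x u) * H4 (∫ r in u..t, k (x r)) := by
      rw [e4]; linarith [e3]
    calc |It3 - Is3| ≤ |∫ u in (0:ℝ)..s,
          (H3 (x u) * H4 (∫ r in u..t, k (x r)) - H3 (x u) * H4 (∫ r in u..s, k (x r)))|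
        + |∫ u in s..t, H3 (x u) * H4 (∫ r in u..t, k (x r))| := by
          rw [heq]; exact abs_add_le _ _
      _ ≤ (M3 * ((L4:ℝ) * (Mk * (t - s)))) * s + M3 * M4 * (t - s) :=
          add_le_add hB3b hB3a
      _ ≤ (M3 * ((L4:ℝ) * (Mk * (t - s)))) * T + M3 * M4 * (t - s) := by
          have h0 : 0 ≤ M3 * ((L4:ℝ) * (Mk * (t - s))) :=
            mul_nonneg hM30 (mul_nonneg L4.coe_nonneg (mul_nonneg hMk0 hts0))
          exact add_le_add_left (mul_le_mul_of_nonneg_left hsT h0) _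
      _ = (M3*M4 + T*(M3*((L4:ℝ)*Mk))) * (t - s) := by ring
  have hX3 : |(t - s) * It3 + s * (It3 - Is3)|
      ≤ (T*(M3*M4) + T*(M3*M4 + T*(M3*((L4:ℝ)*Mk)))) * (t - s) := by
    calc |(t - s) * It3 + s * (It3 - Is3)|
        ≤ |(t - s) * It3| + |s * (It3 - Is3)| := abs_add_le _ _
      _ = (t - s) * |It3| + s * |It3 - Is3| := by
          rw [abs_mul, abs_mul, abs_of_nonneg hts0, abs_of_nonneg hs0]
      _ ≤ (t - s) * (M3 * M4 * T) + T * ((M3*M4 + T*(M3*((L4:ℝ)*Mk))) * (t - s)) :=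
          add_le_add (mul_le_mul_of_nonneg_left hIt3b hts0)
            (mul_le_mul hsT hdiff (abs_nonneg _) hT.le)
      _ = (T*(M3*M4) + T*(M3*M4 + T*(M3*((L4:ℝ)*Mk)))) * (t - s) := by ring
  have hX2 : |(∫ u in (0:ℝ)..s,
        (H2 (∫ r in u..t, k (x r)) - H2 (∫ r in u..s, k (x r))))
      + ∫ u in s..t, H2 (∫ r in u..t, k (x r))|
      ≤ (M2 + T*((L2:ℝ)*Mk)) * (t - s) := by
    calc _ ≤ |∫ u in (0:ℝ)..s,
          (H2 (∫ r in u..t, k (x r)) - H2 (∫ r in u..s, k (x r)))|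
        + |∫ u in s..t, H2 (∫ r in u..t, k (x r))| := abs_add_le _ _
      _ ≤ ((L2:ℝ) * (Mk * (t - s))) * s + M2 * (t - s) := add_le_add hB2b hB2a
      _ ≤ ((L2:ℝ) * (Mk * (t - s))) * T + M2 * (t - s) := by
          have h0 : 0 ≤ (L2:ℝ) * (Mk * (t - s)) :=
            mul_nonneg L2.coe_nonneg (mul_nonneg hMk0 hts0)
          exact add_le_add_left (mul_le_mul_of_nonneg_left hsT h0) _
      _ = (M2 + T*((L2:ℝ)*Mk)) * (t - s) := by ring
  rw [hxts]
  calc _ ≤ _ := abs_add_three _ _ _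
    _ ≤ (L1:ℝ) * (Mk * (t - s)) + (M2 + T*((L2:ℝ)*Mk)) * (t - s)
        + (T*(M3*M4) + T*(M3*M4 + T*(M3*((L4:ℝ)*Mk)))) * (t - s) :=
      add_le_add (add_le_add hB1 hX2) hX3
    _ = ((L1:ℝ)*Mk + (M2 + T*((L2:ℝ)*Mk))
        + (T*(M3*M4) + T*(M3*M4 + T*(M3*((L4:ℝ)*Mk))))) * (t - s) := by ring

/-- Uniform Lipschitz (equicontinuity) bound: `d₄` depends only on `T` and on the
sup norms and Lipschitz constants of `k, H₁, H₂, H₃, H₄`. -/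
theorem stmt4 (T : ℝ) (hT : 0 < T)
    (Lk L1 L2 L3 L4 : NNReal) (Mk M1 M2 M3 M4 : ℝ) :
    ∃ d4 : ℝ, ∀ k H1 H2 H3 H4 : ℝ → ℝ,
      LipschitzWith Lk k → LipschitzWith L1 H1 → LipschitzWith L2 H2 →
      LipschitzWith L3 H3 → LipschitzWith L4 H4 →
      (∀ y, |k y| ≤ Mk) → (∀ y, |H1 y| ≤ M1) → (∀ y, |H2 y| ≤ M2) →
      (∀ y, |H3 y| ≤ M3) → (∀ y, |H4 y| ≤ M4) →
      ∀ x : ℝ → ℝ, ContinuousOn x (Set.Icc 0 T) →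
        IntegralEq1 k H1 H2 H3 H4 T x →
        ∀ s ∈ Set.Icc (0 : ℝ) T, ∀ t ∈ Set.Icc (0 : ℝ) T,
          |x t - x s| ≤ d4 * |t - s| := by
  refine ⟨(L1:ℝ)*Mk + (M2 + T*((L2:ℝ)*Mk))
    + (T*(M3*M4) + T*(M3*M4 + T*(M3*((L4:ℝ)*Mk)))), ?_⟩
  intro k H1 H2 H3 H4 hk h1 h2 h3 h4 hMk hM1 hM2 hM3 hM4 x hx hEq s hs t ht
  rcases le_total s t with h | h
  · have := aux4 T hT Lk L1 L2 L3 L4 Mk M2 M3 M4 k H1 H2 H3 H4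
      hk h1 h2 h3 h4 hMk hM2 hM3 hM4 x hx hEq s t hs ht h
    rwa [abs_of_nonneg (sub_nonneg.2 h)]
  · have := aux4 T hT Lk L1 L2 L3 L4 Mk M2 M3 M4 k H1 H2 H3 H4
      hk h1 h2 h3 h4 hMk hM2 hM3 hM4 x hx hEq t s ht hs h
    rw [abs_sub_comm, abs_sub_comm t s]
    rwa [abs_of_nonneg (sub_nonneg.2 h)]
end

section
/- Fix T > 0. For each n let B_n : [0,T] → ℝ be nondecreasing and right-continuous, and suppose B_n → B uniformly on [0,T], where B : [0,T] → ℝ is continuous and nondecreasing. Let f, f_n : [0,T] × [0,T] → ℝ be continuous functions with f_n → f uniformly on [0,T] × [0,T]. Then sup_{t ∈ [0,T]} | ∫_{(0,t]} f_n(s,t) dB_n(s) − ∫_{(0,t]} f(s,t) dB(s) | → 0 as n → ∞, where the integrals are with respect to the Lebesgue–Stieltjes measures induced by B_n and B. -/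
open MeasureTheory Set Filter


lemma stmt11_telesc (μ : Measure ℝ) (h : ℝ → ℝ) (g : ℕ → ℝ) (hg : Monotone g) (k : ℕ)
    (hint : IntegrableOn h (Ioc (g 0) (g k)) μ) :
    ∫ x in Ioc (g 0) (g k), h x ∂μ
      = ∑ i ∈ Finset.range k, ∫ x in Ioc (g i) (g (i+1)), h x ∂μ := by
  induction k with
  | zero => simp
  | succ k ih =>
    have hsub1 : Ioc (g 0) (g k) ⊆ Ioc (g 0) (g (k+1)) :=
      Ioc_subset_Ioc le_rfl (hg (Nat.le_succ k))
    have hsub2 : Ioc (g k) (g (k+1)) ⊆ Ioc (g 0) (g (k+1)) :=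
      Ioc_subset_Ioc (hg (Nat.zero_le k)) le_rfl
    have hu : Ioc (g 0) (g k) ∪ Ioc (g k) (g (k+1)) = Ioc (g 0) (g (k+1)) :=
      Ioc_union_Ioc_eq_Ioc (hg (Nat.zero_le k)) (hg (Nat.le_succ k))
    rw [Finset.sum_range_succ, ← ih (hint.mono_set hsub1), ← hu,
      setIntegral_union (Ioc_disjoint_Ioc_of_le le_rfl) measurableSet_Ioc
        (hint.mono_set hsub1) (hint.mono_set hsub2)]

lemma stmt11_cmp (μ : Measure ℝ) (a b : ℝ) (hμ : μ (Ioc a b) ≠ ⊤) (h : ℝ → ℝ) (c r : ℝ)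
    (hint : IntegrableOn h (Ioc a b) μ) (hb : ∀ x ∈ Ioc a b, |h x - c| ≤ r) :
    |(∫ x in Ioc a b, h x ∂μ) - c * (μ (Ioc a b)).toReal| ≤ r * (μ (Ioc a b)).toReal := by
  have hconst : IntegrableOn (fun _ : ℝ => c) (Ioc a b) μ :=
    integrableOn_const hμ
  have heq : (∫ x in Ioc a b, h x ∂μ) - c * (μ (Ioc a b)).toReal
      = ∫ x in Ioc a b, (h x - c) ∂μ := by
    rw [integral_sub hint hconst, setIntegral_const, smul_eq_mul, mul_comm]; rfl
  rw [heq]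
  have := norm_setIntegral_le_of_norm_le_const_ae' (μ := μ) (s := Ioc a b)
    (f := fun x => h x - c) (C := r) hμ.lt_top
    (Eventually.of_forall fun x hx => by simpa using hb x hx)
  simpa [Measure.real] using this

/-- Uniform-in-`t` convergence of Stieltjes integrals: if `Bₙ → B` uniformly on
`[0,T]` with `B` continuous (and all `Bₙ, B` nondecreasing, right-continuous),
and `fₙ → f` uniformly on `[0,T]²` with all of them continuous there, then
`sup_{t∈[0,T]} |∫_{(0,t]} fₙ(s,t) dBₙ(s) − ∫_{(0,t]} f(s,t) dB(s)| → 0`. -/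
theorem stmt11 (T : ℝ) (hT : 0 < T)
    (Bn : ℕ → StieltjesFunction ℝ) (B : StieltjesFunction ℝ)
    (hBcont : ContinuousOn (fun x => B x) (Set.Icc 0 T))
    (hBconv : TendstoUniformlyOn (fun n t => Bn n t) (fun t => B t) atTop (Set.Icc 0 T))
    (f : ℝ → ℝ → ℝ) (fn : ℕ → ℝ → ℝ → ℝ)
    (hf : ContinuousOn (fun p : ℝ × ℝ => f p.1 p.2) (Set.Icc 0 T ×ˢ Set.Icc 0 T))
    (hfn : ∀ n, ContinuousOn (fun p : ℝ × ℝ => fn n p.1 p.2) (Set.Icc 0 T ×ˢ Set.Icc 0 T))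
    (hfconv : TendstoUniformlyOn (fun n (p : ℝ × ℝ) => fn n p.1 p.2)
      (fun p : ℝ × ℝ => f p.1 p.2) atTop (Set.Icc 0 T ×ˢ Set.Icc 0 T)) :
    ∀ ε > (0 : ℝ), ∃ N : ℕ, ∀ n ≥ N, ∀ t ∈ Set.Icc (0 : ℝ) T,
      |(∫ s in Set.Ioc (0 : ℝ) t, fn n s t ∂(Bn n).measure) -
        ∫ s in Set.Ioc (0 : ℝ) t, f s t ∂B.measure| ≤ ε := by
  intro ε hε
  have hKc : IsCompact (Set.Icc (0:ℝ) T ×ˢ Set.Icc (0:ℝ) T) :=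
    isCompact_Icc.prod isCompact_Icc
  -- bound on f
  obtain ⟨M₀, hM₀⟩ := hKc.exists_bound_of_continuousOn hf
  set M : ℝ := max M₀ 0 with hMdef
  have hM : ∀ p ∈ Set.Icc (0:ℝ) T ×ˢ Set.Icc (0:ℝ) T, |f p.1 p.2| ≤ M :=
    fun p hp => (hM₀ p hp).trans (le_max_left _ _)
  have hM0 : 0 ≤ M := le_max_right _ _
  -- constants
  set D : ℝ := B T - B 0 with hDdef
  have hD : 0 ≤ D := sub_nonneg.2 (B.mono hT.le)
  set ε' : ℝ := ε / (8 * (D + 2)) with hε'def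
  have hε' : 0 < ε' := by positivity
  -- uniform continuity of f
  have huc := hKc.uniformContinuousOn_of_continuous hf
  rw [Metric.uniformContinuousOn_iff] at huc
  obtain ⟨δ, hδ, hucδ⟩ := huc ε' hε'
  -- partition size
  obtain ⟨k, hk⟩ := exists_nat_gt (T / δ)
  have hTδ : 0 < T / δ := by positivity
  have hk0 : 0 < k := by exact_mod_cast hTδ.trans hk
  have hk0' : (0:ℝ) < k := by exact_mod_cast hk0
  set c : ℝ := T / k with hcdef
  have hc : 0 < c := by positivity
  have hkc : (k:ℝ) * c = T := by rw [hcdef]; field_simp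
  have hcδ : c < δ := by
    rw [hcdef, div_lt_iff₀ hk0']
    calc T = (T/δ) * δ := by field_simp
    _ < k * δ := by exact mul_lt_mul_of_pos_right hk hδ
    _ = δ * k := mul_comm _ _
  -- the tolerance for B-convergence
  set ρ : ℝ := min 1 (ε / (8 * k * (M + 1))) with hρdef
  have hρ : 0 < ρ := lt_min one_pos (by positivity)
  -- choose N
  have hB' := (Metric.tendstoUniformlyOn_iff.1 hBconv) ρ hρ
  have hf' := (Metric.tendstoUniformlyOn_iff.1 hfconv) ε' hε'
  obtain ⟨N, hN⟩ := eventually_atTop.1 (hB'.and hf')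
  refine ⟨N, fun n hn t ht => ?_⟩
  obtain ⟨hNB, hNf⟩ := hN n hn
  -- the partition
  set g : ℕ → ℝ := fun i => min ((i:ℝ) * c) t with hgdef
  have hg : Monotone g := fun i j hij =>
    min_le_min (mul_le_mul_of_nonneg_right (by exact_mod_cast hij) hc.le) le_rfl
  have hg0 : g 0 = 0 := by simp [hgdef, ht.1]
  have hgk : g k = t := by simp [hgdef, hkc, ht.2]
  have hgmem : ∀ i, g i ∈ Set.Icc (0:ℝ) T := fun i =>
    ⟨le_min (by positivity) ht.1, (min_le_right _ _).trans ht.2⟩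
  -- integrability
  have hsub : Set.Ioc (0:ℝ) t ⊆ Set.Icc 0 T :=
    Set.Ioc_subset_Icc_self.trans (Set.Icc_subset_Icc le_rfl ht.2)
  have hcont_n : ContinuousOn (fun s => fn n s t) (Set.Icc 0 T) :=
    (hfn n).comp ((continuous_id.prodMk continuous_const).continuousOn)
      (fun s hs => Set.mk_mem_prod hs ht)
  have hcont_f : ContinuousOn (fun s => f s t) (Set.Icc 0 T) :=
    hf.comp ((continuous_id.prodMk continuous_const).continuousOn)
      (fun s hs => Set.mk_mem_prod hs ht)
  have hint_n : IntegrableOn (fun s => fn n s t) (Set.Ioc 0 t) (Bn n).measure :=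
    (hcont_n.integrableOn_Icc).mono_set hsub
  have hint_f : IntegrableOn (fun s => f s t) (Set.Ioc 0 t) B.measure :=
    (hcont_f.integrableOn_Icc).mono_set hsub
  -- measures of pieces
  have hμIoc : ∀ i : ℕ, ((Bn n).measure (Ioc (g i) (g (i+1)))).toReal
      = Bn n (g (i+1)) - Bn n (g i) := fun i => by
    rw [StieltjesFunction.measure_Ioc,
      ENNReal.toReal_ofReal (sub_nonneg.2 ((Bn n).mono (hg (Nat.le_succ i))))]
  have hνIoc : ∀ i : ℕ, (B.measure (Ioc (g i) (g (i+1)))).toReal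
      = B (g (i+1)) - B (g i) := fun i => by
    rw [StieltjesFunction.measure_Ioc,
      ENNReal.toReal_ofReal (sub_nonneg.2 (B.mono (hg (Nat.le_succ i))))]
  have hμfin : ∀ i : ℕ, (Bn n).measure (Ioc (g i) (g (i+1))) ≠ ⊤ := fun i => by
    rw [StieltjesFunction.measure_Ioc]; exact ENNReal.ofReal_ne_top
  have hνfin : ∀ i : ℕ, B.measure (Ioc (g i) (g (i+1))) ≠ ⊤ := fun i => by
    rw [StieltjesFunction.measure_Ioc]; exact ENNReal.ofReal_ne_top
  -- facts about points in piece i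
  have hxfacts : ∀ i : ℕ, ∀ x ∈ Ioc (g i) (g (i+1)),
      (i:ℝ) * c < x ∧ x ≤ ((i:ℝ)+1) * c ∧ x ≤ t := by
    intro i x hx
    rcases le_or_gt t ((i:ℝ) * c) with h | h
    · exfalso
      have hic : (i:ℝ) * c ≤ ((i:ℝ)+1) * c := by nlinarith
      have h1 : g i = t := min_eq_right h
      have h2 : g (i+1) = t := by
        have : ((i+1 : ℕ):ℝ) * c = ((i:ℝ)+1) * c := by push_cast; ring
        rw [hgdef]; simp only [this]
        exact min_eq_right (h.trans hic)
      rw [h1, h2] at hx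
      exact absurd hx.2 (not_le.2 hx.1)
    · have h1 : g i = (i:ℝ) * c := min_eq_left h.le
      have h2 : ((i+1 : ℕ):ℝ) * c = ((i:ℝ)+1) * c := by push_cast; ring
      refine ⟨h1 ▸ hx.1, ?_, ?_⟩
      · exact hx.2.trans (by rw [hgdef]; simpa [h2] using min_le_left (((i:ℝ)+1) * c) t)
      · exact hx.2.trans (min_le_right _ _)
  -- per-piece pointwise bounds
  have hpt : ∀ i < k, ∀ x ∈ Ioc (g i) (g (i+1)),
      |f x t - f ((i:ℝ)*c) t| ≤ ε' ∧ |fn n x t - f ((i:ℝ)*c) t| ≤ 2 * ε' := by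
    intro i hi x hx
    obtain ⟨h1, h2, h3⟩ := hxfacts i x hx
    have hx0 : 0 ≤ x := le_of_lt (lt_of_le_of_lt (by positivity) h1)
    have hxT : x ≤ T := h3.trans ht.2
    have hic0 : 0 ≤ (i:ℝ)*c := by positivity
    have hicT : (i:ℝ)*c ≤ T := h1.le.trans hxT
    have hxK : (x, t) ∈ Set.Icc (0:ℝ) T ×ˢ Set.Icc (0:ℝ) T :=
      Set.mk_mem_prod ⟨hx0, hxT⟩ ht
    have hiK : (((i:ℝ)*c, t) : ℝ × ℝ) ∈ Set.Icc (0:ℝ) T ×ˢ Set.Icc (0:ℝ) T :=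
      Set.mk_mem_prod ⟨hic0, hicT⟩ ht
    have hdist : dist ((x, t) : ℝ × ℝ) (((i:ℝ)*c, t) : ℝ × ℝ) < δ := by
      rw [Prod.dist_eq]
      simp only [dist_self]
      rw [max_eq_left dist_nonneg, Real.dist_eq]
      rw [abs_of_nonneg (by linarith)]
      calc x - (i:ℝ)*c ≤ ((i:ℝ)+1)*c - (i:ℝ)*c := by linarith
      _ = c := by ring
      _ < δ := hcδ
    have hfd := hucδ _ hxK _ hiK hdist
    rw [Real.dist_eq] at hfd
    constructor
    · exact hfd.le
    · have hfn_d := hNf (x, t) hxK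
      rw [Real.dist_eq] at hfn_d
      have : |fn n x t - f ((i:ℝ)*c) t|
          ≤ |fn n x t - f x t| + |f x t - f ((i:ℝ)*c) t| := abs_sub_le _ _ _
      rw [abs_sub_comm (fn n x t) (f x t)] at this
      linarith [hfn_d.le, hfd.le]
  -- telescoping decomposition
  have hA : (∫ s in Set.Ioc (0:ℝ) t, fn n s t ∂(Bn n).measure)
      = ∑ i ∈ Finset.range k,
          ∫ s in Ioc (g i) (g (i+1)), fn n s t ∂(Bn n).measure := by
    rw [← hg0, ← hgk] at hint_n ⊢
    exact stmt11_telesc _ _ g hg k hint_n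
  have hC : (∫ s in Set.Ioc (0:ℝ) t, f s t ∂B.measure)
      = ∑ i ∈ Finset.range k, ∫ s in Ioc (g i) (g (i+1)), f s t ∂B.measure := by
    rw [← hg0, ← hgk] at hint_f ⊢
    exact stmt11_telesc _ _ g hg k hint_f
  -- notation for terms
  set Ai : ℕ → ℝ := fun i => ∫ s in Ioc (g i) (g (i+1)), fn n s t ∂(Bn n).measure with hAidef
  set Ci : ℕ → ℝ := fun i => ∫ s in Ioc (g i) (g (i+1)), f s t ∂B.measure with hCidef
  set ci : ℕ → ℝ := fun i => f ((i:ℝ)*c) t with hcidef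
  set dμ : ℕ → ℝ := fun i => Bn n (g (i+1)) - Bn n (g i) with hdμdef
  set dν : ℕ → ℝ := fun i => B (g (i+1)) - B (g i) with hdνdef
  have hdμ0 : ∀ i, 0 ≤ dμ i := fun i => sub_nonneg.2 ((Bn n).mono (hg (Nat.le_succ i)))
  have hdν0 : ∀ i, 0 ≤ dν i := fun i => sub_nonneg.2 (B.mono (hg (Nat.le_succ i)))
  -- per-piece integral bounds
  have hAi : ∀ i ∈ Finset.range k, |Ai i - ci i * dμ i| ≤ 2 * ε' * dμ i := by
    intro i hi
    rw [Finset.mem_range] at hi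
    have := stmt11_cmp (Bn n).measure (g i) (g (i+1)) (hμfin i)
      (fun s => fn n s t) (ci i) (2 * ε')
      (hint_n.mono_set (Ioc_subset_Ioc (hg0 ▸ hg (Nat.zero_le i))
        (hgk ▸ hg (Nat.succ_le_of_lt hi))))
      (fun x hx => (hpt i hi x hx).2)
    rwa [hμIoc i] at this
  have hCi : ∀ i ∈ Finset.range k, |ci i * dν i - Ci i| ≤ ε' * dν i := by
    intro i hi
    rw [Finset.mem_range] at hi
    have := stmt11_cmp B.measure (g i) (g (i+1)) (hνfin i)
      (fun s => f s t) (ci i) ε'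
      (hint_f.mono_set (Ioc_subset_Ioc (hg0 ▸ hg (Nat.zero_le i))
        (hgk ▸ hg (Nat.succ_le_of_lt hi))))
      (fun x hx => (hpt i hi x hx).1)
    rw [hνIoc i] at this
    rwa [abs_sub_comm]
  -- middle bound
  have hmid : ∀ i ∈ Finset.range k, |ci i * (dμ i - dν i)| ≤ M * (2 * ρ) := by
    intro i hi
    rw [Finset.mem_range] at hi
    have hicT : (i:ℝ)*c ≤ T := by
      calc (i:ℝ)*c ≤ (k:ℝ)*c :=
        mul_le_mul_of_nonneg_right (by exact_mod_cast hi.le) hc.le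
      _ = T := hkc
    have hci : |ci i| ≤ M := hM ((i:ℝ)*c, t) (Set.mk_mem_prod ⟨by positivity, hicT⟩ ht)
    have hd1 := hNB (g (i+1)) (hgmem (i+1))
    have hd0 := hNB (g i) (hgmem i)
    rw [Real.dist_eq] at hd1 hd0
    have hdd : |dμ i - dν i| ≤ 2 * ρ := by
      have : dμ i - dν i = (Bn n (g (i+1)) - B (g (i+1))) - (Bn n (g i) - B (g i)) := by
        rw [hdμdef, hdνdef]; ring
      rw [this]
      calc |(Bn n (g (i+1)) - B (g (i+1))) - (Bn n (g i) - B (g i))|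
          ≤ |Bn n (g (i+1)) - B (g (i+1))| + |Bn n (g i) - B (g i)| := abs_sub _ _
      _ ≤ ρ + ρ := by
          rw [abs_sub_comm (Bn n (g (i+1))) (B (g (i+1))),
            abs_sub_comm (Bn n (g i)) (B (g i))]
          exact add_le_add hd1.le hd0.le
      _ = 2 * ρ := by ring
    calc |ci i * (dμ i - dν i)| = |ci i| * |dμ i - dν i| := abs_mul _ _
    _ ≤ M * (2 * ρ) := mul_le_mul hci hdd (abs_nonneg _) hM0
  -- telescoping sums of increments
  have hsumμ : ∑ i ∈ Finset.range k, dμ i = Bn n t - Bn n 0 := by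
    rw [hdμdef]
    rw [Finset.sum_range_sub (fun i => Bn n (g i))]
    rw [hg0, hgk]
  have hsumν : ∑ i ∈ Finset.range k, dν i = B t - B 0 := by
    rw [hdνdef]
    rw [Finset.sum_range_sub (fun i => B (g i))]
    rw [hg0, hgk]
  -- decomposition
  have hdecomp : (∫ s in Set.Ioc (0:ℝ) t, fn n s t ∂(Bn n).measure)
      - (∫ s in Set.Ioc (0:ℝ) t, f s t ∂B.measure)
      = (∑ i ∈ Finset.range k, (Ai i - ci i * dμ i))
        + (∑ i ∈ Finset.range k, ci i * (dμ i - dν i))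
        + (∑ i ∈ Finset.range k, (ci i * dν i - Ci i)) := by
    rw [hA, hC]
    rw [Finset.sum_sub_distrib, Finset.sum_sub_distrib]
    have : ∑ i ∈ Finset.range k, ci i * (dμ i - dν i)
        = (∑ i ∈ Finset.range k, ci i * dμ i) - ∑ i ∈ Finset.range k, ci i * dν i := by
      rw [← Finset.sum_sub_distrib]
      exact Finset.sum_congr rfl fun i _ => by ring
    rw [this]; ring
  -- bounds on the three sums
  have hS1 : |∑ i ∈ Finset.range k, (Ai i - ci i * dμ i)| ≤ 2 * ε' * (Bn n t - Bn n 0) := by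
    calc |∑ i ∈ Finset.range k, (Ai i - ci i * dμ i)|
        ≤ ∑ i ∈ Finset.range k, |Ai i - ci i * dμ i| := Finset.abs_sum_le_sum_abs _ _
    _ ≤ ∑ i ∈ Finset.range k, 2 * ε' * dμ i := Finset.sum_le_sum hAi
    _ = 2 * ε' * (Bn n t - Bn n 0) := by rw [← Finset.mul_sum, hsumμ]
  have hS3 : |∑ i ∈ Finset.range k, (ci i * dν i - Ci i)| ≤ ε' * (B t - B 0) := by
    calc |∑ i ∈ Finset.range k, (ci i * dν i - Ci i)|
        ≤ ∑ i ∈ Finset.range k, |ci i * dν i - Ci i| := Finset.abs_sum_le_sum_abs _ _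
    _ ≤ ∑ i ∈ Finset.range k, ε' * dν i := Finset.sum_le_sum hCi
    _ = ε' * (B t - B 0) := by rw [← Finset.mul_sum, hsumν]
  have hS2 : |∑ i ∈ Finset.range k, ci i * (dμ i - dν i)| ≤ k * (M * (2 * ρ)) := by
    calc |∑ i ∈ Finset.range k, ci i * (dμ i - dν i)|
        ≤ ∑ i ∈ Finset.range k, |ci i * (dμ i - dν i)| := Finset.abs_sum_le_sum_abs _ _
    _ ≤ ∑ _i ∈ Finset.range k, M * (2 * ρ) := Finset.sum_le_sum hmid
    _ = k * (M * (2 * ρ)) := by rw [Finset.sum_const, Finset.card_range]; ring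
  -- numeric bounds on increments
  have hBn_t : Bn n t - Bn n 0 ≤ D + 2 := by
    have hdT := hNB T ⟨hT.le, le_rfl⟩
    have hd0 := hNB 0 ⟨le_rfl, hT.le⟩
    rw [Real.dist_eq] at hdT hd0
    have hρ1 : ρ ≤ 1 := min_le_left _ _
    have h1 : Bn n t ≤ Bn n T := (Bn n).mono ht.2
    have h2 : Bn n T ≤ B T + 1 := by
      have := abs_sub_lt_iff.1 hdT
      linarith [this.1]
    have h3 : B 0 - 1 ≤ Bn n 0 := by
      have := abs_sub_lt_iff.1 hd0
      linarith [this.2]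
    rw [hDdef]; linarith
  have hBt : B t - B 0 ≤ D := by
    rw [hDdef]
    have : B t ≤ B T := B.mono ht.2
    linarith
  -- final numeric estimate
  have hρ2 : ρ ≤ ε / (8 * k * (M + 1)) := min_le_right _ _
  have hterm2 : (k:ℝ) * (M * (2 * ρ)) ≤ ε / 4 := by
    have : (k:ℝ) * (M * (2 * ρ)) ≤ (k:ℝ) * (M * (2 * (ε / (8 * k * (M + 1))))) := by
      have h2ρ : M * (2 * ρ) ≤ M * (2 * (ε / (8 * k * (M + 1)))) :=
        mul_le_mul_of_nonneg_left (by linarith) hM0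
      exact mul_le_mul_of_nonneg_left h2ρ (by positivity)
    have heq : (k:ℝ) * (M * (2 * (ε / (8 * k * (M + 1))))) = (M / (M+1)) * (ε / 4) := by
      field_simp
      ring
    rw [heq] at this
    have hfrac : M / (M+1) ≤ 1 := by
      rw [div_le_one (by linarith)]; linarith
    calc (k:ℝ) * (M * (2 * ρ)) ≤ (M / (M+1)) * (ε / 4) := this
    _ ≤ 1 * (ε / 4) := mul_le_mul_of_nonneg_right hfrac (by positivity)
    _ = ε / 4 := one_mul _
  have hBn_t0 : 0 ≤ Bn n t - Bn n 0 := sub_nonneg.2 ((Bn n).mono ht.1)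
  have hε'D : ε' * (D + 2) = ε / 8 := by
    rw [hε'def]; field_simp
  calc |(∫ s in Set.Ioc (0:ℝ) t, fn n s t ∂(Bn n).measure) -
        ∫ s in Set.Ioc (0:ℝ) t, f s t ∂B.measure|
      = |(∑ i ∈ Finset.range k, (Ai i - ci i * dμ i))
        + (∑ i ∈ Finset.range k, ci i * (dμ i - dν i))
        + (∑ i ∈ Finset.range k, (ci i * dν i - Ci i))| := by rw [hdecomp]
  _ ≤ |(∑ i ∈ Finset.range k, (Ai i - ci i * dμ i))
        + (∑ i ∈ Finset.range k, ci i * (dμ i - dν i))|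
      + |∑ i ∈ Finset.range k, (ci i * dν i - Ci i)| := abs_add_le _ _
  _ ≤ |∑ i ∈ Finset.range k, (Ai i - ci i * dμ i)|
      + |∑ i ∈ Finset.range k, ci i * (dμ i - dν i)|
      + |∑ i ∈ Finset.range k, (ci i * dν i - Ci i)| := by
        linarith [abs_add_le (∑ i ∈ Finset.range k, (Ai i - ci i * dμ i))
          (∑ i ∈ Finset.range k, ci i * (dμ i - dν i))]
  _ ≤ 2 * ε' * (Bn n t - Bn n 0) + k * (M * (2 * ρ)) + ε' * (B t - B 0) := by
        linarith
  _ ≤ 2 * ε' * (D + 2) + ε / 4 + ε' * (D + 2) := by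
        have h1 : 2 * ε' * (Bn n t - Bn n 0) ≤ 2 * ε' * (D + 2) :=
          mul_le_mul_of_nonneg_left hBn_t (by positivity)
        have h3 : ε' * (B t - B 0) ≤ ε' * (D + 2) := by
          have : B t - B 0 ≤ D + 2 := by linarith
          exact mul_le_mul_of_nonneg_left this hε'.le
        exact add_le_add (add_le_add h1 hterm2) h3
  _ = 3 * (ε / 8) + ε / 4 := by rw [← hε'D]; ring
  _ ≤ ε := by linarith
end
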